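/- arXiv:1610.01290 — 3 statements merged into one kernel-verified Lean document; each statement's English description precedes it below -/
import Mathlib

section
/- Under assumptions A1 and A2, there exist C > 0 and ρ ∈ (0,1), depending only on m, L, κ and r, such that for all n and all j ≥ 1, the β-mixing coefficient satisfies β_n(j) ≤ C ρ^{[j/m]}, where [x] denotes the integer part of x. -/
/- Statement 1: Under A1–A2, there exist C > 0 and ρ ∈ (0,1), depending only on
m, L, κ, r, such that the β-mixing coefficients of the triangular array satisfy
β_n(j) ≤ C ρ^{[j/m]}. -/

open MeasureTheory ProbabilityTheory Filter Set
open scoped ENNReal NNReal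

noncomputable section

variable {E : Type*} [MeasurableSpace E]

/-- Total variation distance between two measures. -/
noncomputable def tvDist (μ ν : Measure E) : ℝ :=
  ⨆ A : {A : Set E // MeasurableSet A}, |(μ A).toReal - (ν A).toReal|

/-- `m`-step kernel obtained by iterating `Q`. -/
noncomputable def mstep (Q : E → Measure E) : ℕ → E → Measure E
  | 0 => fun x => Measure.dirac x
  | (m+1) => fun x => (Q x).bind (mstep Q m)

/-- The time-inhomogeneous `j`-step kernel of the `n`-th row of the array:
`tvstep Q n i j x = δ_x Q_{(i+1)/n} ⋯ Q_{(i+j)/n}`. -/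
noncomputable def tvstep (Q : ℝ → E → Measure E) (n : ℕ) : ℤ → ℕ → E → Measure E
  | _, 0, x => Measure.dirac x
  | i, (j+1), x => (Q (((i:ℝ)+1)/(n:ℝ)) x).bind (tvstep Q n (i+1) j)

/-- The β-mixing coefficient of the `n`-th row of the Markov triangular array:
since the conditional law of `X_{n,i+j}` given `F^{(n)}_i` is
`δ_{X_{n,i}} Q_{(i+1)/n}⋯Q_{(i+j)/n}`, and
`sup_{‖f‖_∞ ≤ 1} |E[f|F] − E f| = 2 ‖·‖_TV`, we have
`β_n(j) = sup_i E[ ‖δ_{X_{n,i}} Q_{(i+1)/n}⋯Q_{(i+j)/n} − π^{(n)}_{i+j}‖_TV ]`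
(the terms with `i + j > n` vanish since `X_{n,l} = 0` for `l > n`). -/
noncomputable def betaMix (Q : ℝ → E → Measure E) (πn : ℕ → ℤ → Measure E)
    (n : ℕ) (j : ℕ) : ℝ :=
  ⨆ i : {i : ℤ // i + j ≤ (n:ℤ)},
    ∫ x, tvDist (tvstep Q n i j x) (πn n (i + j)) ∂(πn n i)

namespace TVAux

instance : Nonempty {A : Set E // MeasurableSet A} := ⟨⟨∅, MeasurableSet.empty⟩⟩

lemma toReal_prob_le_one (μ : Measure E) [IsProbabilityMeasure μ] (A : Set E) :
    (μ A).toReal ≤ 1 := by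
  have h := prob_le_one (μ := μ) (s := A)
  simpa using ENNReal.toReal_mono (by norm_num) h

lemma abs_bound (μ ν : Measure E) [IsProbabilityMeasure μ] [IsProbabilityMeasure ν]
    (A : Set E) : |(μ A).toReal - (ν A).toReal| ≤ 1 := by
  have h1 := toReal_prob_le_one μ A
  have h2 := toReal_prob_le_one ν A
  have h3 : (0:ℝ) ≤ (μ A).toReal := ENNReal.toReal_nonneg
  have h4 : (0:ℝ) ≤ (ν A).toReal := ENNReal.toReal_nonneg
  rw [abs_le]; constructor <;> linarith

lemma tv_bdd (μ ν : Measure E) [IsProbabilityMeasure μ] [IsProbabilityMeasure ν] :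
    BddAbove (Set.range fun A : {A : Set E // MeasurableSet A} =>
      |(μ (A:Set E)).toReal - (ν (A:Set E)).toReal|) := by
  refine ⟨1, ?_⟩
  rintro x ⟨A, rfl⟩
  exact abs_bound μ ν A

lemma abs_le_tvDist (μ ν : Measure E) [IsProbabilityMeasure μ] [IsProbabilityMeasure ν]
    {A : Set E} (hA : MeasurableSet A) :
    |(μ A).toReal - (ν A).toReal| ≤ tvDist μ ν :=
  le_ciSup (tv_bdd μ ν) ⟨A, hA⟩

lemma tvDist_nonneg (μ ν : Measure E) : 0 ≤ tvDist μ ν :=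
  Real.iSup_nonneg fun _ => abs_nonneg _

lemma tvDist_le (μ ν : Measure E) {c : ℝ}
    (h : ∀ A : Set E, MeasurableSet A → |(μ A).toReal - (ν A).toReal| ≤ c) :
    tvDist μ ν ≤ c := ciSup_le fun A => h A A.2

lemma tvDist_le_one (μ ν : Measure E) [IsProbabilityMeasure μ] [IsProbabilityMeasure ν] :
    tvDist μ ν ≤ 1 := tvDist_le μ ν fun A _ => abs_bound μ ν A

lemma tvDist_comm (μ ν : Measure E) : tvDist μ ν = tvDist ν μ := by
  unfold tvDist
  exact iSup_congr fun A => abs_sub_comm _ _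

lemma tvDist_self (μ : Measure E) : tvDist μ μ = 0 := by
  simp [tvDist]

lemma tvDist_triangle (μ ν ξ : Measure E) [IsProbabilityMeasure μ] [IsProbabilityMeasure ν]
    [IsProbabilityMeasure ξ] : tvDist μ ξ ≤ tvDist μ ν + tvDist ν ξ :=
  tvDist_le μ ξ fun A hA => (abs_sub_le _ _ _).trans
    (add_le_add (abs_le_tvDist μ ν hA) (abs_le_tvDist ν ξ hA))


lemma isProb_bind (μ : Measure E) [IsProbabilityMeasure μ] {K : E → Measure E}
    (hK : Measurable K) (hKp : ∀ x, IsProbabilityMeasure (K x)) :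
    IsProbabilityMeasure (μ.bind K) := by
  constructor
  rw [Measure.bind_apply MeasurableSet.univ hK.aemeasurable]
  have : ∀ x, K x Set.univ = 1 := fun x => (hKp x).measure_univ
  simp [this]

lemma integrable_of_bound (μ : Measure E) [IsFiniteMeasure μ] {f : E → ℝ} (hf : Measurable f)
    (C : ℝ) (h : ∀ x, |f x| ≤ C) : Integrable f μ :=
  ⟨hf.aestronglyMeasurable,
    HasFiniteIntegral.of_bounded (C := C) (ae_of_all _ fun x => by simpa using h x)⟩

lemma bind_toReal (μ : Measure E) [IsProbabilityMeasure μ] {K : E → Measure E}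
    (hK : Measurable K) (hKp : ∀ x, IsProbabilityMeasure (K x)) {A : Set E} (hA : MeasurableSet A) :
    ((μ.bind K) A).toReal = ∫ x, (K x A).toReal ∂μ := by
  have hm : Measurable fun a => K a A := (Measure.measurable_coe hA).comp hK
  rw [Measure.bind_apply hA hK.aemeasurable]
  rw [← integral_toReal hm.aemeasurable
    (ae_of_all _ fun x => by haveI := hKp x; exact measure_lt_top _ _)]

/-- The key one-sided inequality, via Hahn decomposition. -/
lemma integral_sub_le [Nonempty E] (μ ν : Measure E) [IsProbabilityMeasure μ]
    [IsProbabilityMeasure ν] {f : E → ℝ} (hf : Measurable f)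
    (h0 : ∀ x, 0 ≤ f x) (h1 : ∀ x, f x ≤ 1)
    {r : ℝ} (hr : 0 ≤ r) (hosc : ∀ x y, f x - f y ≤ r) :
    ∫ x, f x ∂μ - ∫ x, f x ∂ν ≤ r * tvDist μ ν := by
  obtain ⟨s, hs, hsge, hsle⟩ := hahn_decomposition (μ := μ) (ν := ν)
  set c : ℝ := ⨅ y, f y with hc
  have hbdd : BddBelow (Set.range f) := ⟨0, by rintro x ⟨y, rfl⟩; exact h0 y⟩
  have hcle : ∀ x, c ≤ f x := fun x => ciInf_le hbdd x
  have hgub : ∀ x, f x ≤ c + r := by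
    intro x
    have : f x - r ≤ c := le_ciInf fun y => by linarith [hosc x y]
    linarith
  set g : E → ℝ := fun x => f x - c with hg
  have hgm : Measurable g := hf.sub measurable_const
  have hg0 : ∀ x, 0 ≤ g x := fun x => by simp [hg]; linarith [hcle x]
  have hgr : ∀ x, g x ≤ r := fun x => by simp [hg]; linarith [hgub x]
  have hgb : ∀ (ξ : Measure E) (t : Set E), Integrable g (ξ.restrict t) → True := fun _ _ _ => trivial
  have hint : ∀ (ξ : Measure E) [IsFiniteMeasure ξ], Integrable g ξ := by
    intro ξ _
    exact integrable_of_bound ξ hgm (|r| + |c| + 1) fun x => by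
      have := hg0 x; have := hgr x
      rw [abs_of_nonneg (hg0 x)]
      have : g x ≤ r := hgr x
      have : r ≤ |r| := le_abs_self r
      have h3 : (0:ℝ) ≤ |c| := abs_nonneg c
      linarith [hgr x, le_abs_self r]
  -- restricted measure comparisons
  have hle1 : ν.restrict s ≤ μ.restrict s := by
    refine Measure.le_iff.2 fun t ht => ?_
    rw [Measure.restrict_apply ht, Measure.restrict_apply ht]
    exact hsge _ (ht.inter hs) inter_subset_right
  have hle2 : μ.restrict sᶜ ≤ ν.restrict sᶜ := by
    refine Measure.le_iff.2 fun t ht => ?_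
    rw [Measure.restrict_apply ht, Measure.restrict_apply ht]
    exact hsle _ (ht.inter hs.compl) inter_subset_right
  -- step A : on s
  have stepA : ∫ x in s, g x ∂μ - ∫ x in s, g x ∂ν
      ≤ r * ((μ s).toReal - (ν s).toReal) := by
    have h := integral_mono_measure hle1 (ae_of_all _ fun x => by
        simpa using hgr x : 0 ≤ᵐ[μ.restrict s] fun x => r - g x)
      ((integrable_const r).sub (hint (μ.restrict s)))
    rw [integral_sub (integrable_const r) (hint (ν.restrict s)),
        integral_sub (integrable_const r) (hint (μ.restrict s))] at h
    simp only [integral_const, measureReal_restrict_apply_univ, measureReal_def, Measure.restrict_apply_univ, smul_eq_mul] at h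
    nlinarith [h]
  -- step B : on sᶜ
  have stepB : ∫ x in sᶜ, g x ∂μ ≤ ∫ x in sᶜ, g x ∂ν :=
    integral_mono_measure hle2 (ae_of_all _ fun x => hg0 x) (hint (ν.restrict sᶜ))
  have hfg : ∀ ξ : Measure E, IsProbabilityMeasure ξ → ∫ x, f x ∂ξ = c + ∫ x, g x ∂ξ := by
    intro ξ hξ
    have : ∀ x, f x = c + g x := fun x => by simp [hg]
    rw [integral_congr_ae (ae_of_all _ this), integral_add (integrable_const c) (hint ξ)]
    simp [measure_univ]
  rw [hfg μ inferInstance, hfg ν inferInstance]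
  have hμsplit : ∫ x, g x ∂μ = ∫ x in s, g x ∂μ + ∫ x in sᶜ, g x ∂μ :=
    (integral_add_compl hs (hint μ)).symm
  have hνsplit : ∫ x, g x ∂ν = ∫ x in s, g x ∂ν + ∫ x in sᶜ, g x ∂ν :=
    (integral_add_compl hs (hint ν)).symm
  have htv : (μ s).toReal - (ν s).toReal ≤ tvDist μ ν :=
    (le_abs_self _).trans (abs_le_tvDist μ ν hs)
  have : r * ((μ s).toReal - (ν s).toReal) ≤ r * tvDist μ ν :=
    mul_le_mul_of_nonneg_left htv hr
  linarith [stepA, stepB]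

/-- Dobrushin contraction. -/
lemma dobrushin [Nonempty E] (μ ν : Measure E) [IsProbabilityMeasure μ] [IsProbabilityMeasure ν]
    {K : E → Measure E} (hK : Measurable K) (hKp : ∀ x, IsProbabilityMeasure (K x))
    {r : ℝ} (hr : 0 ≤ r) (hosc : ∀ x y, tvDist (K x) (K y) ≤ r) :
    tvDist (μ.bind K) (ν.bind K) ≤ r * tvDist μ ν := by
  haveI := isProb_bind μ hK hKp
  haveI := isProb_bind ν hK hKp
  refine tvDist_le _ _ fun A hA => ?_
  rw [bind_toReal μ hK hKp hA, bind_toReal ν hK hKp hA]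
  set f : E → ℝ := fun x => (K x A).toReal with hfdef
  have hfm : Measurable f := ((Measure.measurable_coe hA).comp hK).ennreal_toReal
  have h0 : ∀ x, 0 ≤ f x := fun x => ENNReal.toReal_nonneg
  have h1 : ∀ x, f x ≤ 1 := fun x => by
    haveI := hKp x; exact toReal_prob_le_one (K x) A
  have hosc' : ∀ x y, f x - f y ≤ r := by
    intro x y
    haveI := hKp x; haveI := hKp y
    exact (le_abs_self _).trans ((abs_le_tvDist (K x) (K y) hA).trans (hosc x y))
  rw [abs_sub_le_iff]
  refine ⟨integral_sub_le μ ν hfm h0 h1 hr hosc', ?_⟩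
  rw [tvDist_comm μ ν]
  exact integral_sub_le ν μ hfm h0 h1 hr hosc'


/-- Comparison of a fixed measure with an average of kernels. -/
lemma tvDist_le_bind (ν₀ : Measure E) [IsProbabilityMeasure ν₀] (μ : Measure E)
    [IsProbabilityMeasure μ] {K : E → Measure E} (hK : Measurable K)
    (hKp : ∀ x, IsProbabilityMeasure (K x)) {c : ℝ} (hc : 0 ≤ c)
    (h : ∀ y, tvDist ν₀ (K y) ≤ c) : tvDist ν₀ (μ.bind K) ≤ c := by
  haveI := isProb_bind μ hK hKp
  refine tvDist_le _ _ fun A hA => ?_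
  rw [bind_toReal μ hK hKp hA]
  set f : E → ℝ := fun x => (K x A).toReal with hfdef
  have hfm : Measurable f := ((Measure.measurable_coe hA).comp hK).ennreal_toReal
  have hb : ∀ x, |(ν₀ A).toReal - f x| ≤ c := by
    intro x
    haveI := hKp x
    exact (abs_le_tvDist ν₀ (K x) hA).trans (h x)
  have hconst : (ν₀ A).toReal = ∫ _x, (ν₀ A).toReal ∂μ := by simp [measure_univ]
  rw [hconst, ← integral_sub (integrable_const _)
    (integrable_of_bound μ hfm 1 fun x => by
      haveI := hKp x
      rw [abs_of_nonneg ENNReal.toReal_nonneg]; exact toReal_prob_le_one (K x) A)]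
  calc |∫ x, ((ν₀ A).toReal - f x) ∂μ| ≤ ∫ x, |(ν₀ A).toReal - f x| ∂μ := by
        simpa [Real.norm_eq_abs] using
          norm_integral_le_integral_norm (μ := μ) (f := fun x => (ν₀ A).toReal - f x)
    _ ≤ ∫ _x, c ∂μ := by
        refine integral_mono ?_ (integrable_const c) hb
        exact integrable_of_bound μ (measurable_const.sub hfm).abs c fun x => by
          rw [abs_abs]; exact hb x
    _ = c := by simp [measure_univ]


/-- Comparison of two kernels averaged against the same measure. -/
lemma tvDist_bind_kernels (μ : Measure E) [IsProbabilityMeasure μ]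
    {K K' : E → Measure E} (hK : Measurable K) (hK' : Measurable K')
    (hKp : ∀ x, IsProbabilityMeasure (K x)) (hK'p : ∀ x, IsProbabilityMeasure (K' x))
    {c : ℝ} (h : ∀ x, tvDist (K x) (K' x) ≤ c) :
    tvDist (μ.bind K) (μ.bind K') ≤ c := by
  haveI := isProb_bind μ hK hKp
  haveI := isProb_bind μ hK' hK'p
  refine tvDist_le _ _ fun A hA => ?_
  rw [bind_toReal μ hK hKp hA, bind_toReal μ hK' hK'p hA]
  set f : E → ℝ := fun x => (K x A).toReal with hfdef
  set f' : E → ℝ := fun x => (K' x A).toReal with hf'def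
  have hfm : Measurable f := ((Measure.measurable_coe hA).comp hK).ennreal_toReal
  have hf'm : Measurable f' := ((Measure.measurable_coe hA).comp hK').ennreal_toReal
  have hb : ∀ x, |f x - f' x| ≤ c := by
    intro x
    haveI := hKp x; haveI := hK'p x
    exact (abs_le_tvDist (K x) (K' x) hA).trans (h x)
  have hint : Integrable f μ := integrable_of_bound μ hfm 1 fun x => by
    haveI := hKp x; rw [abs_of_nonneg ENNReal.toReal_nonneg]; exact toReal_prob_le_one (K x) A
  have hint' : Integrable f' μ := integrable_of_bound μ hf'm 1 fun x => by
    haveI := hK'p x; rw [abs_of_nonneg ENNReal.toReal_nonneg]; exact toReal_prob_le_one (K' x) A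
  rw [← integral_sub hint hint']
  calc |∫ x, (f x - f' x) ∂μ| ≤ ∫ x, |f x - f' x| ∂μ := by
        simpa [Real.norm_eq_abs] using
          norm_integral_le_integral_norm (μ := μ) (f := fun x => f x - f' x)
    _ ≤ ∫ _x, c ∂μ := by
        refine integral_mono ?_ (integrable_const c) hb
        exact integrable_of_bound μ (hfm.sub hf'm).abs c fun x => by rw [abs_abs]; exact hb x
    _ = c := by simp [measure_univ]

section structural

lemma mstep_meas (R : E → Measure E) (hR : Measurable R) : ∀ k, Measurable (mstep R k)
  | 0 => Measure.measurable_dirac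
  | (k+1) => (Measure.measurable_bind' (mstep_meas R hR k)).comp hR

lemma mstep_prob (R : E → Measure E) (hR : Measurable R)
    (hRp : ∀ x, IsProbabilityMeasure (R x)) : ∀ k x, IsProbabilityMeasure (mstep R k x)
  | 0, x => by rw [mstep]; infer_instance
  | (k+1), x => by
      rw [mstep]
      haveI := hRp x
      exact isProb_bind (R x) (mstep_meas R hR k) (mstep_prob R hR hRp k)

lemma tvstep_meas (Q : ℝ → E → Measure E) (hQmeas : ∀ u, Measurable (Q u)) (n : ℕ) :
    ∀ (j : ℕ) (i : ℤ), Measurable (tvstep Q n i j)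
  | 0, _i => Measure.measurable_dirac
  | (j+1), i => (Measure.measurable_bind' (tvstep_meas Q hQmeas n j (i+1))).comp (hQmeas _)

lemma tvstep_prob (Q : ℝ → E → Measure E) (hQmeas : ∀ u, Measurable (Q u))
    (hQprob : ∀ u x, IsProbabilityMeasure (Q u x)) (n : ℕ) :
    ∀ (j : ℕ) (i : ℤ) (x : E), IsProbabilityMeasure (tvstep Q n i j x)
  | 0, i, x => by rw [tvstep]; infer_instance
  | (j+1), i, x => by
      rw [tvstep]
      haveI := hQprob (((i:ℝ)+1)/(n:ℝ)) x
      exact isProb_bind _ (tvstep_meas Q hQmeas n j (i+1))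
        (tvstep_prob Q hQmeas hQprob n j (i+1))

lemma tvstep_comp (Q : ℝ → E → Measure E) (hQmeas : ∀ u, Measurable (Q u)) (n : ℕ) :
    ∀ (a : ℕ) (b : ℕ) (i : ℤ) (x : E),
    tvstep Q n i (a+b) x = (tvstep Q n i a x).bind (tvstep Q n (i+(a:ℤ)) b)
  | 0, b, i, x => by
      simp only [Nat.zero_add, tvstep]
      rw [Measure.dirac_bind (tvstep_meas Q hQmeas n b (i+((0:ℕ):ℤ)))]
      norm_num
  | (a+1), b, i, x => by
      have h1 : a + 1 + b = (a + b) + 1 := by omega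
      rw [h1]
      show (Q (((i:ℝ)+1)/(n:ℝ)) x).bind (tvstep Q n (i+1) (a+b)) = _
      have h2 : tvstep Q n (i+1) (a+b) = fun y =>
          (tvstep Q n (i+1) a y).bind (tvstep Q n ((i+1)+(a:ℤ)) b) :=
        funext fun y => tvstep_comp Q hQmeas n a b (i+1) y
      rw [h2, ← Measure.bind_bind (tvstep_meas Q hQmeas n a (i+1)).aemeasurable
        (tvstep_meas Q hQmeas n b ((i+1)+(a:ℤ))).aemeasurable]
      show (tvstep Q n i (a+1) x).bind _ = _
      have h3 : (i+1) + (a:ℤ) = i + (((a:ℕ)+1 : ℕ):ℤ) := by push_cast; ring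
      rw [h3]

lemma tvstep_one (Q : ℝ → E → Measure E) (n : ℕ) (i : ℤ) (x : E) :
    tvstep Q n i 1 x = Q (((i:ℝ)+1)/(n:ℝ)) x := by
  show (Q (((i:ℝ)+1)/(n:ℝ)) x).bind (tvstep Q n (i+1) 0) = _
  have h : tvstep Q n (i+1) 0 = Measure.dirac := funext fun _y => rfl
  rw [h, Measure.bind_dirac]

lemma tvstep_peel (Q : ℝ → E → Measure E) (hQmeas : ∀ u, Measurable (Q u)) (n : ℕ)
    (j : ℕ) (i : ℤ) (x : E) :
    tvstep Q n i (j+1) x = (tvstep Q n i j x).bind (Q (((i:ℝ)+(j:ℝ)+1)/(n:ℝ))) := by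
  rw [tvstep_comp Q hQmeas n j 1 i x]
  congr 1
  funext y
  rw [tvstep_one]
  push_cast
  ring_nf

end structural

/-- Count of "good" contraction blocks. -/
def gcnt (m N n : ℕ) : ℤ → ℕ → ℕ
  | _, 0 => 0
  | i, (q+1) => (if i + (m:ℤ) ≤ 0 ∨ N ≤ n then 1 else 0) + gcnt m N n (i + (m:ℤ)) q

/-- Telescoping comparison of the inhomogeneous chain with a homogeneous one. -/
lemma tele [Nonempty E] (Q : ℝ → E → Measure E) (hQmeas : ∀ u, Measurable (Q u))
    (hQprob : ∀ u x, IsProbabilityMeasure (Q u x)) (n : ℕ) (v : ℝ) :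
    ∀ (k : ℕ) (i : ℤ) (c : ℝ), 0 ≤ c →
    (∀ l : ℕ, l < k → ∀ z, tvDist (Q (((i:ℝ)+(l:ℝ)+1)/(n:ℝ)) z) (Q v z) ≤ c) →
    ∀ x, tvDist (tvstep Q n i k x) (mstep (Q v) k x) ≤ (k:ℝ) * c
  | 0, i, c, hc, _h, x => by
      show tvDist (Measure.dirac x) (Measure.dirac x) ≤ _
      rw [tvDist_self]; positivity
  | (k+1), i, c, hc, h, x => by
      haveI := hQprob (((i:ℝ)+1)/(n:ℝ)) x
      haveI := hQprob v x
      have hT := tvstep_meas Q hQmeas n k (i+1)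
      have hTp := tvstep_prob Q hQmeas hQprob n k (i+1)
      have hM := mstep_meas (Q v) (hQmeas v) k
      have hMp := mstep_prob (Q v) (hQmeas v) (hQprob v) k
      show tvDist ((Q (((i:ℝ)+1)/(n:ℝ)) x).bind (tvstep Q n (i+1) k))
        ((Q v x).bind (mstep (Q v) k)) ≤ _
      haveI := isProb_bind (Q (((i:ℝ)+1)/(n:ℝ)) x) hT hTp
      haveI := isProb_bind (Q (((i:ℝ)+1)/(n:ℝ)) x) hM hMp
      haveI := isProb_bind (Q v x) hM hMp
      have d1 : tvDist ((Q (((i:ℝ)+1)/(n:ℝ)) x).bind (tvstep Q n (i+1) k))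
          ((Q (((i:ℝ)+1)/(n:ℝ)) x).bind (mstep (Q v) k)) ≤ (k:ℝ) * c := by
        refine tvDist_bind_kernels _ hT hM hTp hMp fun z => ?_
        refine tele Q hQmeas hQprob n v k (i+1) c hc ?_ z
        intro l hl z'
        have e : (((i+1:ℤ):ℝ)+(l:ℝ)+1)/(n:ℝ) = ((i:ℝ)+(((l+1:ℕ)):ℝ)+1)/(n:ℝ) := by
          push_cast; ring
        rw [e]
        exact h (l+1) (by omega) z'
      have d2 : tvDist ((Q (((i:ℝ)+1)/(n:ℝ)) x).bind (mstep (Q v) k))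
          ((Q v x).bind (mstep (Q v) k)) ≤ c := by
        have := dobrushin (Q (((i:ℝ)+1)/(n:ℝ)) x) (Q v x) hM hMp (r := 1) zero_le_one
          (fun z w => by haveI := hMp z; haveI := hMp w; exact tvDist_le_one _ _)
        have h0 : tvDist (Q (((i:ℝ)+1)/(n:ℝ)) x) (Q v x) ≤ c := by
          have e : ((i:ℝ)+((0:ℕ):ℝ)+1)/(n:ℝ) = ((i:ℝ)+1)/(n:ℝ) := by push_cast; ring
          have := h 0 (by omega) x
          rwa [e] at this
        nlinarith [this, h0, tvDist_nonneg (Q (((i:ℝ)+1)/(n:ℝ)) x) (Q v x)]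
      have := tvDist_triangle ((Q (((i:ℝ)+1)/(n:ℝ)) x).bind (tvstep Q n (i+1) k))
        ((Q (((i:ℝ)+1)/(n:ℝ)) x).bind (mstep (Q v) k)) ((Q v x).bind (mstep (Q v) k))
      push_cast
      nlinarith [this, d1, d2]

lemma block [Nonempty E] (Q : ℝ → E → Measure E) (hQmeas : ∀ u, Measurable (Q u))
    (hQprob : ∀ u x, IsProbabilityMeasure (Q u x)) (hQ0 : ∀ u ≤ (0:ℝ), Q u = Q 0)
    (m : ℕ) (hm : 1 ≤ m) (r : ℝ) (hr : r ∈ Set.Ioo (0:ℝ) 1)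
    (hA1 : ∀ u ∈ Icc (0:ℝ) 1, ∀ x y : E,
      tvDist (mstep (Q u) m x) (mstep (Q u) m y) ≤ r)
    (L : ℝ) (hL : 0 < L) (κ : ℝ) (hκ : κ ∈ Set.Ioo (0:ℝ) 1)
    (hA2 : ∀ u ∈ Icc (0:ℝ) 1, ∀ v ∈ Icc (0:ℝ) 1, ∀ x : E,
      tvDist (Q u x) (Q v x) ≤ L * |u - v| ^ κ)
    (N : ℕ) (hN1 : 1 ≤ N)
    (hN : ∀ n : ℕ, N ≤ n → (m:ℝ) * (L * ((m:ℝ)/(n:ℝ))^κ) ≤ (1-r)/4)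
    (n : ℕ) (i : ℤ) (hin : i + (m:ℤ) ≤ (n:ℤ)) (hgood : i + (m:ℤ) ≤ 0 ∨ N ≤ n) (x y : E) :
    tvDist (tvstep Q n i m x) (tvstep Q n i m y) ≤ (1+r)/2 := by
  set v : ℝ := max (((i:ℝ)+(m:ℝ))/(n:ℝ)) 0 with hvdef
  have hv0 : 0 ≤ v := le_max_right _ _
  have hv1 : v ≤ 1 := by
    rcases Nat.eq_zero_or_pos n with hn | hn
    · subst hn; simp [hvdef]
    · have hnpos : (0:ℝ) < (n:ℝ) := by exact_mod_cast hn
      have h1 : ((i:ℝ)+(m:ℝ))/(n:ℝ) ≤ 1 := by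
        rw [div_le_one hnpos]
        exact_mod_cast hin
      simp [hvdef, h1]
  -- uniform per-step bound with appropriate constant
  obtain ⟨c, hc0, hcb, hstep⟩ :
      ∃ c : ℝ, 0 ≤ c ∧ (m:ℝ) * c ≤ (1-r)/4 ∧
        (∀ l : ℕ, l < m → ∀ z, tvDist (Q (((i:ℝ)+(l:ℝ)+1)/(n:ℝ)) z) (Q v z) ≤ c) := by
    rcases hgood with hneg | hbig
    · refine ⟨0, le_refl _, by simp; linarith [hr.2], ?_⟩
      intro l hl z
      have hnum : (i:ℝ) + (l:ℝ) + 1 ≤ 0 := by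
        have : (i:ℤ) + (l:ℤ) + 1 ≤ 0 := by omega
        exact_mod_cast this
      have hul : ((i:ℝ)+(l:ℝ)+1)/(n:ℝ) ≤ 0 := by
        rcases Nat.eq_zero_or_pos n with hn | hn
        · subst hn; simp
        · exact div_nonpos_of_nonpos_of_nonneg hnum (by positivity)
      have hvneg : ((i:ℝ)+(m:ℝ))/(n:ℝ) ≤ 0 := by
        rcases Nat.eq_zero_or_pos n with hn | hn
        · subst hn; simp
        · refine div_nonpos_of_nonpos_of_nonneg ?_ (by positivity)
          exact_mod_cast hneg
      have hv : v = 0 := max_eq_right hvneg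
      rw [hQ0 _ hul, hv, tvDist_self]
    · -- n ≥ N ≥ 1
      have hnpos : (0:ℝ) < (n:ℝ) := by
        have : 0 < n := lt_of_lt_of_le hN1 hbig
        exact_mod_cast this
      refine ⟨L * ((m:ℝ)/(n:ℝ))^κ, by positivity, ?_, ?_⟩
      · exact hN n hbig
      intro l hl z
      set u : ℝ := ((i:ℝ)+(l:ℝ)+1)/(n:ℝ) with hudef
      set u' : ℝ := max u 0 with hu'def
      have hQu : Q u = Q u' := by
        rcases le_or_gt u 0 with h | h
        · rw [hQ0 u h, hu'def, max_eq_right h]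
        · rw [hu'def, max_eq_left h.le]
      have hu'1 : u' ≤ 1 := by
        have hu1 : u ≤ 1 := by
          rw [hudef, div_le_one hnpos]
          have : (i:ℤ) + (l:ℤ) + 1 ≤ (n:ℤ) := by omega
          exact_mod_cast this
        simp [hu'def, hu1]
      have habs : |u' - v| ≤ (m:ℝ)/(n:ℝ) := by
        have h1 : |u' - v| ≤ |u - ((i:ℝ)+(m:ℝ))/(n:ℝ)| := abs_max_sub_max_le_abs _ _ _
        have h2 : u - ((i:ℝ)+(m:ℝ))/(n:ℝ) = ((l:ℝ)+1-(m:ℝ))/(n:ℝ) := by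
          rw [hudef]; ring
        have hlm : (l:ℝ) + 1 ≤ (m:ℝ) := by exact_mod_cast hl
        have h3 : |((l:ℝ)+1-(m:ℝ))/(n:ℝ)| ≤ (m:ℝ)/(n:ℝ) := by
          rw [abs_div, abs_of_pos hnpos]
          have hml : |(l:ℝ)+1-(m:ℝ)| ≤ (m:ℝ) := by
            rw [abs_le]
            constructor <;> [linarith [Nat.cast_nonneg (α := ℝ) l]; linarith]
          gcongr
        calc |u' - v| ≤ |u - ((i:ℝ)+(m:ℝ))/(n:ℝ)| := h1
          _ = |((l:ℝ)+1-(m:ℝ))/(n:ℝ)| := by rw [h2]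
          _ ≤ (m:ℝ)/(n:ℝ) := h3
      have hu'icc : u' ∈ Icc (0:ℝ) 1 := ⟨le_max_right _ _, hu'1⟩
      have happ := hA2 u' hu'icc v ⟨hv0, hv1⟩ z
      rw [hQu]
      refine happ.trans ?_
      have hpow : |u' - v| ^ κ ≤ ((m:ℝ)/(n:ℝ)) ^ κ :=
        Real.rpow_le_rpow (abs_nonneg _) habs hκ.1.le
      exact mul_le_mul_of_nonneg_left hpow hL.le
  -- conclude by triangle through the homogeneous chain
  have hd1 := tele Q hQmeas hQprob n v m i c hc0 hstep x
  have hd2 := tele Q hQmeas hQprob n v m i c hc0 hstep y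
  have hd3 := hA1 v ⟨hv0, hv1⟩ x y
  haveI h1 := tvstep_prob Q hQmeas hQprob n m i x
  haveI h2 := tvstep_prob Q hQmeas hQprob n m i y
  haveI h3 := mstep_prob (Q v) (hQmeas v) (hQprob v) m x
  haveI h4 := mstep_prob (Q v) (hQmeas v) (hQprob v) m y
  have t1 := tvDist_triangle (tvstep Q n i m x) (mstep (Q v) m x) (tvstep Q n i m y)
  have t2 := tvDist_triangle (mstep (Q v) m x) (mstep (Q v) m y) (tvstep Q n i m y)
  have hsymm : tvDist (mstep (Q v) m y) (tvstep Q n i m y) = tvDist (tvstep Q n i m y) (mstep (Q v) m y) :=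
    tvDist_comm _ _
  linarith [hd1, hd2, hd3, t1, t2]


lemma pi_ev (Q : ℝ → E → Measure E) (hQmeas : ∀ u, Measurable (Q u))
    (πn : ℕ → ℤ → Measure E)
    (hrec : ∀ (n : ℕ) (k : ℤ), k ≤ (n:ℤ) → πn n k = (πn n (k-1)).bind (Q ((k:ℝ)/(n:ℝ))))
    (n : ℕ) : ∀ (j : ℕ) (i : ℤ), i + (j:ℤ) ≤ (n:ℤ) →
    πn n (i+(j:ℤ)) = (πn n i).bind (tvstep Q n i j)
  | 0, i, _h => by
      have h0 : tvstep Q n i 0 = Measure.dirac := funext fun _ => rfl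
      rw [h0, Measure.bind_dirac]
      norm_num
  | (j+1), i, h => by
      have hk := hrec n (i+(j:ℤ)+1) (by push_cast at h ⊢; linarith)
      have e1 : i + ((j+1:ℕ):ℤ) = i + (j:ℤ) + 1 := by push_cast; ring
      have e2 : i + (j:ℤ) + 1 - 1 = i + (j:ℤ) := by ring
      rw [e1, hk, e2, pi_ev Q hQmeas πn hrec n j i (by push_cast at h ⊢; linarith)]
      rw [Measure.bind_bind (tvstep_meas Q hQmeas n j i).aemeasurable (hQmeas _).aemeasurable]
      congr 1
      funext y
      rw [tvstep_peel Q hQmeas n j i y]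
      congr 2
      push_cast
      ring

lemma blocks [Nonempty E] (Q : ℝ → E → Measure E) (hQmeas : ∀ u, Measurable (Q u))
    (hQprob : ∀ u x, IsProbabilityMeasure (Q u x)) (hQ0 : ∀ u ≤ (0:ℝ), Q u = Q 0)
    (m : ℕ) (hm : 1 ≤ m) (r : ℝ) (hr : r ∈ Set.Ioo (0:ℝ) 1)
    (hA1 : ∀ u ∈ Icc (0:ℝ) 1, ∀ x y : E,
      tvDist (mstep (Q u) m x) (mstep (Q u) m y) ≤ r)
    (L : ℝ) (hL : 0 < L) (κ : ℝ) (hκ : κ ∈ Set.Ioo (0:ℝ) 1)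
    (hA2 : ∀ u ∈ Icc (0:ℝ) 1, ∀ v ∈ Icc (0:ℝ) 1, ∀ x : E,
      tvDist (Q u x) (Q v x) ≤ L * |u - v| ^ κ)
    (N : ℕ) (hN1 : 1 ≤ N)
    (hN : ∀ n : ℕ, N ≤ n → (m:ℝ) * (L * ((m:ℝ)/(n:ℝ))^κ) ≤ (1-r)/4)
    (n : ℕ) :
    ∀ (q : ℕ) (i : ℤ) (x y : E), i + ((q*m : ℕ):ℤ) ≤ (n:ℤ) →
    tvDist (tvstep Q n i (q*m) x) (tvstep Q n i (q*m) y) ≤ ((1+r)/2) ^ (gcnt m N n i q)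
  | 0, i, x, y, _hin => by
      haveI := tvstep_prob Q hQmeas hQprob n (0*m) i x
      haveI := tvstep_prob Q hQmeas hQprob n (0*m) i y
      simpa [gcnt] using tvDist_le_one (tvstep Q n i (0*m) x) (tvstep Q n i (0*m) y)
  | (q+1), i, x, y, hin => by
      have hρ0 : (0:ℝ) < (1+r)/2 := by linarith [hr.1]
      have e : (q+1)*m = m + q*m := by ring
      rw [e, tvstep_comp Q hQmeas n m (q*m) i x, tvstep_comp Q hQmeas n m (q*m) i y]
      haveI := tvstep_prob Q hQmeas hQprob n m i x
      haveI := tvstep_prob Q hQmeas hQprob n m i y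
      have hqm0 : (0:ℤ) ≤ ((q*m : ℕ):ℤ) := Int.natCast_nonneg _
      have hin2 : i + ((m:ℕ):ℤ) + ((q*m : ℕ):ℤ) ≤ (n:ℤ) := by push_cast at hin ⊢; linarith
      have him : i + (m:ℤ) ≤ (n:ℤ) := by
        have hqq : (0:ℤ) ≤ (q:ℤ)*(m:ℤ) := by positivity
        push_cast at hin2 ⊢
        linarith
      have hd := dobrushin (tvstep Q n i m x) (tvstep Q n i m y)
        (tvstep_meas Q hQmeas n (q*m) (i+(m:ℤ)))
        (tvstep_prob Q hQmeas hQprob n (q*m) (i+(m:ℤ)))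
        (r := ((1+r)/2) ^ (gcnt m N n (i+(m:ℤ)) q)) (by positivity)
        (fun z w => blocks Q hQmeas hQprob hQ0 m hm r hr hA1 L hL κ hκ hA2 N hN1 hN n
          q (i+(m:ℤ)) z w hin2)
      refine hd.trans ?_
      by_cases hg : i + (m:ℤ) ≤ 0 ∨ N ≤ n
      · have hb : tvDist (tvstep Q n i m x) (tvstep Q n i m y) ≤ (1+r)/2 :=
          block Q hQmeas hQprob hQ0 m hm r hr hA1 L hL κ hκ hA2 N hN1 hN n i him hg x y
        have hgc : gcnt m N n i (q+1) = 1 + gcnt m N n (i+(m:ℤ)) q := by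
          simp [gcnt, hg]
        rw [hgc]
        calc ((1+r)/2) ^ (gcnt m N n (i+(m:ℤ)) q) * tvDist (tvstep Q n i m x) (tvstep Q n i m y)
            ≤ ((1+r)/2) ^ (gcnt m N n (i+(m:ℤ)) q) * ((1+r)/2) :=
              mul_le_mul_of_nonneg_left hb (by positivity)
          _ = ((1+r)/2) ^ (1 + gcnt m N n (i+(m:ℤ)) q) := by
              rw [← pow_succ]
              congr 1
              omega
      · have hb : tvDist (tvstep Q n i m x) (tvstep Q n i m y) ≤ 1 :=
          tvDist_le_one _ _
        have hgc : gcnt m N n i (q+1) = gcnt m N n (i+(m:ℤ)) q := by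
          simp [gcnt, hg]
        rw [hgc]
        calc ((1+r)/2) ^ (gcnt m N n (i+(m:ℤ)) q) * tvDist (tvstep Q n i m x) (tvstep Q n i m y)
            ≤ ((1+r)/2) ^ (gcnt m N n (i+(m:ℤ)) q) * 1 :=
              mul_le_mul_of_nonneg_left hb (by positivity)
          _ = ((1+r)/2) ^ (gcnt m N n (i+(m:ℤ)) q) := mul_one _

lemma gcnt_ge (m N n : ℕ) (hm : 1 ≤ m) : ∀ (q : ℕ) (i : ℤ), i + ((q*m:ℕ):ℤ) ≤ (n:ℤ) →
    q ≤ gcnt m N n i q + (N + m)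
  | 0, _i, _h => by simp
  | (q+1), i, hin => by
      by_cases hg : i + (m:ℤ) ≤ 0 ∨ N ≤ n
      · have hin' : (i+(m:ℤ)) + ((q*m:ℕ):ℤ) ≤ (n:ℤ) := by push_cast at hin ⊢; linarith
        have hrec := gcnt_ge m N n hm q (i+(m:ℤ)) hin'
        have hgc : gcnt m N n i (q+1) = 1 + gcnt m N n (i+(m:ℤ)) q := by simp [gcnt, hg]
        omega
      · push_neg at hg
        obtain ⟨hpos, hn⟩ := hg
        have h1 : ((q:ℤ)+1) * (m:ℤ) ≤ (n:ℤ) - i := by push_cast at hin; linarith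
        have h3 : ((q:ℤ)+1) ≤ ((q:ℤ)+1) * (m:ℤ) :=
          le_mul_of_one_le_right (by positivity) (by exact_mod_cast hm)
        have h4 : (n:ℤ) < (N:ℤ) := by exact_mod_cast hn
        have h5 : (q:ℤ)+1 ≤ (N:ℤ) + (m:ℤ) := by linarith
        have h6 : q + 1 ≤ N + m := by exact_mod_cast h5
        exact h6.trans (Nat.le_add_left _ _)

end TVAux


theorem statement1
    {E : Type*} [MeasurableSpace E]
    (Q : ℝ → E → Measure E)
    (hQmeas : ∀ u, Measurable (Q u))
    (hQprob : ∀ u x, IsProbabilityMeasure (Q u x))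
    (hQ0 : ∀ u ≤ (0:ℝ), Q u = Q 0)
    (πn : ℕ → ℤ → Measure E)
    (hπprob : ∀ n k, IsProbabilityMeasure (πn n k))
    (hstart : ∀ n : ℕ, ∀ k ≤ (0:ℤ), πn n k = πn n 0)
    (hrec : ∀ (n : ℕ) (k : ℤ), k ≤ (n:ℤ) → πn n k = (πn n (k-1)).bind (Q ((k:ℝ)/(n:ℝ))))
    -- Assumption A1
    (m : ℕ) (hm : 1 ≤ m) (r : ℝ) (hr : r ∈ Set.Ioo (0:ℝ) 1)
    (hA1 : ∀ u ∈ Icc (0:ℝ) 1, ∀ x y : E,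
      tvDist (mstep (Q u) m x) (mstep (Q u) m y) ≤ r)
    -- Assumption A2
    (L : ℝ) (hL : 0 < L) (κ : ℝ) (hκ : κ ∈ Set.Ioo (0:ℝ) 1)
    (hA2 : ∀ u ∈ Icc (0:ℝ) 1, ∀ v ∈ Icc (0:ℝ) 1, ∀ x : E,
      tvDist (Q u x) (Q v x) ≤ L * |u - v| ^ κ) :
    ∃ C > (0:ℝ), ∃ ρ ∈ Set.Ioo (0:ℝ) 1,
      ∀ (n : ℕ) (j : ℕ), 1 ≤ j → betaMix Q πn n j ≤ C * ρ ^ (j / m) := by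
  classical
  have hE : Nonempty E := by
    by_contra h
    rw [not_nonempty_iff] at h
    have h1 := (hπprob 0 0).measure_univ
    rw [Set.univ_eq_empty_iff.mpr h, measure_empty] at h1
    exact zero_ne_one h1
  set ρ : ℝ := (1+r)/2 with hρdef
  have hρIoo : ρ ∈ Set.Ioo (0:ℝ) 1 := ⟨by rw [hρdef]; linarith [hr.1], by rw [hρdef]; linarith [hr.2]⟩
  have hρpos : 0 < ρ := hρIoo.1
  have hm0 : (0:ℝ) < (m:ℝ) := by exact_mod_cast Nat.lt_of_lt_of_le Nat.zero_lt_one hm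
  set δ : ℝ := ((1-r)/4) / ((m:ℝ)*L) with hδdef
  have hδ0 : 0 < δ := by
    rw [hδdef]
    exact div_pos (by linarith [hr.2]) (by positivity)
  obtain ⟨N₀, hN₀⟩ := exists_nat_gt ((m:ℝ) / δ ^ κ⁻¹)
  set N : ℕ := N₀ + 1 with hNdef
  have hN1 : 1 ≤ N := by omega
  have hNprop : ∀ n : ℕ, N ≤ n → (m:ℝ) * (L * ((m:ℝ)/(n:ℝ))^κ) ≤ (1-r)/4 := by
    intro n hn
    have hδκ : (0:ℝ) < δ ^ κ⁻¹ := Real.rpow_pos_of_pos hδ0 _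
    have hnn : ((m:ℝ) / δ ^ κ⁻¹) < (n:ℝ) := by
      refine lt_of_lt_of_le hN₀ ?_
      have hhh : N₀ ≤ n := by omega
      exact_mod_cast hhh
    have hnpos : (0:ℝ) < (n:ℝ) := lt_trans (by positivity) hnn
    have hmn : (m:ℝ)/(n:ℝ) ≤ δ ^ κ⁻¹ := by
      rw [div_le_iff₀ hnpos]
      rw [div_lt_iff₀ hδκ] at hnn
      nlinarith
    have hpow : ((m:ℝ)/(n:ℝ)) ^ κ ≤ (δ ^ κ⁻¹) ^ κ :=
      Real.rpow_le_rpow (by positivity) hmn hκ.1.le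
    rw [Real.rpow_inv_rpow hδ0.le (ne_of_gt hκ.1)] at hpow
    calc (m:ℝ) * (L * ((m:ℝ)/(n:ℝ))^κ) ≤ (m:ℝ) * (L * δ) := by
          refine mul_le_mul_of_nonneg_left ?_ hm0.le
          exact mul_le_mul_of_nonneg_left hpow hL.le
      _ = (1-r)/4 := by
          rw [hδdef]
          field_simp
  have hCpos : (0:ℝ) < (1/ρ)^(N+m) := pow_pos (by positivity) _
  refine ⟨(1/ρ)^(N+m), hCpos, ρ, hρIoo, ?_⟩
  intro n j _hj
  haveI : Nonempty {i : ℤ // i + (j:ℤ) ≤ (n:ℤ)} := ⟨⟨(n:ℤ) - (j:ℤ), by omega⟩⟩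
  unfold betaMix
  refine ciSup_le ?_
  rintro ⟨i, hi⟩
  simp only
  set q : ℕ := j / m with hqdef
  have hqmle : q * m ≤ j := by
    rw [hqdef]
    exact Nat.div_mul_le_self j m
  set c₀ : ℝ := (1/ρ)^(N+m) * ρ ^ q with hc₀def
  have hc₀ : 0 ≤ c₀ := le_of_lt (mul_pos hCpos (pow_pos hρpos q))
  have hiq : i + ((q*m : ℕ):ℤ) ≤ (n:ℤ) := by
    have hle : (q*m:ℕ) ≤ j := hqmle
    omega
  have pair : ∀ x y : E, tvDist (tvstep Q n i j x) (tvstep Q n i j y) ≤ c₀ := by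
    intro x y
    have hsplit : q * m + (j - q*m) = j := by omega
    rw [← hsplit, TVAux.tvstep_comp Q hQmeas n (q*m) (j-q*m) i x,
      TVAux.tvstep_comp Q hQmeas n (q*m) (j-q*m) i y]
    haveI := TVAux.tvstep_prob Q hQmeas hQprob n (q*m) i x
    haveI := TVAux.tvstep_prob Q hQmeas hQprob n (q*m) i y
    have hd := TVAux.dobrushin (tvstep Q n i (q*m) x) (tvstep Q n i (q*m) y)
      (TVAux.tvstep_meas Q hQmeas n (j-q*m) (i+((q*m:ℕ):ℤ)))
      (TVAux.tvstep_prob Q hQmeas hQprob n (j-q*m) (i+((q*m:ℕ):ℤ)))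
      (r := 1) zero_le_one (fun z w => by
        haveI := TVAux.tvstep_prob Q hQmeas hQprob n (j-q*m) (i+((q*m:ℕ):ℤ)) z
        haveI := TVAux.tvstep_prob Q hQmeas hQprob n (j-q*m) (i+((q*m:ℕ):ℤ)) w
        exact TVAux.tvDist_le_one _ _)
    refine hd.trans ?_
    rw [one_mul]
    have hblocks := TVAux.blocks Q hQmeas hQprob hQ0 m hm r hr hA1 L hL κ hκ hA2 N hN1 hNprop n
      q i x y hiq
    refine hblocks.trans ?_
    have hg := TVAux.gcnt_ge m N n hm q i hiq
    have h1 : ρ ^ (TVAux.gcnt m N n i q) ≤ ρ ^ (q - (N+m)) :=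
      pow_le_pow_of_le_one hρpos.le hρIoo.2.le (by omega)
    refine le_trans (le_of_eq (by rw [hρdef])) (h1.trans ?_)
    have h2 : ρ ^ (q - (N+m)) * ρ^(N+m) ≤ ρ ^ q := by
      rw [← pow_add]
      exact pow_le_pow_of_le_one hρpos.le hρIoo.2.le (by omega)
    rw [hc₀def, one_div, inv_pow, ← div_eq_inv_mul, le_div_iff₀ (by positivity)]
    exact h2
  have hπ := TVAux.pi_ev Q hQmeas πn hrec n j i hi
  have hx : ∀ x : E, tvDist (tvstep Q n i j x) (πn n (i + (j:ℤ))) ≤ c₀ := by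
    intro x
    rw [hπ]
    haveI := hπprob n i
    haveI := TVAux.tvstep_prob Q hQmeas hQprob n j i x
    exact TVAux.tvDist_le_bind _ _ (TVAux.tvstep_meas Q hQmeas n j i)
      (TVAux.tvstep_prob Q hQmeas hQprob n j i) hc₀ (fun y => pair x y)
  haveI := hπprob n i
  by_cases hInt : Integrable (fun x => tvDist (tvstep Q n i j x) (πn n (i + (j:ℤ)))) (πn n i)
  · refine (integral_mono hInt (integrable_const c₀) hx).trans ?_
    simp [measure_univ, hc₀def]
  · rw [integral_undef hInt]
    exact hc₀


end
end

section
/- Under assumptions F1 and F2, there exist C > 0 and ρ ∈ (0,1) such that for all x ∈ E and all j ≥ 0, sup_{u∈[0,1]} ‖δ_x Q_u^j − π_u‖_V ≤ C V(x) ρ^j, where π_u is the unique invariant probability of Q_u; moreover sup_{u∈[0,1]} π_u V < ∞. -/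
open MeasureTheory ProbabilityTheory Filter Set
open scoped ENNReal NNReal

noncomputable section

variable {E : Type*} [MeasurableSpace E]


noncomputable def vDist (V : E → ℝ) (μ ν : Measure E) : ℝ :=
  ⨆ f : {f : E → ℝ // Measurable f ∧ ∀ x, |f x| ≤ V x},
    |(∫ x, f.1 x ∂μ) - ∫ x, f.1 x ∂ν|

noncomputable def seqStep (Q : ℝ → E → Measure E) : List ℝ → E → Measure E
  | [], x => Measure.dirac x
  | (u :: us), x => (Q u x).bind (seqStep Q us)

lemma st14_mstep_measurable (Q : E → Measure E) (hQ : Measurable Q) :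
    ∀ n, Measurable (mstep Q n)
  | 0 => Measure.measurable_dirac
  | (n+1) => (Measure.measurable_bind' (st14_mstep_measurable Q hQ n)).comp hQ

lemma st14_mstep_prob (Q : E → Measure E) (hQ : Measurable Q)
    (hp : ∀ x, IsProbabilityMeasure (Q x)) :
    ∀ (n : ℕ) (x : E), IsProbabilityMeasure (mstep Q n x)
  | 0, x => by
      show IsProbabilityMeasure (Measure.dirac x); infer_instance
  | (n+1), x => by
      constructor
      show ((Q x).bind (mstep Q n)) univ = 1
      rw [Measure.bind_apply MeasurableSet.univ (st14_mstep_measurable Q hQ n).aemeasurable]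
      have : ∀ y, mstep Q n y univ = 1 := fun y => (st14_mstep_prob Q hQ hp n y).measure_univ
      simp only [this, lintegral_one, (hp x).measure_univ]

lemma st14_mstep_add (Q : E → Measure E) (hQ : Measurable Q) (a : ℕ) :
    ∀ (b : ℕ) (x : E), mstep Q (a + b) x = (mstep Q a x).bind (mstep Q b) := by
  induction a with
  | zero => intro b x
            rw [Nat.zero_add]
            show mstep Q b x = (Measure.dirac x).bind (mstep Q b)
            rw [Measure.dirac_bind (st14_mstep_measurable Q hQ b)]
  | succ n ih =>
      intro b x
      have h1 : n + 1 + b = (n + b) + 1 := by omega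
      rw [h1]
      show (Q x).bind (mstep Q (n + b)) = ((Q x).bind (mstep Q n)).bind (mstep Q b)
      rw [Measure.bind_bind (st14_mstep_measurable Q hQ n).aemeasurable (st14_mstep_measurable Q hQ b).aemeasurable]
      congr 1
      funext y
      exact ih b y

lemma st14_seqStep_replicate (Q : ℝ → E → Measure E) (u : ℝ) :
    ∀ (n : ℕ) (x : E), seqStep Q (List.replicate n u) x = mstep (Q u) n x
  | 0, x => rfl
  | (n+1), x => by
      show (Q u x).bind (seqStep Q (List.replicate n u)) = (Q u x).bind (mstep (Q u) n)
      congr 1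
      funext y
      exact st14_seqStep_replicate Q u n y

lemma st14_bind_mstep_invariant (Q : E → Measure E) (hQ : Measurable Q)
    (μ : Measure E) (hinv : μ.bind Q = μ) :
    ∀ n, μ.bind (mstep Q n) = μ := by
  intro n
  induction n with
  | zero => show μ.bind (fun x => Measure.dirac x) = μ
            exact Measure.bind_dirac
  | succ n ih =>
      show μ.bind (fun x => (Q x).bind (mstep Q n)) = μ
      rw [← Measure.bind_bind hQ.aemeasurable (st14_mstep_measurable Q hQ n).aemeasurable, hinv, ih]

lemma st14_abs_sub_le' (a b : ℝ) : |a - b| ≤ |a| + |b| := by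
  have h := abs_sub_le a 0 b
  simpa using h

lemma st14_abs_integral_le (ν : Measure E) (f g : E → ℝ) (hb : ∀ z, |f z| ≤ g z)
    (c : ℝ) (hc : 0 ≤ c)
    (hfin : ∫⁻ z, ENNReal.ofReal (g z) ∂ν ≤ ENNReal.ofReal c) :
    |∫ z, f z ∂ν| ≤ c := by
  have h1 : |∫ z, f z ∂ν| ≤ (∫⁻ z, ENNReal.ofReal ‖f z‖ ∂ν).toReal :=
    norm_integral_le_lintegral_norm f
  refine h1.trans ?_
  refine ENNReal.toReal_le_of_le_ofReal hc (le_trans ?_ hfin)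
  refine lintegral_mono fun z => ENNReal.ofReal_le_ofReal ?_
  rw [Real.norm_eq_abs]; exact hb z

lemma st14_integrable (ν : Measure E) (f g : E → ℝ) (hf : Measurable f)
    (hb : ∀ z, |f z| ≤ g z)
    (hfin : ∫⁻ z, ENNReal.ofReal (g z) ∂ν < ∞) : Integrable f ν := by
  refine ⟨hf.aestronglyMeasurable, ?_⟩
  rw [hasFiniteIntegral_iff_norm]
  refine lt_of_le_of_lt (lintegral_mono fun z => ?_) hfin
  exact ENNReal.ofReal_le_ofReal ((Real.norm_eq_abs _) ▸ hb z)

lemma st14_integral_bind (μ : Measure E) (P : E → Measure E) (hP : Measurable P)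
    (f g : E → ℝ) (hf : Measurable f) (hg : Measurable g) (hb : ∀ z, |f z| ≤ g z)
    (hfinP : ∀ x, ∫⁻ z, ENNReal.ofReal (g z) ∂(P x) < ∞)
    (hfinb : ∫⁻ z, ENNReal.ofReal (g z) ∂(μ.bind P) < ∞) :
    ∫ z, f z ∂(μ.bind P) = ∫ x, ∫ z, f z ∂(P x) ∂μ := by
  have hfpm : Measurable (fun z => ENNReal.ofReal (f z)) := ENNReal.measurable_ofReal.comp hf
  have hfmm : Measurable (fun z => ENNReal.ofReal (-f z)) := ENNReal.measurable_ofReal.comp hf.neg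
  have hgm : Measurable (fun z => ENNReal.ofReal (g z)) := ENNReal.measurable_ofReal.comp hg
  have hple : ∀ (ν : Measure E), ∫⁻ z, ENNReal.ofReal (f z) ∂ν ≤ ∫⁻ z, ENNReal.ofReal (g z) ∂ν :=
    fun ν => lintegral_mono fun z => ENNReal.ofReal_le_ofReal ((le_abs_self _).trans (hb z))
  have hmle : ∀ (ν : Measure E), ∫⁻ z, ENNReal.ofReal (-f z) ∂ν ≤ ∫⁻ z, ENNReal.ofReal (g z) ∂ν :=
    fun ν => lintegral_mono fun z => ENNReal.ofReal_le_ofReal ((neg_le_abs _).trans (hb z))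
  have hrep : ∀ (ν : Measure E), (∫⁻ z, ENNReal.ofReal (g z) ∂ν < ∞) →
      ∫ z, f z ∂ν = (∫⁻ z, ENNReal.ofReal (f z) ∂ν).toReal
        - (∫⁻ z, ENNReal.ofReal (-f z) ∂ν).toReal := fun ν hν =>
    integral_eq_lintegral_pos_part_sub_lintegral_neg_part (st14_integrable ν f g hf hb hν)
  have hBp : Measurable fun x => ∫⁻ z, ENNReal.ofReal (f z) ∂(P x) :=
    (Measure.measurable_lintegral hfpm).comp hP
  have hBm : Measurable fun x => ∫⁻ z, ENNReal.ofReal (-f z) ∂(P x) :=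
    (Measure.measurable_lintegral hfmm).comp hP
  have hbindp : ∫⁻ x, (∫⁻ z, ENNReal.ofReal (f z) ∂(P x)) ∂μ
      = ∫⁻ z, ENNReal.ofReal (f z) ∂(μ.bind P) := (Measure.lintegral_bind hP.aemeasurable hfpm.aemeasurable).symm
  have hbindm : ∫⁻ x, (∫⁻ z, ENNReal.ofReal (-f z) ∂(P x)) ∂μ
      = ∫⁻ z, ENNReal.ofReal (-f z) ∂(μ.bind P) := (Measure.lintegral_bind hP.aemeasurable hfmm.aemeasurable).symm
  have hbindg : ∫⁻ x, (∫⁻ z, ENNReal.ofReal (g z) ∂(P x)) ∂μ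
      = ∫⁻ z, ENNReal.ofReal (g z) ∂(μ.bind P) := (Measure.lintegral_bind hP.aemeasurable hgm.aemeasurable).symm
  have hgfin : ∫⁻ x, (∫⁻ z, ENNReal.ofReal (g z) ∂(P x)) ∂μ < ∞ := by rw [hbindg]; exact hfinb
  have hint : ∀ (F : E → ℝ≥0∞), Measurable F →
      (∀ x, F x ≤ ∫⁻ z, ENNReal.ofReal (g z) ∂(P x)) →
      Integrable (fun x => (F x).toReal) μ := by
    intro F hFm hFle
    refine st14_integrable μ _ (fun x => ((∫⁻ z, ENNReal.ofReal (g z) ∂(P x))).toReal)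
      hFm.ennreal_toReal (fun x => ?_) ?_
    · rw [abs_of_nonneg ENNReal.toReal_nonneg]
      exact ENNReal.toReal_mono (hfinP x).ne (hFle x)
    · refine lt_of_le_of_lt (lintegral_mono fun x => ENNReal.ofReal_toReal_le) hgfin
  have hintp : Integrable (fun x => (∫⁻ z, ENNReal.ofReal (f z) ∂(P x)).toReal) μ :=
    hint _ hBp fun x => hple (P x)
  have hintm : Integrable (fun x => (∫⁻ z, ENNReal.ofReal (-f z) ∂(P x)).toReal) μ :=
    hint _ hBm fun x => hmle (P x)
  calc ∫ z, f z ∂(μ.bind P)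
      = (∫⁻ z, ENNReal.ofReal (f z) ∂(μ.bind P)).toReal
        - (∫⁻ z, ENNReal.ofReal (-f z) ∂(μ.bind P)).toReal := hrep _ hfinb
    _ = ∫ x, ((∫⁻ z, ENNReal.ofReal (f z) ∂(P x)).toReal
        - (∫⁻ z, ENNReal.ofReal (-f z) ∂(P x)).toReal) ∂μ := by
          rw [integral_sub hintp hintm,
            integral_toReal hBp.aemeasurable
              (Eventually.of_forall fun x => lt_of_le_of_lt (hple (P x)) (hfinP x)),
            integral_toReal hBm.aemeasurable
              (Eventually.of_forall fun x => lt_of_le_of_lt (hmle (P x)) (hfinP x)),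
            hbindp, hbindm]
    _ = ∫ x, ∫ z, f z ∂(P x) ∂μ := by
          refine integral_congr_ae (Eventually.of_forall fun x => ?_)
          exact (hrep (P x) (hfinP x)).symm


lemma st14_lintegral_affine (ν : Measure E) [IsProbabilityMeasure ν] (V : E → ℝ)
    (hVm : Measurable V) (hV0 : ∀ z, 0 ≤ V z) (A D : ℝ) (hA : 0 ≤ A) (hD : 0 ≤ D) :
    ∫⁻ z, ENNReal.ofReal (A + D * V z) ∂ν
      = ENNReal.ofReal A + ENNReal.ofReal D * ∫⁻ z, ENNReal.ofReal (V z) ∂ν := by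
  have hpt : ∀ z, ENNReal.ofReal (A + D * V z)
      = ENNReal.ofReal A + ENNReal.ofReal D * ENNReal.ofReal (V z) := fun z => by
    rw [ENNReal.ofReal_add hA (mul_nonneg hD (hV0 z)), ENNReal.ofReal_mul hD]
  simp only [hpt]
  have hm2 : Measurable fun a => ENNReal.ofReal (V a) := ENNReal.measurable_ofReal.comp hVm
  rw [lintegral_add_left measurable_const, lintegral_const, measure_univ, mul_one,
    lintegral_const_mul _ hm2]

set_option maxHeartbeats 2000000 in
theorem statement14
    {E : Type*} [MeasurableSpace E]
    (Q : ℝ → E → Measure E)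
    (hQmeas : ∀ u, Measurable (Q u))
    (hQprob : ∀ u x, IsProbabilityMeasure (Q u x))
    (V : E → ℝ) (hVmeas : Measurable V) (hV1 : ∀ x, 1 ≤ V x)
    -- Assumption F1
    (ε lam b K : ℝ) (m : ℕ)
    (hε : 0 < ε) (hlam : lam ∈ Set.Ioo (0:ℝ) 1) (hm : 1 ≤ m) (hb : 0 < b) (hK : 1 ≤ K)
    (hdrift1 : ∀ u ∈ Icc (0:ℝ) 1, ∀ x,
      (∫⁻ y, ENNReal.ofReal (V y) ∂(Q u x)) ≤ ENNReal.ofReal (K * V x))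
    (hdriftm : ∀ u ∈ Icc (0:ℝ) 1, ∀ us : Fin m → ℝ,
      (∀ i, us i ∈ Icc (0:ℝ) 1 ∧ |u - us i| ≤ ε) → ∀ x,
      (∫⁻ y, ENNReal.ofReal (V y) ∂(seqStep Q (List.ofFn us) x))
        ≤ ENNReal.ofReal (lam * V x + b))
    (η R : ℝ) (hη : 0 < η) (hR : 2 * b / (1 - lam) < R)
    (ν : Measure E) (hν : IsProbabilityMeasure ν)
    (hminor : ∀ u ∈ Icc (0:ℝ) 1, ∀ us : Fin m → ℝ,
      (∀ i, us i ∈ Icc (0:ℝ) 1 ∧ |u - us i| ≤ ε) → ∀ x, V x ≤ R →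
      ∀ s : Set E, ENNReal.ofReal η * ν s ≤ seqStep Q (List.ofFn us) x s)
    -- the invariant probabilities
    (π : ℝ → Measure E)
    (hπ : ∀ u ∈ Icc (0:ℝ) 1, IsProbabilityMeasure (π u) ∧ (π u).bind (Q u) = π u)
    -- Assumption F2
    (κ : ℝ) (hκ : κ ∈ Set.Ioo (0:ℝ) 1)
    (Vt : E → ℝ) (hVt : ∀ x, 0 < Vt x)
    (hVtπ : ∃ M : ℝ, ∀ u ∈ Icc (0:ℝ) 1,
      (∫⁻ x, ENNReal.ofReal (Vt x) ∂(π u)) ≤ ENNReal.ofReal M)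
    (hF2 : ∀ u ∈ Icc (0:ℝ) 1, ∀ v ∈ Icc (0:ℝ) 1, ∀ x,
      vDist V (Q u x) (Q v x) ≤ Vt x * |u - v| ^ κ) :
    -- uniqueness of the invariant probability
    (∀ u ∈ Icc (0:ℝ) 1, ∀ π' : Measure E, IsProbabilityMeasure π' →
      π'.bind (Q u) = π' → π' = π u) ∧
    -- geometric ergodicity in V-norm, uniformly in u
    (∃ C > (0:ℝ), ∃ ρ ∈ Set.Ioo (0:ℝ) 1, ∀ u ∈ Icc (0:ℝ) 1, ∀ (x : E) (j : ℕ),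
      vDist V (mstep (Q u) j x) (π u) ≤ C * V x * ρ ^ j) ∧
    -- sup_u π_u V < ∞
    (∃ M : ℝ, ∀ u ∈ Icc (0:ℝ) 1,
      (∫⁻ x, ENNReal.ofReal (V x) ∂(π u)) ≤ ENNReal.ofReal M) := by

  classical
  -- basic measurability facts
  have hV0 : ∀ z, (0:ℝ) ≤ V z := fun z => le_trans zero_le_one (hV1 z)
  have hVm' : Measurable fun z => ENNReal.ofReal (V z) := ENNReal.measurable_ofReal.comp hVmeas
  have h0mem : (0:ℝ) ∈ Icc (0:ℝ) 1 := ⟨le_refl 0, zero_le_one⟩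
  -- E is nonempty
  haveI hNE : Nonempty E := by
    by_contra h
    rw [not_nonempty_iff] at h
    have h0 := (hπ 0 h0mem).1
    have h1 : (π 0) univ = 1 := h0.measure_univ
    rw [Set.univ_eq_empty_iff.mpr h, measure_empty] at h1
    exact zero_ne_one h1
  -- constants
  have h1lam : 0 < 1 - lam := by linarith [hlam.2]
  set B : ℝ := b / (1 - lam) with hBdef
  have hBpos : 0 < B := div_pos hb h1lam
  have hRpos : 0 < R := lt_trans (by positivity) hR
  set β : ℝ := η / (2 * b) with hβdef
  have hβpos : 0 < β := by positivity
  set lam0 : ℝ := lam + 2 * b / R with hlam0def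
  have hlam0pos : 0 < lam0 := by have := hlam.1; positivity
  have hlam0lt : lam0 < 1 := by
    have h2 : 2 * b / (1 - lam) < R := hR
    have h3 : 2 * b < R * (1 - lam) := by
      rw [div_lt_iff₀ h1lam] at h2; linarith
    have : 2 * b / R < 1 - lam := by rw [div_lt_iff₀ hRpos]; linarith
    simp only [hlam0def]; linarith
  set γ1 : ℝ := (2 + β * lam0 * R) / (2 + β * R) with hγ1def
  have hden : 0 < 2 + β * R := by positivity
  have hγ1pos : 0 < γ1 := by positivity
  have hγ1lt : γ1 < 1 := by
    rw [hγ1def, div_lt_one hden]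
    have : β * lam0 * R < β * R := by
      have : β * lam0 * R < β * 1 * R := by
        apply mul_lt_mul_of_pos_right _ hRpos
        exact mul_lt_mul_of_pos_left hlam0lt hβpos
      simpa using this
    linarith
  set γ : ℝ := max (max lam0 (1 - η / 2)) γ1 with hγdef
  have hγ1le : γ1 ≤ γ := le_max_right _ _
  have hlam0le : lam0 ≤ γ := le_trans (le_max_left _ _) (le_max_left _ _)
  have hηle : 1 - η / 2 ≤ γ := le_trans (le_max_right _ _) (le_max_left _ _)
  have hγpos : 0 < γ := lt_of_lt_of_le hγ1pos hγ1le
  have hγlt : γ < 1 := max_lt (max_lt hlam0lt (by linarith)) hγ1lt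
  have hlamle : lam ≤ γ := le_trans (by simp only [hlam0def]; linarith [div_nonneg (by linarith : (0:ℝ) ≤ 2*b) hRpos.le]) hlam0le
  -- the m-step kernels
  set P : ℝ → E → Measure E := fun u => mstep (Q u) m with hPdef
  have hPm : ∀ u, Measurable (P u) := fun u => st14_mstep_measurable _ (hQmeas u) m
  have hPprob : ∀ u x, IsProbabilityMeasure (P u x) :=
    fun u x => st14_mstep_prob _ (hQmeas u) (hQprob u) m x
  have hmstepprob : ∀ u j x, IsProbabilityMeasure (mstep (Q u) j x) :=
    fun u j x => st14_mstep_prob _ (hQmeas u) (hQprob u) j x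
  -- bridge: constant sequences
  have hconstseq : ∀ u, seqStep Q (List.ofFn (fun _ : Fin m => u)) = P u := by
    intro u
    funext x
    rw [List.ofFn_const, st14_seqStep_replicate]
  have hD : ∀ u ∈ Icc (0:ℝ) 1, ∀ x,
      ∫⁻ z, ENNReal.ofReal (V z) ∂(P u x) ≤ ENNReal.ofReal (lam * V x + b) := by
    intro u hu x
    have h := hdriftm u hu (fun _ => u) (fun i => ⟨hu, by simpa using hε.le⟩) x
    rwa [hconstseq u] at h
  have hMin : ∀ u ∈ Icc (0:ℝ) 1, ∀ x, V x ≤ R → ∀ s : Set E,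
      ENNReal.ofReal η * ν s ≤ P u x s := by
    intro u hu x hx s
    have h := hminor u hu (fun _ => u) (fun i => ⟨hu, by simpa using hε.le⟩) x hx s
    rwa [hconstseq u] at h
  -- one-step growth iterate
  have hK1 : ∀ u ∈ Icc (0:ℝ) 1, ∀ (j : ℕ) (x : E),
      ∫⁻ z, ENNReal.ofReal (V z) ∂(mstep (Q u) j x) ≤ ENNReal.ofReal (K ^ j * V x) := by
    intro u hu j
    induction j with
    | zero =>
        intro x
        show ∫⁻ z, ENNReal.ofReal (V z) ∂(Measure.dirac x) ≤ _
        rw [lintegral_dirac' x hVm']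
        exact ENNReal.ofReal_le_ofReal (by rw [pow_zero, one_mul])
    | succ j ih =>
        intro x
        show ∫⁻ z, ENNReal.ofReal (V z) ∂((Q u x).bind (mstep (Q u) j)) ≤ _
        rw [Measure.lintegral_bind (st14_mstep_measurable _ (hQmeas u) j).aemeasurable hVm'.aemeasurable]
        calc ∫⁻ y, (∫⁻ z, ENNReal.ofReal (V z) ∂(mstep (Q u) j y)) ∂(Q u x)
            ≤ ∫⁻ y, ENNReal.ofReal (K ^ j * V y) ∂(Q u x) := lintegral_mono fun y => ih y
          _ = ENNReal.ofReal (K ^ j) * ∫⁻ y, ENNReal.ofReal (V y) ∂(Q u x) := by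
              simp only [ENNReal.ofReal_mul (pow_nonneg (by linarith : (0:ℝ) ≤ K) j)]
              rw [lintegral_const_mul _ hVm']
          _ ≤ ENNReal.ofReal (K ^ j) * ENNReal.ofReal (K * V x) :=
              mul_le_mul_right (hdrift1 u hu x) _
          _ = ENNReal.ofReal (K ^ (j+1) * V x) := by
              rw [← ENNReal.ofReal_mul (pow_nonneg (by linarith : (0:ℝ) ≤ K) j)]
              congr 1
              ring
  have hfinm : ∀ u ∈ Icc (0:ℝ) 1, ∀ (j : ℕ) (x : E),
      ∫⁻ z, ENNReal.ofReal (V z) ∂(mstep (Q u) j x) < ∞ :=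
    fun u hu j x => lt_of_le_of_lt (hK1 u hu j x) ENNReal.ofReal_lt_top
  -- iterated m-step drift
  have hDk : ∀ u ∈ Icc (0:ℝ) 1, ∀ (k : ℕ) (x : E),
      ∫⁻ z, ENNReal.ofReal (V z) ∂(mstep (Q u) (k*m) x)
        ≤ ENNReal.ofReal (lam ^ k * V x + B) := by
    intro u hu k
    induction k with
    | zero =>
        intro x
        rw [Nat.zero_mul]
        show ∫⁻ z, ENNReal.ofReal (V z) ∂(Measure.dirac x) ≤ _
        rw [lintegral_dirac' x hVm']
        exact ENNReal.ofReal_le_ofReal (by rw [pow_zero, one_mul]; linarith [hBpos])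
    | succ k ih =>
        intro x
        have hsplit : (k+1)*m = k*m + m := by ring
        rw [hsplit, st14_mstep_add _ (hQmeas u) (k*m) m x,
          Measure.lintegral_bind (st14_mstep_measurable _ (hQmeas u) m).aemeasurable hVm'.aemeasurable]
        haveI := hmstepprob u (k*m) x
        calc ∫⁻ z, (∫⁻ w, ENNReal.ofReal (V w) ∂(mstep (Q u) m z)) ∂(mstep (Q u) (k*m) x)
            ≤ ∫⁻ z, ENNReal.ofReal (b + lam * V z) ∂(mstep (Q u) (k*m) x) :=
              lintegral_mono fun z =>
                le_trans (hD u hu z) (ENNReal.ofReal_le_ofReal (le_of_eq (by ring)))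
          _ = ENNReal.ofReal b + ENNReal.ofReal lam
                * ∫⁻ z, ENNReal.ofReal (V z) ∂(mstep (Q u) (k*m) x) :=
              st14_lintegral_affine _ V hVmeas hV0 b lam hb.le hlam.1.le
          _ ≤ ENNReal.ofReal b + ENNReal.ofReal lam * ENNReal.ofReal (lam ^ k * V x + B) :=
              add_le_add_right (mul_le_mul_right (ih x) _) _
          _ = ENNReal.ofReal (lam ^ (k+1) * V x + B) := by
              rw [← ENNReal.ofReal_mul hlam.1.le, ← ENNReal.ofReal_add hb.le
                (mul_nonneg hlam.1.le (add_nonneg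
                  (mul_nonneg (pow_nonneg hlam.1.le k) (hV0 x)) hBpos.le))]
              congr 1
              rw [hBdef]
              field_simp
              ring
  -- any invariant probability integrates V, with bound B
  have hinvV : ∀ u ∈ Icc (0:ℝ) 1, ∀ (μ : Measure E), IsProbabilityMeasure μ →
      μ.bind (Q u) = μ → ∫⁻ z, ENNReal.ofReal (V z) ∂μ ≤ ENNReal.ofReal B := by
    intro u hu μ hμp hinv
    haveI := hμp
    have hinvk : ∀ k, μ.bind (mstep (Q u) k) = μ :=
      st14_bind_mstep_invariant _ (hQmeas u) μ hinv
    have key : ∀ n : ℕ, ∫⁻ z, ENNReal.ofReal (V z) ⊓ (n:ℝ≥0∞) ∂μ ≤ ENNReal.ofReal B := by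
      intro n
      have hmeas_inf : Measurable fun z => ENNReal.ofReal (V z) ⊓ (n:ℝ≥0∞) :=
        hVm'.inf measurable_const
      have hle : ∀ k : ℕ, ∫⁻ z, ENNReal.ofReal (V z) ⊓ (n:ℝ≥0∞) ∂μ
          ≤ ∫⁻ x, ENNReal.ofReal (lam ^ k * V x + B) ⊓ (n:ℝ≥0∞) ∂μ := by
        intro k
        conv_lhs => rw [← hinvk (k*m)]
        rw [Measure.lintegral_bind (st14_mstep_measurable _ (hQmeas u) (k*m)).aemeasurable hmeas_inf.aemeasurable]
        refine lintegral_mono fun x => ?_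
        haveI := hmstepprob u (k*m) x
        refine le_inf ?_ ?_
        · exact le_trans (lintegral_mono fun z => inf_le_left) (hDk u hu k x)
        · refine le_trans (lintegral_mono fun z => inf_le_right) ?_
          rw [lintegral_const, measure_univ, mul_one]
      have htend : Tendsto (fun k : ℕ =>
            ∫⁻ x, ENNReal.ofReal (lam ^ k * V x + B) ⊓ (n:ℝ≥0∞) ∂μ)
          atTop (nhds (∫⁻ x, ENNReal.ofReal B ⊓ (n:ℝ≥0∞) ∂μ)) := by
        refine tendsto_lintegral_of_dominated_convergence (fun _ => (n:ℝ≥0∞))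
          (fun k => (ENNReal.measurable_ofReal.comp
            ((hVmeas.const_mul _).add_const B)).inf measurable_const)
          (fun k => Eventually.of_forall fun x => inf_le_right)
          (by rw [lintegral_const, measure_univ, mul_one]; exact ENNReal.natCast_ne_top n)
          (Eventually.of_forall fun x => ?_)
        have h1 : Tendsto (fun k : ℕ => lam ^ k * V x + B) atTop (nhds B) := by
          have h2 := (tendsto_pow_atTop_nhds_zero_of_lt_one hlam.1.le hlam.2).mul_const (V x)
          have h3 := h2.add_const B
          simpa using h3
        have h4 : Tendsto (fun k : ℕ => ENNReal.ofReal (lam ^ k * V x + B)) atTop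
            (nhds (ENNReal.ofReal B)) := (ENNReal.continuous_ofReal.tendsto B).comp h1
        exact h4.min tendsto_const_nhds
      have hfinal := ge_of_tendsto htend (Eventually.of_forall hle)
      refine hfinal.trans ?_
      refine le_trans (lintegral_mono fun x => inf_le_left) ?_
      rw [lintegral_const, measure_univ, mul_one]
    have hsup : ∫⁻ z, ENNReal.ofReal (V z) ∂μ
        = ⨆ n : ℕ, ∫⁻ z, ENNReal.ofReal (V z) ⊓ (n:ℝ≥0∞) ∂μ := by
      rw [← lintegral_iSup (f := fun n z => ENNReal.ofReal (V z) ⊓ (n:ℝ≥0∞)) (fun n => hVm'.inf measurable_const)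
        (fun i j hij z => inf_le_inf_left _ (Nat.cast_le.mpr hij))]
      congr 1
      funext z
      refine le_antisymm ?_ (iSup_le fun n => inf_le_left)
      obtain ⟨n, hn⟩ := ENNReal.exists_nat_gt (ENNReal.ofReal_ne_top)
      exact le_iSup_of_le n (le_inf le_rfl hn.le)
    rw [hsup]
    exact iSup_le key
  have hPfin : ∀ u ∈ Icc (0:ℝ) 1, ∀ x, ∫⁻ z, ENNReal.ofReal (V z) ∂(P u x) < ∞ :=
    fun u hu x => lt_of_le_of_lt (hD u hu x) ENNReal.ofReal_lt_top
  -- λ V x + b ≥ 1 always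
  have hone : ∀ u ∈ Icc (0:ℝ) 1, ∀ x, (1:ℝ) ≤ lam * V x + b := by
    intro u hu x
    haveI := hPprob u x
    have h1 : (1:ℝ≥0∞) ≤ ∫⁻ z, ENNReal.ofReal (V z) ∂(P u x) := by
      calc (1:ℝ≥0∞) = ∫⁻ _, 1 ∂(P u x) := by rw [lintegral_one, measure_univ]
        _ ≤ _ := lintegral_mono fun z => by
              rw [show (1:ℝ≥0∞) = ENNReal.ofReal 1 from ENNReal.ofReal_one.symm]
              exact ENNReal.ofReal_le_ofReal (hV1 z)
    exact ENNReal.one_le_ofReal.mp (le_trans h1 (hD u hu x))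
  -- a convenient integral bound
  have habs : ∀ (μ : Measure E), IsProbabilityMeasure μ → ∀ (f : E → ℝ) (a W : ℝ),
      0 ≤ a → 0 ≤ W → (∀ z, |f z| ≤ a + β * V z) →
      (∫⁻ z, ENNReal.ofReal (V z) ∂μ ≤ ENNReal.ofReal W) →
      |∫ z, f z ∂μ| ≤ a + β * W := by
    intro μ hμ f a W ha hW hb' hVW
    haveI := hμ
    refine st14_abs_integral_le μ f (fun z => a + β * V z) hb' (a + β * W) (by positivity) ?_
    rw [st14_lintegral_affine μ V hVmeas hV0 a β ha hβpos.le]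
    calc ENNReal.ofReal a + ENNReal.ofReal β * ∫⁻ z, ENNReal.ofReal (V z) ∂μ
        ≤ ENNReal.ofReal a + ENNReal.ofReal β * ENNReal.ofReal W :=
          add_le_add_right (mul_le_mul_right hVW _) _
      _ = ENNReal.ofReal (a + β * W) := by
          rw [← ENNReal.ofReal_mul hβpos.le,
            ← ENNReal.ofReal_add ha (mul_nonneg hβpos.le hW)]
  -- THE CONTRACTION
  have hcontract : ∀ u ∈ Icc (0:ℝ) 1, ∀ f : E → ℝ, Measurable f →
      (∀ z, |f z| ≤ 1 + β * V z) → ∀ x y,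
      |(∫ z, f z ∂(P u x)) - ∫ z, f z ∂(P u y)| ≤ γ * (2 + β * V x + β * V y) := by
    intro u hu f hfm hfb x y
    have hVxy : (0:ℝ) ≤ V x + V y := by linarith [hV1 x, hV1 y]
    by_cases hcase : R ≤ V x + V y
    · -- far from the small set : use the drift
      have hx := habs (P u x) (hPprob u x) f 1 (lam * V x + b) zero_le_one
        (by linarith [hone u hu x]) hfb (hD u hu x)
      have hy := habs (P u y) (hPprob u y) f 1 (lam * V y + b) zero_le_one
        (by linarith [hone u hu y]) hfb (hD u hu y)
      have h3 : |(∫ z, f z ∂(P u x)) - ∫ z, f z ∂(P u y)|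
          ≤ |∫ z, f z ∂(P u x)| + |∫ z, f z ∂(P u y)| := st14_abs_sub_le' _ _
      set Sxy : ℝ := V x + V y with hSxy
      have h2b : 2 * b ≤ (2 * b / R) * Sxy := by
        have h4 := mul_le_mul_of_nonneg_left hcase (by positivity : (0:ℝ) ≤ 2 * b / R)
        calc 2 * b = (2 * b / R) * R := by field_simp
          _ ≤ _ := h4
      have hLHS : |(∫ z, f z ∂(P u x)) - ∫ z, f z ∂(P u y)| ≤ 2 + β * (lam0 * Sxy) := by
        have h5 : lam * Sxy + 2 * b ≤ lam0 * Sxy := by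
          rw [hlam0def]
          have hexp : (lam + 2 * b / R) * Sxy = lam * Sxy + (2 * b / R) * Sxy := by ring
          linarith only [h2b, hexp.le, hexp.ge]
        have h6 := mul_le_mul_of_nonneg_left h5 hβpos.le
        have hexp2 : β * (lam * Sxy + 2 * b) = β * (lam * (V x + V y)) + β * (2 * b) := by
          rw [hSxy]; ring
        have hexp3 : β * (lam * V x + b) + β * (lam * V y + b)
            = β * (lam * (V x + V y)) + β * (2 * b) := by ring
        linarith only [hx, hy, h3, h6, hexp2.le, hexp2.ge, hexp3.le, hexp3.ge]
      have hkey1 : (2 + β * (lam0 * Sxy)) * (2 + β * R) ≤ (2 + β * lam0 * R) * (2 + β * Sxy) := by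
        have hSR : (0:ℝ) ≤ Sxy - R := by linarith only [hcase]
        have hprod : (0:ℝ) ≤ β * (Sxy - R) * (1 - lam0) :=
          mul_nonneg (mul_nonneg hβpos.le hSR) (sub_nonneg.mpr hlam0lt.le)
        have hring : (2 + β * lam0 * R) * (2 + β * Sxy) - (2 + β * (lam0 * Sxy)) * (2 + β * R)
            = 2 * (β * (Sxy - R) * (1 - lam0)) := by ring
        linarith only [hprod, hring.le, hring.ge]
      have hkey2 : 2 + β * (lam0 * Sxy) ≤ γ1 * (2 + β * Sxy) := by
        rw [hγ1def, div_mul_eq_mul_div (2 + β * lam0 * R) (2 + β * R) (2 + β * Sxy),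
          le_div_iff₀ hden]
        exact hkey1
      have hkey3 : γ1 * (2 + β * Sxy) ≤ γ * (2 + β * Sxy) :=
        mul_le_mul_of_nonneg_right hγ1le (by positivity)
      have hfin : γ * (2 + β * Sxy) = γ * (2 + β * V x + β * V y) := by
        rw [hSxy]; ring
      linarith only [hLHS, hkey2, hkey3, hfin.le, hfin.ge]
    · -- inside the small set : use the minorization
      push_neg at hcase
      have hxR : V x ≤ R := by linarith [hV1 y]
      have hyR : V y ≤ R := by linarith [hV1 x]
      have hηle1 : η ≤ 1 := by
        have h5 := hMin u hu x hxR univ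
        haveI := hν
        haveI := hPprob u x
        rw [measure_univ, measure_univ, mul_one] at h5
        exact ENNReal.ofReal_le_one.mp h5
      have key : ∀ w, V w ≤ R →
          |(∫ z, f z ∂(P u w)) - η * ∫ z, f z ∂ν|
            ≤ (1 - η) + β * (lam * V w + b - η) := by
        intro w hwR
        haveI := hPprob u w
        haveI := hν
        set νη : Measure E := ENNReal.ofReal η • ν with hνη
        haveI : IsFiniteMeasure νη := by
          constructor
          rw [hνη, Measure.smul_apply, smul_eq_mul, measure_univ, mul_one]
          exact ENNReal.ofReal_lt_top
        have hlew : νη ≤ P u w := by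
          refine Measure.le_iff.mpr fun s _ => ?_
          rw [hνη, Measure.smul_apply, smul_eq_mul]
          exact hMin u hu w hwR s
        set Δ : Measure E := P u w - νη with hΔ
        have hkeyw : Δ + νη = P u w := Measure.sub_add_cancel_of_le hlew
        have haff := st14_lintegral_affine (P u w) V hVmeas hV0 1 β zero_le_one hβpos.le
        have hg1 : ∫⁻ z, ENNReal.ofReal (1 + β * V z) ∂(P u w)
            ≤ ENNReal.ofReal (1 + β * (lam * V w + b)) := by
          rw [haff]
          calc ENNReal.ofReal 1 + ENNReal.ofReal β * ∫⁻ z, ENNReal.ofReal (V z) ∂(P u w)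
              ≤ ENNReal.ofReal 1 + ENNReal.ofReal β * ENNReal.ofReal (lam * V w + b) :=
                add_le_add_right (mul_le_mul_right (hD u hu w) _) _
            _ = ENNReal.ofReal (1 + β * (lam * V w + b)) := by
                rw [← ENNReal.ofReal_mul hβpos.le, ← ENNReal.ofReal_add zero_le_one
                  (mul_nonneg hβpos.le (by linarith [hone u hu w]))]
        have hgfinw : ∫⁻ z, ENNReal.ofReal (1 + β * V z) ∂(P u w) < ∞ :=
          lt_of_le_of_lt hg1 ENNReal.ofReal_lt_top
        have hgΔ : ∫⁻ z, ENNReal.ofReal (1 + β * V z) ∂Δ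
            ≤ ∫⁻ z, ENNReal.ofReal (1 + β * V z) ∂(P u w) :=
          lintegral_mono' Measure.sub_le le_rfl
        have hgν : ∫⁻ z, ENNReal.ofReal (1 + β * V z) ∂νη
            ≤ ∫⁻ z, ENNReal.ofReal (1 + β * V z) ∂(P u w) :=
          lintegral_mono' hlew le_rfl
        have hintΔ : Integrable f Δ :=
          st14_integrable _ f _ hfm hfb (lt_of_le_of_lt hgΔ hgfinw)
        have hintν : Integrable f νη :=
          st14_integrable _ f _ hfm hfb (lt_of_le_of_lt hgν hgfinw)
        have hsplitint : ∫ z, f z ∂(P u w) = (∫ z, f z ∂Δ) + η * ∫ z, f z ∂ν := by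
          conv_lhs => rw [← hkeyw]
          rw [integral_add_measure hintΔ hintν, hνη, integral_smul_measure,
            ENNReal.toReal_ofReal hη.le, smul_eq_mul]
        have hcancel : (∫⁻ z, ENNReal.ofReal (1 + β * V z) ∂Δ)
            + ∫⁻ z, ENNReal.ofReal (1 + β * V z) ∂νη
            = ∫⁻ z, ENNReal.ofReal (1 + β * V z) ∂(P u w) := by
          conv_rhs => rw [← hkeyw]
          rw [lintegral_add_measure]
        have hνlow : ENNReal.ofReal (η * (1 + β))
            ≤ ∫⁻ z, ENNReal.ofReal (1 + β * V z) ∂νη := by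
          rw [hνη, lintegral_smul_measure]
          have h5 : ENNReal.ofReal (1 + β) ≤ ∫⁻ z, ENNReal.ofReal (1 + β * V z) ∂ν := by
            calc ENNReal.ofReal (1 + β) = ∫⁻ _, ENNReal.ofReal (1 + β) ∂ν := by
                  rw [lintegral_const, measure_univ, mul_one]
              _ ≤ _ := lintegral_mono fun z => ENNReal.ofReal_le_ofReal (by
                  have h8 := mul_le_mul_of_nonneg_left (hV1 z) hβpos.le
                  linarith only [h8])
          calc ENNReal.ofReal (η * (1 + β))
              = ENNReal.ofReal η * ENNReal.ofReal (1 + β) := ENNReal.ofReal_mul hη.le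
            _ ≤ _ := mul_le_mul_right h5 _
        have hc1 : (0:ℝ) ≤ (1 - η) + β * (lam * V w + b - η) := by
          have h6 : (0:ℝ) ≤ lam * V w + b - η := by linarith [hone u hu w]
          have h7 := mul_nonneg hβpos.le h6
          linarith only [h7, hηle1]
        have hΔbound : ∫⁻ z, ENNReal.ofReal (1 + β * V z) ∂Δ
            ≤ ENNReal.ofReal ((1 - η) + β * (lam * V w + b - η)) := by
          have hne : ∫⁻ z, ENNReal.ofReal (1 + β * V z) ∂νη ≠ ∞ :=
            (lt_of_le_of_lt hgν hgfinw).ne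
          rw [← ENNReal.add_le_add_iff_right hne, hcancel]
          calc ∫⁻ z, ENNReal.ofReal (1 + β * V z) ∂(P u w)
              ≤ ENNReal.ofReal (1 + β * (lam * V w + b)) := hg1
            _ = ENNReal.ofReal ((1 - η) + β * (lam * V w + b - η))
                + ENNReal.ofReal (η * (1 + β)) := by
                rw [← ENNReal.ofReal_add hc1 (by positivity)]
                congr 1
                ring
            _ ≤ _ := add_le_add_right hνlow _
        have := st14_abs_integral_le Δ f (fun z => 1 + β * V z) hfb _ hc1 hΔbound
        rw [hsplitint]
        calc |(∫ z, f z ∂Δ) + η * ∫ z, f z ∂ν - η * ∫ z, f z ∂ν| = |∫ z, f z ∂Δ| := by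
              congr 1; ring
          _ ≤ _ := this
      have keyx := key x hxR
      have keyy := key y hyR
      have h7 : |(∫ z, f z ∂(P u x)) - ∫ z, f z ∂(P u y)|
          ≤ ((1 - η) + β * (lam * V x + b - η)) + ((1 - η) + β * (lam * V y + b - η)) := by
        calc |(∫ z, f z ∂(P u x)) - ∫ z, f z ∂(P u y)|
            = |((∫ z, f z ∂(P u x)) - η * ∫ z, f z ∂ν)
                - ((∫ z, f z ∂(P u y)) - η * ∫ z, f z ∂ν)| := by congr 1; ring
          _ ≤ |(∫ z, f z ∂(P u x)) - η * ∫ z, f z ∂ν|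
                + |(∫ z, f z ∂(P u y)) - η * ∫ z, f z ∂ν| := st14_abs_sub_le' _ _
          _ ≤ _ := add_le_add keyx keyy
      have hβb : β * b = η / 2 := by rw [hβdef]; field_simp
      have h2γ : 2 - η ≤ 2 * γ := by linarith only [hηle]
      have hβS : (0:ℝ) ≤ β * (V x + V y) := mul_nonneg hβpos.le hVxy
      have hγβ : lam * (β * (V x + V y)) ≤ γ * (β * (V x + V y)) :=
        mul_le_mul_of_nonneg_right hlamle hβS
      have hβη : (0:ℝ) ≤ β * η := mul_nonneg hβpos.le hη.le
      have hexp : β * (lam * V x + b - η) + β * (lam * V y + b - η)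
          = lam * (β * (V x + V y)) + 2 * (β * b) - 2 * (β * η) := by ring
      have hrhs : γ * (2 + β * V x + β * V y) = 2 * γ + γ * (β * (V x + V y)) := by ring
      linarith only [h7, hexp.le, hexp.ge, hrhs.le, hrhs.ge, hβb.le, hβb.ge, h2γ, hγβ, hβη]
  -- contraction for functions with bounded oscillation
  have hcontract' : ∀ u ∈ Icc (0:ℝ) 1, ∀ (c : ℝ), 0 < c → ∀ f : E → ℝ, Measurable f →
      (∀ z w, |f z - f w| ≤ c * (2 + β * V z + β * V w)) → ∀ x y,
      |(∫ z, f z ∂(P u x)) - ∫ z, f z ∂(P u y)| ≤ c * γ * (2 + β * V x + β * V y) := by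
    intro u hu c hc f hfm hfb x y
    obtain ⟨z0⟩ := hNE
    have hSne : (range (fun z => f z - c * (1 + β * V z))).Nonempty := ⟨_, mem_range_self z0⟩
    have hSbdd : BddAbove (range (fun z => f z - c * (1 + β * V z))) := by
      refine ⟨f z0 + c * (1 + β * V z0), ?_⟩
      rintro t ⟨z, rfl⟩
      have h1 := (abs_le.mp (hfb z z0)).2
      have hexp : c * (2 + β * V z + β * V z0) = c * (1 + β * V z) + c * (1 + β * V z0) := by
        ring
      simp only
      linarith only [h1, hexp.le]
    set r : ℝ := sSup (range (fun z => f z - c * (1 + β * V z))) with hr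
    have hub : ∀ z, f z - c * (1 + β * V z) ≤ r := fun z => le_csSup hSbdd (mem_range_self z)
    have hlb : ∀ z, r ≤ f z + c * (1 + β * V z) := by
      intro z
      refine csSup_le hSne ?_
      rintro t ⟨w, rfl⟩
      have h1 := (abs_le.mp (hfb w z)).2
      have hexp : c * (2 + β * V w + β * V z) = c * (1 + β * V w) + c * (1 + β * V z) := by
        ring
      simp only
      linarith only [h1, hexp.le]
    have hf'm : Measurable (fun z => (f z - r) / c) := (hfm.sub_const r).div_const c
    have hf'b : ∀ z, |(f z - r) / c| ≤ 1 + β * V z := by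
      intro z
      rw [abs_div, abs_of_pos hc, div_le_iff₀ hc, mul_comm]
      exact abs_le.mpr ⟨by linarith only [hlb z], by linarith only [hub z]⟩
    have hcon := hcontract u hu _ hf'm hf'b x y
    have hfint : ∀ w : E, ∫ z, (f z - r) / c ∂(P u w) = ((∫ z, f z ∂(P u w)) - r) / c := by
      intro w
      haveI := hPprob u w
      have hint : Integrable f (P u w) := by
        refine st14_integrable _ f (fun z => (c + |r|) + (c * β) * V z) hfm (fun z => ?_) ?_
        · have h1 := (abs_le.mp (hfb z z)).2
          have h2 := hub z
          have h3 := hlb z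
          have h4 : |f z| ≤ |r| + c * (1 + β * V z) := by
            refine abs_le.mpr ⟨?_, ?_⟩
            · have := neg_abs_le r; linarith only [h3, this]
            · have := le_abs_self r; linarith only [h2, this]
          calc |f z| ≤ |r| + c * (1 + β * V z) := h4
            _ = (c + |r|) + (c * β) * V z := by ring
        · rw [st14_lintegral_affine (P u w) V hVmeas hV0 _ _
            (by positivity) (by positivity)]
          exact ENNReal.add_lt_top.mpr ⟨ENNReal.ofReal_lt_top,
            ENNReal.mul_lt_top ENNReal.ofReal_lt_top (hPfin u hu w)⟩
      rw [integral_div, integral_sub hint (integrable_const r), integral_const,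
        probReal_univ, one_smul]
    rw [hfint x, hfint y] at hcon
    have h9 : ((∫ z, f z ∂(P u x)) - r) / c - ((∫ z, f z ∂(P u y)) - r) / c
        = ((∫ z, f z ∂(P u x)) - (∫ z, f z ∂(P u y))) / c := by ring
    rw [h9, abs_div, abs_of_pos hc, div_le_iff₀ hc] at hcon
    exact le_of_le_of_eq hcon (by ring)
  -- affine integrability facts
  have hfinaff : ∀ u ∈ Icc (0:ℝ) 1, ∀ (a0 d0 : ℝ), 0 ≤ a0 → 0 ≤ d0 → ∀ (j : ℕ) (x : E),
      ∫⁻ z, ENNReal.ofReal (a0 + d0 * V z) ∂(mstep (Q u) j x) < ∞ := by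
    intro u hu a0 d0 ha0 hd0 j x
    haveI := hmstepprob u j x
    rw [st14_lintegral_affine _ V hVmeas hV0 _ _ ha0 hd0]
    exact ENNReal.add_lt_top.mpr ⟨ENNReal.ofReal_lt_top,
      ENNReal.mul_lt_top ENNReal.ofReal_lt_top (hfinm u hu j x)⟩
  have hfinaffπ : ∀ u ∈ Icc (0:ℝ) 1, ∀ (a0 d0 : ℝ), 0 ≤ a0 → 0 ≤ d0 →
      ∫⁻ z, ENNReal.ofReal (a0 + d0 * V z) ∂(π u) < ∞ := by
    intro u hu a0 d0 ha0 hd0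
    haveI := (hπ u hu).1
    rw [st14_lintegral_affine _ V hVmeas hV0 _ _ ha0 hd0]
    refine ENNReal.add_lt_top.mpr ⟨ENNReal.ofReal_lt_top, ENNReal.mul_lt_top
      ENNReal.ofReal_lt_top (lt_of_le_of_lt (hinvV u hu (π u) (hπ u hu).1 (hπ u hu).2)
        ENNReal.ofReal_lt_top)⟩
  -- affine bound from an oscillation bound
  have hgbd : ∀ (c : ℝ), 0 < c → ∀ f : E → ℝ,
      (∀ z w, |f z - f w| ≤ c * (2 + β * V z + β * V w)) →
      ∃ a0 d0 : ℝ, 0 ≤ a0 ∧ 0 ≤ d0 ∧ ∀ z, |f z| ≤ a0 + d0 * V z := by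
    intro c hc f hfb
    obtain ⟨z0⟩ := hNE
    refine ⟨|f z0| + 2*c + c*β*V z0, c*β, ?_, by positivity, fun z => ?_⟩
    · have := abs_nonneg (f z0)
      have h1 : 0 ≤ c*β*V z0 := mul_nonneg (by positivity) (hV0 z0)
      linarith
    · have h1 : |f z| ≤ |f z - f z0| + |f z0| := by
        calc |f z| = |(f z - f z0) + f z0| := by ring_nf
          _ ≤ |f z - f z0| + |f z0| := abs_add_le _ _
      have h2 := hfb z z0
      have h3 : c * (2 + β * V z + β * V z0)
          = (2*c + c*β*V z0) + c*β*V z := by ring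
      linarith only [h1, h2, h3.le]
  -- measurability of z ↦ ∫ f d(mstep j z)
  have hgmeas : ∀ (u : ℝ) (j : ℕ), u ∈ Icc (0:ℝ) 1 → ∀ (f : E → ℝ) (a0 d0 : ℝ),
      Measurable f → 0 ≤ a0 → 0 ≤ d0 → (∀ z, |f z| ≤ a0 + d0 * V z) →
      Measurable (fun z => ∫ w, f w ∂(mstep (Q u) j z)) := by
    intro u j hu f a0 d0 hfm ha0 hd0 hbd
    have hrepg : (fun z => ∫ w, f w ∂(mstep (Q u) j z))
        = fun z => (∫⁻ w, ENNReal.ofReal (f w) ∂(mstep (Q u) j z)).toReal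
          - (∫⁻ w, ENNReal.ofReal (-f w) ∂(mstep (Q u) j z)).toReal := by
      funext z
      exact integral_eq_lintegral_pos_part_sub_lintegral_neg_part
        (st14_integrable _ f _ hfm hbd (hfinaff u hu a0 d0 ha0 hd0 j z))
    rw [hrepg]
    exact (((Measure.measurable_lintegral (ENNReal.measurable_ofReal.comp hfm)).comp
        (st14_mstep_measurable _ (hQmeas u) _)).ennreal_toReal).sub
      (((Measure.measurable_lintegral (ENNReal.measurable_ofReal.comp hfm.neg)).comp
        (st14_mstep_measurable _ (hQmeas u) _)).ennreal_toReal)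
  -- iterated contraction
  have hiter : ∀ u ∈ Icc (0:ℝ) 1, ∀ (k : ℕ) (c : ℝ), 0 < c → ∀ f : E → ℝ, Measurable f →
      (∀ z w, |f z - f w| ≤ c * (2 + β * V z + β * V w)) → ∀ x y,
      |(∫ z, f z ∂(mstep (Q u) (k*m) x)) - ∫ z, f z ∂(mstep (Q u) (k*m) y)|
        ≤ c * γ ^ k * (2 + β * V x + β * V y) := by
    intro u hu k
    induction k with
    | zero =>
        intro c hc f hfm hfb x y
        rw [Nat.zero_mul]
        show |(∫ z, f z ∂(Measure.dirac x)) - ∫ z, f z ∂(Measure.dirac y)| ≤ _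
        rw [integral_dirac' f x hfm.stronglyMeasurable,
          integral_dirac' f y hfm.stronglyMeasurable]
        calc |f x - f y| ≤ c * (2 + β * V x + β * V y) := hfb x y
          _ = c * γ ^ 0 * (2 + β * V x + β * V y) := by rw [pow_zero]; ring
    | succ k ih =>
        intro c hc f hfm hfb x y
        obtain ⟨a0, d0, ha0, hd0, hbd⟩ := hgbd c hc f hfb
        have hgbdm : Measurable (fun z => a0 + d0 * V z) :=
          (hVmeas.const_mul d0).const_add a0
        have hrep : ∀ w : E, ∫ z, f z ∂(mstep (Q u) ((k+1)*m) w)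
            = ∫ z, (∫ w', f w' ∂(mstep (Q u) (k*m) z)) ∂(P u w) := by
          intro w
          have hsplit : (k+1)*m = m + k*m := by ring
          rw [hsplit, st14_mstep_add _ (hQmeas u) m (k*m) w]
          refine st14_integral_bind (mstep (Q u) m w) (mstep (Q u) (k*m))
            (st14_mstep_measurable _ (hQmeas u) _) f (fun z => a0 + d0 * V z)
            hfm hgbdm hbd (fun x' => hfinaff u hu a0 d0 ha0 hd0 _ x') ?_
          rw [← st14_mstep_add _ (hQmeas u) m (k*m) w]
          exact hfinaff u hu a0 d0 ha0 hd0 _ w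
        have hgm : Measurable (fun z => ∫ w', f w' ∂(mstep (Q u) (k*m) z)) :=
          hgmeas u (k*m) hu f a0 d0 hfm ha0 hd0 hbd
        have hgosc := ih c hc f hfm hfb
        have hcon := hcontract' u hu (c * γ ^ k) (by positivity) _ hgm hgosc x y
        rw [← hrep x, ← hrep y] at hcon
        calc |(∫ z, f z ∂(mstep (Q u) ((k+1)*m) x)) - ∫ z, f z ∂(mstep (Q u) ((k+1)*m) y)|
            ≤ c * γ ^ k * γ * (2 + β * V x + β * V y) := hcon
          _ = c * γ ^ (k+1) * (2 + β * V x + β * V y) := by rw [pow_succ]; ring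
  -- comparison with the invariant measure
  have hπcomp : ∀ u ∈ Icc (0:ℝ) 1, ∀ (k : ℕ) (c : ℝ), 0 < c → ∀ f : E → ℝ, Measurable f →
      (∀ z w, |f z - f w| ≤ c * (2 + β * V z + β * V w)) → ∀ x,
      |(∫ z, f z ∂(mstep (Q u) (k*m) x)) - ∫ z, f z ∂(π u)|
        ≤ c * γ ^ k * (2 + β * V x + β * B) := by
    intro u hu k c hc f hfm hfb x
    haveI := (hπ u hu).1
    obtain ⟨a0, d0, ha0, hd0, hbd⟩ := hgbd c hc f hfb
    have hgbdm : Measurable (fun z => a0 + d0 * V z) := (hVmeas.const_mul d0).const_add a0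
    have hπinv : (π u).bind (mstep (Q u) (k*m)) = π u :=
      st14_bind_mstep_invariant _ (hQmeas u) _ (hπ u hu).2 _
    set g : E → ℝ := fun z => ∫ w, f w ∂(mstep (Q u) (k*m) z) with hgdef
    have hgm : Measurable g := hgmeas u (k*m) hu f a0 d0 hfm ha0 hd0 hbd
    have hexch : ∫ z, f z ∂(π u) = ∫ z, g z ∂(π u) := by
      conv_lhs => rw [← hπinv]
      refine st14_integral_bind (π u) (mstep (Q u) (k*m))
        (st14_mstep_measurable _ (hQmeas u) _) f (fun z => a0 + d0 * V z)
        hfm hgbdm hbd (fun x' => hfinaff u hu a0 d0 ha0 hd0 _ x') ?_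
      rw [hπinv]
      exact hfinaffπ u hu a0 d0 ha0 hd0
    have hosc : ∀ z, |g x - g z| ≤ c * γ ^ k * (2 + β * V x + β * V z) :=
      fun z => hiter u hu k c hc f hfm hfb x z
    have hgint : Integrable g (π u) := by
      refine st14_integrable _ g
        (fun z => (|g x| + c * γ ^ k * (2 + β * V x)) + (c * γ ^ k * β) * V z) hgm
        (fun z => ?_) ?_
      · have h1 : |g z| ≤ |g z - g x| + |g x| := by
          calc |g z| = |(g z - g x) + g x| := by ring_nf
            _ ≤ _ := abs_add_le _ _
        have h2 := hosc z
        rw [abs_sub_comm] at h2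
        have h3 : c * γ ^ k * (2 + β * V x + β * V z)
            = c * γ ^ k * (2 + β * V x) + (c * γ ^ k * β) * V z := by ring
        show |g z| ≤ (|g x| + c * γ ^ k * (2 + β * V x)) + (c * γ ^ k * β) * V z
        linarith only [h1, h2, h3.le]
      · refine hfinaffπ u hu _ _ ?_ (by positivity)
        have := abs_nonneg (g x)
        have h4 : (0:ℝ) ≤ c * γ ^ k * (2 + β * V x) := by
          have h5 : (0:ℝ) ≤ 2 + β * V x := by
            have := mul_nonneg hβpos.le (hV0 x); linarith
          positivity
        linarith
    have hdiff : ∫ z, (g x - g z) ∂(π u) = g x - ∫ z, g z ∂(π u) := by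
      rw [integral_sub (integrable_const (g x)) hgint, integral_const,
        probReal_univ, one_smul]
    have hbound : |∫ z, (g x - g z) ∂(π u)| ≤ c * γ ^ k * (2 + β * V x + β * B) := by
      refine st14_abs_integral_le (π u) _
        (fun z => (c * γ ^ k * (2 + β * V x)) + (c * γ ^ k * β) * V z)
        (fun z => le_of_le_of_eq (hosc z) (by ring)) _ ?_ ?_
      · have h5 : (0:ℝ) ≤ 2 + β * V x + β * B := by
          have := mul_nonneg hβpos.le (hV0 x)
          have := mul_nonneg hβpos.le hBpos.le
          linarith
        positivity
      · rw [st14_lintegral_affine _ V hVmeas hV0 _ _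
          (by have := mul_nonneg hβpos.le (hV0 x); positivity) (by positivity)]
        calc ENNReal.ofReal (c * γ ^ k * (2 + β * V x))
              + ENNReal.ofReal (c * γ ^ k * β) * ∫⁻ z, ENNReal.ofReal (V z) ∂(π u)
            ≤ ENNReal.ofReal (c * γ ^ k * (2 + β * V x))
              + ENNReal.ofReal (c * γ ^ k * β) * ENNReal.ofReal B :=
              add_le_add_right (mul_le_mul_right (hinvV u hu (π u) (hπ u hu).1 (hπ u hu).2) _) _
          _ = ENNReal.ofReal (c * γ ^ k * (2 + β * V x + β * B)) := by
              rw [← ENNReal.ofReal_mul (by positivity),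
                ← ENNReal.ofReal_add (by have := mul_nonneg hβpos.le (hV0 x); positivity)
                  (by positivity)]
              congr 1
              ring
    rw [hexch, ← hdiff]
    exact hbound
  -- geometric rate
  have hmpos : 0 < (m:ℝ) := by exact_mod_cast hm
  set ρ : ℝ := γ ^ ((1:ℝ)/(m:ℝ)) with hρdef
  have hρpos : 0 < ρ := Real.rpow_pos_of_pos hγpos _
  have hρlt : ρ < 1 := Real.rpow_lt_one hγpos.le hγlt (by positivity)
  have hρm : ρ ^ m = γ := by
    rw [hρdef, ← Real.rpow_natCast (γ ^ ((1:ℝ)/(m:ℝ))) m, ← Real.rpow_mul hγpos.le]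
    rw [one_div_mul_eq_div, div_self hmpos.ne', Real.rpow_one]
  set c0 : ℝ := 1/β with hc0def
  have hc0pos : 0 < c0 := by positivity
  set C1 : ℝ := c0 * (2 + β*B + β*K^m) with hC1def
  have hC1pos : 0 < C1 := by
    have h1 : (0:ℝ) < 2 + β*B + β*K^m := by
      have := mul_nonneg hβpos.le hBpos.le
      have h2 : (0:ℝ) ≤ β * K^m := mul_nonneg hβpos.le (pow_nonneg (by linarith) m)
      linarith
    positivity
  set CC : ℝ := C1/γ with hCCdef
  have hCCpos : 0 < CC := by positivity
  -- the main estimate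
  have hmain : ∀ u ∈ Icc (0:ℝ) 1, ∀ (x : E) (j : ℕ), ∀ f : E → ℝ, Measurable f →
      (∀ z, |f z| ≤ V z) →
      |(∫ z, f z ∂(mstep (Q u) j x)) - ∫ z, f z ∂(π u)| ≤ CC * V x * ρ ^ j := by
    intro u hu x j f hfm hfb
    haveI := (hπ u hu).1
    set k := j / m with hkdef
    set r := j % m with hrdef
    have hrlt : r < m := Nat.mod_lt _ (by omega)
    have hj : j = r + k*m := by
      rw [hkdef, hrdef]
      exact (Nat.mod_add_div' j m).symm
    have hosc : ∀ z w, |f z - f w| ≤ c0 * (2 + β * V z + β * V w) := by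
      intro z w
      have h1 : |f z - f w| ≤ V z + V w := by
        have := st14_abs_sub_le' (f z) (f w)
        have hz := hfb z; have hw := hfb w
        linarith
      have h2 : β * (V z + V w) ≤ 2 + β * V z + β * V w := by
        have h3 : β * (V z + V w) = β * V z + β * V w := by ring
        linarith [h3.le]
      calc |f z - f w| ≤ V z + V w := h1
        _ = c0 * (β * (V z + V w)) := by rw [hc0def]; field_simp
        _ ≤ c0 * (2 + β * V z + β * V w) := by
            exact mul_le_mul_of_nonneg_left h2 hc0pos.le
    have hπb : ∀ z, |(∫ w, f w ∂(mstep (Q u) (k*m) z)) - ∫ w, f w ∂(π u)|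
        ≤ c0 * γ ^ k * (2 + β * V z + β * B) :=
      fun z => hπcomp u hu k c0 hc0pos f hfm hosc z
    set g : E → ℝ := fun z => ∫ w, f w ∂(mstep (Q u) (k*m) z) with hgdef
    have hgm : Measurable g := hgmeas u (k*m) hu f 0 1 hfm le_rfl zero_le_one
      (fun z => by simpa using hfb z)
    have hexch2 : ∫ z, f z ∂(mstep (Q u) j x) = ∫ z, g z ∂(mstep (Q u) r x) := by
      rw [hj, st14_mstep_add _ (hQmeas u) r (k*m) x]
      refine st14_integral_bind (mstep (Q u) r x) (mstep (Q u) (k*m))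
        (st14_mstep_measurable _ (hQmeas u) _) f (fun z => 0 + 1 * V z)
        hfm ((hVmeas.const_mul 1).const_add 0) (fun z => by simpa using hfb z)
        (fun x' => hfinaff u hu 0 1 le_rfl zero_le_one _ x') ?_
      rw [← st14_mstep_add _ (hQmeas u) r (k*m) x]
      exact hfinaff u hu 0 1 le_rfl zero_le_one _ x
    set Iπ : ℝ := ∫ w, f w ∂(π u) with hIπ
    have hgint2 : Integrable g (mstep (Q u) r x) := by
      refine st14_integrable _ g
        (fun z => (|Iπ| + c0 * γ ^ k * (2 + β * B)) + (c0 * γ ^ k * β) * V z) hgm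
        (fun z => ?_) ?_
      · have h1 : |g z| ≤ |g z - Iπ| + |Iπ| := by
          calc |g z| = |(g z - Iπ) + Iπ| := by ring_nf
            _ ≤ _ := abs_add_le _ _
        have h2 := hπb z
        have h3 : c0 * γ ^ k * (2 + β * V z + β * B)
            = c0 * γ ^ k * (2 + β * B) + (c0 * γ ^ k * β) * V z := by ring
        show |g z| ≤ (|Iπ| + c0 * γ ^ k * (2 + β * B)) + (c0 * γ ^ k * β) * V z
        linarith only [h1, h2, h3.le]
      · refine hfinaff u hu _ _ ?_ (by positivity) r x
        have h4 := abs_nonneg Iπ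
        have h5 : (0:ℝ) ≤ c0 * γ ^ k * (2 + β * B) := by
          have := mul_nonneg hβpos.le hBpos.le
          positivity
        linarith
    have hdiff2 : ∫ z, (g z - Iπ) ∂(mstep (Q u) r x)
        = (∫ z, g z ∂(mstep (Q u) r x)) - Iπ := by
      haveI := hmstepprob u r x
      rw [integral_sub hgint2 (integrable_const Iπ), integral_const,
        probReal_univ, one_smul]
    have hbound2 : |∫ z, (g z - Iπ) ∂(mstep (Q u) r x)|
        ≤ c0 * γ ^ k * (2 + β * B) + (c0 * γ ^ k * β) * (K ^ r * V x) := by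
      refine st14_abs_integral_le (mstep (Q u) r x) _
        (fun z => (c0 * γ ^ k * (2 + β * B)) + (c0 * γ ^ k * β) * V z)
        (fun z => le_of_le_of_eq (hπb z) (by ring)) _ ?_ ?_
      · have h5 : (0:ℝ) ≤ c0 * γ ^ k * (2 + β * B) := by
          have := mul_nonneg hβpos.le hBpos.le
          positivity
        have h6 : (0:ℝ) ≤ (c0 * γ ^ k * β) * (K ^ r * V x) := by
          have h7 : (0:ℝ) ≤ K ^ r * V x :=
            mul_nonneg (pow_nonneg (by linarith) r) (hV0 x)
          positivity
        linarith
      · haveI := hmstepprob u r x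
        rw [st14_lintegral_affine _ V hVmeas hV0 _ _
          (by have := mul_nonneg hβpos.le hBpos.le; positivity) (by positivity)]
        calc ENNReal.ofReal (c0 * γ ^ k * (2 + β * B))
              + ENNReal.ofReal (c0 * γ ^ k * β) * ∫⁻ z, ENNReal.ofReal (V z) ∂(mstep (Q u) r x)
            ≤ ENNReal.ofReal (c0 * γ ^ k * (2 + β * B))
              + ENNReal.ofReal (c0 * γ ^ k * β) * ENNReal.ofReal (K ^ r * V x) :=
              add_le_add_right (mul_le_mul_right (hK1 u hu r x) _) _
          _ = _ := by
              rw [← ENNReal.ofReal_mul (by positivity),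
                ← ENNReal.ofReal_add (by have := mul_nonneg hβpos.le hBpos.le; positivity)
                  (by have h7 : (0:ℝ) ≤ K ^ r * V x :=
                        mul_nonneg (pow_nonneg (by linarith) r) (hV0 x)
                      positivity)]
    have hstep1 : |(∫ z, f z ∂(mstep (Q u) j x)) - Iπ|
        ≤ c0 * γ ^ k * (2 + β * B) + (c0 * γ ^ k * β) * (K ^ r * V x) := by
      rw [hexch2, ← hdiff2]
      exact hbound2
    -- numeric assembly
    have hKr : K ^ r ≤ K ^ m := pow_le_pow_right₀ (by linarith) hrlt.le
    have hVx1 := hV1 x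
    have hnum : c0 * γ ^ k * (2 + β * B) + (c0 * γ ^ k * β) * (K ^ r * V x)
        ≤ C1 * γ ^ k * V x := by
      rw [hC1def]
      have hγk : (0:ℝ) < γ ^ k := pow_pos hγpos k
      have h2b0 : (0:ℝ) < 2 + β * B := by
        have := mul_nonneg hβpos.le hBpos.le; linarith
      have h1 : c0 * γ ^ k * (2 + β * B) ≤ c0 * γ ^ k * (2 + β * B) * V x :=
        le_mul_of_one_le_right (by positivity) hVx1
      have h2 : (c0 * γ ^ k * β) * (K ^ r * V x) ≤ (c0 * γ ^ k * β) * (K ^ m * V x) := by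
        have h3 : K ^ r * V x ≤ K ^ m * V x :=
          mul_le_mul_of_nonneg_right hKr (hV0 x)
        exact mul_le_mul_of_nonneg_left h3 (by positivity)
      have h4 : c0 * γ ^ k * (2 + β * B) * V x + (c0 * γ ^ k * β) * (K ^ m * V x)
          = c0 * (2 + β * B + β * K ^ m) * γ ^ k * V x := by ring
      linarith only [h1, h2, h4.le]
    have hγρ : γ ^ k * γ ≤ ρ ^ j := by
      have h1 : ρ ^ (m * (k+1)) = γ ^ (k+1) := by rw [pow_mul, hρm]
      have hjle : j ≤ m * (k+1) := by
        rw [hj]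
        calc r + k*m ≤ m + k*m := Nat.add_le_add_right hrlt.le _
          _ = m*(k+1) := by ring
      have h2 : ρ ^ (m * (k+1)) ≤ ρ ^ j := pow_le_pow_of_le_one hρpos.le hρlt.le hjle
      calc γ ^ k * γ = γ ^ (k+1) := by rw [pow_succ]
        _ = ρ ^ (m * (k+1)) := h1.symm
        _ ≤ ρ ^ j := h2
    have hfinal : C1 * γ ^ k * V x ≤ CC * V x * ρ ^ j := by
      rw [hCCdef]
      have h1 : C1 * γ ^ k * V x * γ ≤ C1 * V x * ρ ^ j := by
        calc C1 * γ ^ k * V x * γ = (C1 * V x) * (γ ^ k * γ) := by ring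
          _ ≤ (C1 * V x) * ρ ^ j := by
              refine mul_le_mul_of_nonneg_left hγρ ?_
              have := hV0 x
              positivity
          _ = C1 * V x * ρ ^ j := rfl
      rw [div_mul_eq_mul_div, div_mul_eq_mul_div, le_div_iff₀ hγpos]
      exact h1
    calc |(∫ z, f z ∂(mstep (Q u) j x)) - ∫ z, f z ∂(π u)|
        = |(∫ z, f z ∂(mstep (Q u) j x)) - Iπ| := rfl
      _ ≤ _ := hstep1
      _ ≤ C1 * γ ^ k * V x := hnum
      _ ≤ CC * V x * ρ ^ j := hfinal
  -- ====== conclusions ======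
  refine ⟨?_, ⟨CC, hCCpos, ρ, ⟨hρpos, hρlt⟩, ?_⟩, ⟨B, fun u hu =>
    hinvV u hu (π u) (hπ u hu).1 (hπ u hu).2⟩⟩
  · -- uniqueness
    intro u hu π' hπ'p hπ'inv
    haveI := hπ'p
    haveI := (hπ u hu).1
    have hπ'V := hinvV u hu π' hπ'p hπ'inv
    refine Measure.ext fun s hs => ?_
    set f : E → ℝ := s.indicator (fun _ => (1:ℝ)) with hfdef
    have hfm : Measurable f := measurable_const.indicator hs
    have hfb : ∀ z, |f z| ≤ V z := by
      intro z
      by_cases hz : z ∈ s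
      · rw [hfdef, Set.indicator_of_mem hz]
        rw [abs_one]
        exact hV1 z
      · rw [hfdef, Set.indicator_of_notMem hz, abs_zero]
        exact hV0 z
    have hval : ∀ (μ : Measure E), IsProbabilityMeasure μ → ∫ z, f z ∂μ = (μ s).toReal := by
      intro μ hμ
      haveI := hμ
      rw [hfdef, integral_indicator_const (1:ℝ) hs, smul_eq_mul, mul_one]; rfl
    have hfb' : ∀ z, |f z| ≤ 0 + 1 * V z := fun z => by simpa using hfb z
    have hπ'fin : ∫⁻ z, ENNReal.ofReal (0 + 1 * V z) ∂π' < ∞ := by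
      have h1 : ∫⁻ z, ENNReal.ofReal (0 + 1 * V z) ∂π'
          = ∫⁻ z, ENNReal.ofReal (V z) ∂π' := by
        refine lintegral_congr fun z => ?_
        norm_num
      rw [h1]
      exact lt_of_le_of_lt hπ'V ENNReal.ofReal_lt_top
    have hbig : ∀ j : ℕ, |(π' s).toReal - ((π u) s).toReal| ≤ (CC * B) * ρ ^ j := by
      intro j
      have hπ'invj : π'.bind (mstep (Q u) j) = π' :=
        st14_bind_mstep_invariant _ (hQmeas u) π' hπ'inv j
      have hgm : Measurable (fun x => ∫ z, f z ∂(mstep (Q u) j x)) :=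
        hgmeas u j hu f 0 1 hfm le_rfl zero_le_one hfb'
      have hexch : ∫ z, f z ∂π' = ∫ x, (∫ z, f z ∂(mstep (Q u) j x)) ∂π' := by
        conv_lhs => rw [← hπ'invj]
        refine st14_integral_bind π' (mstep (Q u) j) (st14_mstep_measurable _ (hQmeas u) _)
          f (fun z => 0 + 1 * V z) hfm ((hVmeas.const_mul 1).const_add 0) hfb'
          (fun x' => hfinaff u hu 0 1 le_rfl zero_le_one _ x') ?_
        rw [hπ'invj]
        exact hπ'fin
      set Iπ : ℝ := ∫ z, f z ∂(π u) with hIπdef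
      have hptbd : ∀ x, |(∫ z, f z ∂(mstep (Q u) j x)) - Iπ| ≤ 0 + (CC * ρ ^ j) * V x :=
        fun x => le_of_le_of_eq (hmain u hu x j f hfm hfb) (by ring)
      have hIπnn := abs_nonneg Iπ
      have hgint : Integrable (fun x => ∫ z, f z ∂(mstep (Q u) j x)) π' := by
        refine st14_integrable π' _ (fun x => |Iπ| + (CC * ρ ^ j) * V x) hgm
          (fun x => ?_) ?_
        · have h1 : |∫ z, f z ∂(mstep (Q u) j x)|
              ≤ |(∫ z, f z ∂(mstep (Q u) j x)) - Iπ| + |Iπ| := by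
            have h2 := st14_abs_sub_le' ((∫ z, f z ∂(mstep (Q u) j x)) - Iπ) (-Iπ)
            have h3 : (∫ z, f z ∂(mstep (Q u) j x)) - Iπ - -Iπ
                = ∫ z, f z ∂(mstep (Q u) j x) := by ring
            rw [h3, abs_neg] at h2
            exact h2
          have h4 := hptbd x
          show |∫ z, f z ∂(mstep (Q u) j x)| ≤ |Iπ| + (CC * ρ ^ j) * V x
          linarith only [h1, h4]
        · rw [st14_lintegral_affine π' V hVmeas hV0 _ _ hIπnn (by positivity)]
          exact ENNReal.add_lt_top.mpr ⟨ENNReal.ofReal_lt_top,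
            ENNReal.mul_lt_top ENNReal.ofReal_lt_top
              (lt_of_le_of_lt hπ'V ENNReal.ofReal_lt_top)⟩
      have hsub : ∫ x, ((∫ z, f z ∂(mstep (Q u) j x)) - Iπ) ∂π'
          = (π' s).toReal - ((π u) s).toReal := by
        rw [integral_sub hgint (integrable_const Iπ), integral_const,
          probReal_univ, one_smul, ← hexch, hval π' hπ'p, hIπdef,
          hval (π u) (hπ u hu).1]
      have habs2 : |∫ x, ((∫ z, f z ∂(mstep (Q u) j x)) - Iπ) ∂π'| ≤ (CC * B) * ρ ^ j := by
        refine st14_abs_integral_le π' _ (fun x => 0 + (CC * ρ ^ j) * V x) hptbd _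
          (by positivity) ?_
        rw [st14_lintegral_affine π' V hVmeas hV0 _ _ le_rfl (by positivity)]
        calc ENNReal.ofReal 0
              + ENNReal.ofReal (CC * ρ ^ j) * ∫⁻ z, ENNReal.ofReal (V z) ∂π'
            ≤ ENNReal.ofReal 0 + ENNReal.ofReal (CC * ρ ^ j) * ENNReal.ofReal B :=
              add_le_add_right (mul_le_mul_right hπ'V _) _
          _ = ENNReal.ofReal ((CC * B) * ρ ^ j) := by
              rw [ENNReal.ofReal_zero, zero_add, ← ENNReal.ofReal_mul (by positivity)]
              congr 1
              ring
      rw [← hsub]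
      exact habs2
    have htend0 : Tendsto (fun j : ℕ => (CC * B) * ρ ^ j) atTop (nhds 0) := by
      have h1 := (tendsto_pow_atTop_nhds_zero_of_lt_one hρpos.le hρlt).const_mul (CC * B)
      simpa using h1
    have hle0 : |(π' s).toReal - ((π u) s).toReal| ≤ 0 := ge_of_tendsto' htend0 hbig
    have heq : (π' s).toReal = ((π u) s).toReal := by
      have h1 := abs_nonneg ((π' s).toReal - ((π u) s).toReal)
      have h2 := abs_eq_zero.mp (le_antisymm hle0 h1)
      linarith
    exact (ENNReal.toReal_eq_toReal_iff' (measure_ne_top π' s) (measure_ne_top (π u) s)).mp heq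
  · -- geometric ergodicity
    intro u hu x j
    have hrhs : (0:ℝ) ≤ CC * V x * ρ ^ j :=
      mul_nonneg (mul_nonneg hCCpos.le (hV0 x)) (pow_nonneg hρpos.le j)
    unfold vDist
    refine Real.iSup_le ?_ hrhs
    rintro ⟨f, hfm, hfb⟩
    exact hmain u hu x j f hfm hfb





end
end

section
/- Under assumptions F1 and F2, there exists C > 0 such that for all u,v ∈ [0,1], ‖π_u − π_v‖_V ≤ C|u−v|^κ, where π_u denotes the unique invariant probability of Q_u. -/
/- Statement 15: Under F1–F2, there exists C > 0 such that
‖π_u − π_v‖_V ≤ C |u−v|^κ for all u,v ∈ [0,1], where π_u is the unique invariant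
probability of Q_u. -/

open MeasureTheory ProbabilityTheory Filter Set
open scoped ENNReal NNReal

noncomputable section

variable {E : Type*} [MeasurableSpace E]

namespace St15

/-- iterates of a kernel -/
noncomputable def pit (P : E → Measure E) : ℕ → E → Measure E
  | 0 => fun x => Measure.dirac x
  | (k+1) => fun x => (P x).bind (pit P k)

lemma pit_meas {P : E → Measure E} (hP : Measurable P) : ∀ k, Measurable (pit P k)
  | 0 => Measure.measurable_dirac
  | (k+1) => (Measure.measurable_bind' (pit_meas hP k)).comp hP

lemma bind_prob {ρ : E → Measure E} (hρ : Measurable ρ)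
    (hp : ∀ x, IsProbabilityMeasure (ρ x)) (μ : Measure E) [IsProbabilityMeasure μ] :
    IsProbabilityMeasure (μ.bind ρ) := by
  constructor
  rw [Measure.bind_apply MeasurableSet.univ hρ.aemeasurable]
  simp [fun x => (hp x).measure_univ]

lemma pit_prob {P : E → Measure E} (hP : Measurable P)
    (hp : ∀ x, IsProbabilityMeasure (P x)) : ∀ k x, IsProbabilityMeasure (pit P k x)
  | 0, x => by simp only [pit]; infer_instance
  | (k+1), x => by
      simp only [pit]
      have := hp x
      exact bind_prob (pit_meas hP k) (pit_prob hP hp k) (P x)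

lemma bind_pit {P : E → Measure E} (hP : Measurable P) {μ : Measure E}
    (hinv : μ.bind P = μ) : ∀ k, μ.bind (pit P k) = μ
  | 0 => by simp only [pit]; exact Measure.bind_dirac
  | (k+1) => by
      simp only [pit]
      rw [← Measure.bind_bind hP.aemeasurable (pit_meas hP k).aemeasurable, hinv, bind_pit hP hinv k]

lemma seqStep_replicate_eq_pit (Q : ℝ → E → Measure E) (w : ℝ) :
    ∀ n, seqStep Q (List.replicate n w) = pit (Q w) n
  | 0 => rfl
  | (n+1) => by
      funext x
      simp only [List.replicate, seqStep, pit, seqStep_replicate_eq_pit Q w n]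

lemma pit_drift {P : E → Measure E} (hP : Measurable P)
    (hp : ∀ x, IsProbabilityMeasure (P x))
    {V : E → ℝ} (hV : Measurable V) {lam b : ℝ} (hl0 : 0 ≤ lam) (hb : 0 ≤ b)
    (hV0 : ∀ x, 0 ≤ V x)
    (hd : ∀ x, ∫⁻ y, ENNReal.ofReal (V y) ∂(P x) ≤ ENNReal.ofReal (lam * V x + b)) :
    ∀ k x, ∫⁻ y, ENNReal.ofReal (V y) ∂(pit P k x) ≤
      ENNReal.ofReal (lam ^ k * V x + b * ∑ j ∈ Finset.range k, lam ^ j)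
  | 0, x => by
      simp only [pit]
      rw [lintegral_dirac' x (hV.ennreal_ofReal)]
      simp
  | (k+1), x => by
      simp only [pit]
      rw [Measure.lintegral_bind (pit_meas hP k).aemeasurable hV.ennreal_ofReal.aemeasurable]
      have step : ∀ y, ∫⁻ z, ENNReal.ofReal (V z) ∂(pit P k y) ≤
          ENNReal.ofReal (lam ^ k) * ENNReal.ofReal (V y) +
            ENNReal.ofReal (b * ∑ j ∈ Finset.range k, lam ^ j) := by
        intro y
        refine (pit_drift hP hp hV hl0 hb hV0 hd k y).trans ?_
        rw [← ENNReal.ofReal_mul (pow_nonneg hl0 k), ← ENNReal.ofReal_add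
          (mul_nonneg (pow_nonneg hl0 k) (hV0 y))
          (mul_nonneg hb (Finset.sum_nonneg fun j _ => pow_nonneg hl0 j))]
      calc ∫⁻ y, (∫⁻ z, ENNReal.ofReal (V z) ∂(pit P k y)) ∂(P x)
          ≤ ∫⁻ y, (ENNReal.ofReal (lam ^ k) * ENNReal.ofReal (V y) +
            ENNReal.ofReal (b * ∑ j ∈ Finset.range k, lam ^ j)) ∂(P x) :=
            lintegral_mono step
        _ = ENNReal.ofReal (lam ^ k) * (∫⁻ y, ENNReal.ofReal (V y) ∂(P x)) +
            ENNReal.ofReal (b * ∑ j ∈ Finset.range k, lam ^ j) := by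
            rw [lintegral_add_right _ measurable_const, lintegral_const,
              lintegral_const_mul _ hV.ennreal_ofReal]
            have := (hp x).measure_univ
            rw [this, mul_one]
        _ ≤ ENNReal.ofReal (lam ^ k) * ENNReal.ofReal (lam * V x + b) +
            ENNReal.ofReal (b * ∑ j ∈ Finset.range k, lam ^ j) := by
            gcongr
            exact hd x
        _ = ENNReal.ofReal (lam ^ (k+1) * V x + b * ∑ j ∈ Finset.range (k+1), lam ^ j) := by
            rw [← ENNReal.ofReal_mul (pow_nonneg hl0 k), ← ENNReal.ofReal_add
              (mul_nonneg (pow_nonneg hl0 k) (add_nonneg (mul_nonneg hl0 (hV0 x)) hb))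
              (mul_nonneg hb (Finset.sum_nonneg fun j _ => pow_nonneg hl0 j))]
            congr 1
            rw [Finset.sum_range_succ]
            ring


lemma int_nonneg_eq_toReal {μ : Measure E} {g : E → ℝ} (hg : Measurable g)
    (hg0 : ∀ x, 0 ≤ g x) :
    ∫ x, g x ∂μ = (∫⁻ x, ENNReal.ofReal (g x) ∂μ).toReal :=
  integral_eq_lintegral_of_nonneg_ae (Eventually.of_forall hg0) hg.aestronglyMeasurable

lemma int_of_lint {τ : Measure E} {q : E → ℝ} (hq : Measurable q) (hq0 : ∀ x, 0 ≤ q x)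
    (hfin : ∫⁻ x, ENNReal.ofReal (q x) ∂τ ≠ ⊤) : Integrable q τ := by
  refine ⟨hq.aestronglyMeasurable, ?_⟩
  rw [hasFiniteIntegral_iff_ofReal (Eventually.of_forall hq0)]
  exact lt_top_iff_ne_top.2 hfin

lemma integral_bind_nonneg {μ : Measure E} {ρ : E → Measure E} (hρ : Measurable ρ)
    {g : E → ℝ} (hg : Measurable g) (hg0 : ∀ x, 0 ≤ g x)
    (hfin : ∫⁻ y, ENNReal.ofReal (g y) ∂(μ.bind ρ) ≠ ⊤) :
    ∫ y, g y ∂(μ.bind ρ) = ∫ x, ∫ y, g y ∂(ρ x) ∂μ := by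
  have hF : Measurable fun x => ∫⁻ y, ENNReal.ofReal (g y) ∂(ρ x) :=
    (Measure.measurable_lintegral hg.ennreal_ofReal).comp hρ
  have hbl : ∫⁻ y, ENNReal.ofReal (g y) ∂(μ.bind ρ)
      = ∫⁻ x, ∫⁻ y, ENNReal.ofReal (g y) ∂(ρ x) ∂μ :=
    Measure.lintegral_bind hρ.aemeasurable hg.ennreal_ofReal.aemeasurable
  have hae : ∀ᵐ x ∂μ, (∫⁻ y, ENNReal.ofReal (g y) ∂(ρ x)) < ⊤ :=
    ae_lt_top hF (hbl ▸ hfin)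
  rw [int_nonneg_eq_toReal hg hg0, hbl, ← integral_toReal hF.aemeasurable hae]
  exact integral_congr_ae (Eventually.of_forall fun x =>
    (int_nonneg_eq_toReal hg hg0 (μ := ρ x)).symm)

lemma integral_bind_of {μ : Measure E} {ρ : E → Measure E} (hρ : Measurable ρ)
    {g W : E → ℝ} (hg : Measurable g) (hW : Measurable W) (hgW : ∀ x, |g x| ≤ W x)
    (hfin : ∫⁻ y, ENNReal.ofReal (W y) ∂(μ.bind ρ) ≠ ⊤) :
    ∫ y, g y ∂(μ.bind ρ) = ∫ x, ∫ y, g y ∂(ρ x) ∂μ := by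
  set gp := fun x => max (g x) 0 with hgpdef
  set gm := fun x => max (-g x) 0 with hgmdef
  have hgpm : Measurable gp := hg.max measurable_const
  have hgmm : Measurable gm := hg.neg.max measurable_const
  have hgp0 : ∀ x, 0 ≤ gp x := fun x => le_max_right _ _
  have hgm0 : ∀ x, 0 ≤ gm x := fun x => le_max_right _ _
  have hW0 : ∀ x, 0 ≤ W x := fun x => (abs_nonneg _).trans (hgW x)
  have hgpW : ∀ x, gp x ≤ W x := fun x =>
    max_le ((le_abs_self _).trans (hgW x)) (hW0 x)
  have hgmW : ∀ x, gm x ≤ W x := fun x =>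
    max_le ((neg_le_abs _).trans (hgW x)) (hW0 x)
  have hgsub : ∀ x, g x = gp x - gm x := by
    intro x
    rcases le_total 0 (g x) with h | h
    · simp [hgpdef, hgmdef, max_eq_left h, max_eq_right (neg_nonpos.mpr h)]
    · simp [hgpdef, hgmdef, max_eq_right h, max_eq_left (neg_nonneg.mpr h)]
  -- finiteness transfers
  have hmono : ∀ (τ : Measure E) (q : E → ℝ), (∀ x, q x ≤ W x) → (∀ x, 0 ≤ q x) →
      ∫⁻ y, ENNReal.ofReal (W y) ∂τ ≠ ⊤ → ∫⁻ y, ENNReal.ofReal (q y) ∂τ ≠ ⊤ := by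
    intro τ q hqW _ hfin'
    exact ne_top_of_le_ne_top hfin'
      (lintegral_mono fun y => ENNReal.ofReal_le_ofReal (hqW y))
  have hfp := hmono _ gp hgpW hgp0 hfin
  have hfm := hmono _ gm hgmW hgm0 hfin
  -- splitting on any measure with finite W-lintegral
  have hsub : ∀ (τ : Measure E), (∫⁻ y, ENNReal.ofReal (W y) ∂τ ≠ ⊤) →
      ∫ y, g y ∂τ = (∫ y, gp y ∂τ) - ∫ y, gm y ∂τ := by
    intro τ hfin'
    have hip : Integrable gp τ := int_of_lint hgpm hgp0 (hmono _ gp hgpW hgp0 hfin')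
    have him : Integrable gm τ := int_of_lint hgmm hgm0 (hmono _ gm hgmW hgm0 hfin')
    rw [show (fun y => g y) = fun y => gp y - gm y from funext hgsub]
    exact integral_sub hip him
  -- W-lintegral over kernels is a.e. finite
  have hFW : Measurable fun x => ∫⁻ y, ENNReal.ofReal (W y) ∂(ρ x) :=
    (Measure.measurable_lintegral hW.ennreal_ofReal).comp hρ
  have hblW : ∫⁻ y, ENNReal.ofReal (W y) ∂(μ.bind ρ)
      = ∫⁻ x, ∫⁻ y, ENNReal.ofReal (W y) ∂(ρ x) ∂μ :=
    Measure.lintegral_bind hρ.aemeasurable hW.ennreal_ofReal.aemeasurable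
  have haeW : ∀ᵐ x ∂μ, (∫⁻ y, ENNReal.ofReal (W y) ∂(ρ x)) ≠ ⊤ := by
    filter_upwards [ae_lt_top hFW (hblW ▸ hfin)] with x hx using hx.ne
  -- integrability of the kernel integrals of gp, gm
  have hker : ∀ (q : E → ℝ), Measurable q → (∀ x, 0 ≤ q x) → (∀ x, q x ≤ W x) →
      Integrable (fun x => ∫ y, q y ∂ρ x) μ := by
    intro q hq hq0 hqW
    have heq : (fun x => ∫ y, q y ∂ρ x)
        = fun x => (∫⁻ y, ENNReal.ofReal (q y) ∂(ρ x)).toReal :=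
      funext fun x => int_nonneg_eq_toReal hq hq0
    rw [heq]
    have hFq : Measurable fun x => ∫⁻ y, ENNReal.ofReal (q y) ∂(ρ x) :=
      (Measure.measurable_lintegral hq.ennreal_ofReal).comp hρ
    refine ⟨(hFq.ennreal_toReal).aestronglyMeasurable, ?_⟩
    rw [hasFiniteIntegral_iff_ofReal (Eventually.of_forall fun x => ENNReal.toReal_nonneg)]
    have hle : ∫⁻ x, ENNReal.ofReal ((∫⁻ y, ENNReal.ofReal (q y) ∂(ρ x)).toReal) ∂μ
        ≤ ∫⁻ x, ∫⁻ y, ENNReal.ofReal (q y) ∂(ρ x) ∂μ :=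
      lintegral_mono fun x => ENNReal.ofReal_toReal_le
    refine lt_of_le_of_lt hle ?_
    rw [← Measure.lintegral_bind hρ.aemeasurable hq.ennreal_ofReal.aemeasurable]
    exact lt_top_iff_ne_top.2 (hmono _ q hqW hq0 hfin)
  calc ∫ y, g y ∂(μ.bind ρ)
      = (∫ y, gp y ∂(μ.bind ρ)) - ∫ y, gm y ∂(μ.bind ρ) := hsub _ hfin
    _ = (∫ x, ∫ y, gp y ∂(ρ x) ∂μ) - ∫ x, ∫ y, gm y ∂(ρ x) ∂μ := by
        rw [integral_bind_nonneg hρ hgpm hgp0 hfp, integral_bind_nonneg hρ hgmm hgm0 hfm]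
    _ = ∫ x, ((∫ y, gp y ∂(ρ x)) - ∫ y, gm y ∂(ρ x)) ∂μ :=
        (integral_sub (hker gp hgpm hgp0 hgpW) (hker gm hgmm hgm0 hgmW)).symm
    _ = ∫ x, ∫ y, g y ∂(ρ x) ∂μ := by
        refine integral_congr_ae ?_
        filter_upwards [haeW] with x hx
        exact (hsub (ρ x) hx).symm



lemma pi_V_bound {pi : Measure E} [IsProbabilityMeasure pi] {P : E → Measure E}
    (hP : Measurable P) (hp : ∀ x, IsProbabilityMeasure (P x))
    {V : E → ℝ} (hV : Measurable V) (hV0 : ∀ x, 0 ≤ V x)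
    {lam b : ℝ} (hl : 0 < lam) (hl1 : lam < 1) (hb : 0 < b)
    (hd : ∀ x, ∫⁻ y, ENNReal.ofReal (V y) ∂(P x) ≤ ENNReal.ofReal (lam * V x + b))
    (hinv : pi.bind P = pi) :
    ∫⁻ x, ENNReal.ofReal (V x) ∂pi ≤ ENNReal.ofReal (b / (1 - lam)) := by
  set c := b / (1 - lam) with hcdef
  have hc0 : 0 ≤ c := div_nonneg hb.le (by linarith)
  have hbS : ∀ k : ℕ, b * ∑ j ∈ Finset.range k, lam ^ j ≤ c := by
    intro k
    have hgs : (∑ j ∈ Finset.range k, lam ^ j) * (lam - 1) = lam ^ k - 1 := geom_sum_mul _ _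
    have hpk : 0 ≤ lam ^ k := pow_nonneg hl.le k
    rw [hcdef, le_div_iff₀ (by linarith)]
    nlinarith [Finset.sum_nonneg (fun j (_ : j ∈ Finset.range k) => pow_nonneg hl.le j)]
  have h1 : ∀ (n k : ℕ), ∫⁻ x, min (ENNReal.ofReal (V x)) n ∂pi
      ≤ ∫⁻ x, min (ENNReal.ofReal (lam ^ k * V x + c)) n ∂pi := by
    intro n k
    conv_lhs => rw [← bind_pit hP hinv k]
    rw [Measure.lintegral_bind (pit_meas hP k).aemeasurable (hV.ennreal_ofReal.min measurable_const).aemeasurable]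
    refine lintegral_mono fun x => ?_
    have ha : ∫⁻ y, min (ENNReal.ofReal (V y)) n ∂(pit P k x)
        ≤ min (ENNReal.ofReal (lam ^ k * V x + b * ∑ j ∈ Finset.range k, lam ^ j)) n := by
      refine le_min ?_ ?_
      · exact (lintegral_mono fun y => min_le_left _ _).trans
          (pit_drift hP hp hV hl.le hb.le hV0 hd k x)
      · refine (lintegral_mono fun y => min_le_right _ _).trans ?_
        rw [lintegral_const, (pit_prob hP hp k x).measure_univ, mul_one]
    refine ha.trans (min_le_min (ENNReal.ofReal_le_ofReal ?_) le_rfl)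
    have := hbS k; linarith
  have h2 : ∀ n : ℕ, Tendsto (fun k => ∫⁻ x, min (ENNReal.ofReal (lam ^ k * V x + c)) n ∂pi)
      atTop (nhds (∫⁻ x, min (ENNReal.ofReal c) n ∂pi)) := by
    intro n
    refine tendsto_lintegral_of_dominated_convergence (fun _ => (n : ℝ≥0∞))
      (fun k => ((hV.const_mul _).add_const c).ennreal_ofReal.min measurable_const)
      (fun k => Eventually.of_forall fun x => min_le_right _ _) ?_ ?_
    · rw [lintegral_const, measure_univ, mul_one]
      exact ENNReal.natCast_ne_top n
    · refine Eventually.of_forall fun x => ?_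
      have hpow : Tendsto (fun k : ℕ => lam ^ k) atTop (nhds 0) :=
        tendsto_pow_atTop_nhds_zero_of_lt_one hl.le hl1
      have hlin : Tendsto (fun k : ℕ => lam ^ k * V x + c) atTop (nhds c) := by
        have := (hpow.mul_const (V x)).add_const c
        simpa using this
      exact (ENNReal.tendsto_ofReal hlin).min tendsto_const_nhds
  have h3 : ∀ n : ℕ, ∫⁻ x, min (ENNReal.ofReal (V x)) n ∂pi ≤ ENNReal.ofReal c := by
    intro n
    refine (ge_of_tendsto (h2 n) (Eventually.of_forall fun k => h1 n k)).trans ?_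
    calc ∫⁻ x, min (ENNReal.ofReal c) n ∂pi
        ≤ ∫⁻ _, ENNReal.ofReal c ∂pi := lintegral_mono fun x => min_le_left _ _
      _ = ENNReal.ofReal c := by rw [lintegral_const, measure_univ, mul_one]
  have h4 : (fun x => ENNReal.ofReal (V x))
      = fun x => ⨆ n : ℕ, min (ENNReal.ofReal (V x)) n := by
    funext x
    refine le_antisymm ?_ (iSup_le fun n => min_le_left _ _)
    obtain ⟨n, hn⟩ := ENNReal.exists_nat_gt (ENNReal.ofReal_ne_top (r := V x))
    exact le_iSup_of_le n (by rw [min_eq_left hn.le])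
  calc ∫⁻ x, ENNReal.ofReal (V x) ∂pi
      = ∫⁻ x, ⨆ n : ℕ, min (ENNReal.ofReal (V x)) n ∂pi := by rw [h4]
    _ = ⨆ n : ℕ, ∫⁻ x, min (ENNReal.ofReal (V x)) n ∂pi := by
        refine lintegral_iSup (fun n => hV.ennreal_ofReal.min measurable_const) ?_
        intro a b hab x
        exact min_le_min le_rfl (by exact_mod_cast Nat.cast_le.2 hab)
    _ ≤ ENNReal.ofReal c := iSup_le h3


lemma abs_int_le {μ : Measure E} {f W : E → ℝ} (hfW : ∀ x, |f x| ≤ W x)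
    (hW : Integrable W μ) (hW0 : ∀ x, 0 ≤ W x) : |∫ x, f x ∂μ| ≤ ∫ x, W x ∂μ := by
  by_cases hfi : Integrable f μ
  · have h0 := norm_integral_le_integral_norm (f := f) (μ := μ)
    simp only [Real.norm_eq_abs] at h0
    exact h0.trans (integral_mono hfi.abs hW fun x => hfW x)
  · rw [integral_undef hfi]
    simpa using integral_nonneg hW0

noncomputable def DOf (h : E → ℝ) (μ1 μ2 : Measure E) : ℝ :=
  ⨆ f : {f : E → ℝ // Measurable f ∧ ∀ x, |f x| ≤ h x},
    ((∫ x, f.1 x ∂μ1) - ∫ x, f.1 x ∂μ2)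

lemma DOf_bddAbove {h : E → ℝ} {μ1 μ2 : Measure E} (hh0 : ∀ x, 0 ≤ h x)
    (h1 : Integrable h μ1) (h2 : Integrable h μ2) :
    BddAbove (Set.range fun f : {f : E → ℝ // Measurable f ∧ ∀ x, |f x| ≤ h x} =>
      ((∫ x, f.1 x ∂μ1) - ∫ x, f.1 x ∂μ2)) := by
  refine ⟨(∫ x, h x ∂μ1) + ∫ x, h x ∂μ2, ?_⟩
  rintro y ⟨f, rfl⟩
  have e1 := abs_le.1 (abs_int_le f.2.2 h1 hh0)
  have e2 := abs_le.1 (abs_int_le f.2.2 h2 hh0)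
  have := e1.2; have := e2.1
  dsimp only
  linarith

lemma le_DOf {h : E → ℝ} {μ1 μ2 : Measure E} (hh0 : ∀ x, 0 ≤ h x)
    (h1 : Integrable h μ1) (h2 : Integrable h μ2)
    {f : E → ℝ} (hf : Measurable f) (hfh : ∀ x, |f x| ≤ h x) :
    ((∫ x, f x ∂μ1) - ∫ x, f x ∂μ2) ≤ DOf h μ1 μ2 :=
  le_ciSup (DOf_bddAbove hh0 h1 h2) ⟨f, hf, hfh⟩

lemma abs_le_DOf {h : E → ℝ} {μ1 μ2 : Measure E} (hh0 : ∀ x, 0 ≤ h x)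
    (h1 : Integrable h μ1) (h2 : Integrable h μ2)
    {f : E → ℝ} (hf : Measurable f) (hfh : ∀ x, |f x| ≤ h x) :
    |(∫ x, f x ∂μ1) - ∫ x, f x ∂μ2| ≤ DOf h μ1 μ2 := by
  refine abs_le.2 ⟨?_, le_DOf hh0 h1 h2 hf hfh⟩
  have := le_DOf hh0 h1 h2 hf.neg (f := fun x => - f x)
    (fun x => by simpa using hfh x)
  simp only [integral_neg] at this
  linarith

lemma DOf_nonneg {h : E → ℝ} {μ1 μ2 : Measure E} (hh0 : ∀ x, 0 ≤ h x)
    (h1 : Integrable h μ1) (h2 : Integrable h μ2) : 0 ≤ DOf h μ1 μ2 := by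
  have := le_DOf hh0 h1 h2 (f := fun _ => 0) measurable_const
    (fun x => by simpa using hh0 x)
  simpa using this

lemma DOf_le {h : E → ℝ} {μ1 μ2 : Measure E} {a : ℝ} (ha : 0 ≤ a)
    (hb : ∀ f : E → ℝ, Measurable f → (∀ x, |f x| ≤ h x) →
      ((∫ x, f x ∂μ1) - ∫ x, f x ∂μ2) ≤ a) : DOf h μ1 μ2 ≤ a :=
  Real.iSup_le (fun f => hb f.1 f.2.1 f.2.2) ha

lemma DOf_le_sum {h : E → ℝ} {μ1 μ2 : Measure E} (hh0 : ∀ x, 0 ≤ h x)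
    (h1 : Integrable h μ1) (h2 : Integrable h μ2) :
    DOf h μ1 μ2 ≤ (∫ x, h x ∂μ1) + ∫ x, h x ∂μ2 := by
  refine DOf_le (add_nonneg (integral_nonneg hh0) (integral_nonneg hh0)) fun f hf hfh => ?_
  have e1 := abs_le.1 (abs_int_le hfh h1 hh0)
  have e2 := abs_le.1 (abs_int_le hfh h2 hh0)
  have := e1.2; have := e2.1
  linarith


lemma pair_bound {μ1 μ2 : Measure E} [IsProbabilityMeasure μ1] [IsProbabilityMeasure μ2]
    {h : E → ℝ} (hh : Measurable h) (hh0 : ∀ x, 0 ≤ h x)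
    (h1 : Integrable h μ1) (h2 : Integrable h μ2)
    {al : ℝ} (hal : 0 ≤ al)
    {g : E → ℝ} (hg : Measurable g) {c : ℝ} (hgb : ∀ x, |g x| ≤ c * h x)
    (htwo : ∀ x y, g x - g y ≤ al * (h x + h y)) :
    (∫ x, g x ∂μ1) - ∫ x, g x ∂μ2 ≤ al * DOf h μ1 μ2 := by
  classical
  have hE : Nonempty E := by
    rcases isEmpty_or_nonempty E with hE | hE
    · exfalso
      have h0 : μ1 univ = 1 := measure_univ
      rw [Set.univ_eq_empty_iff.2 hE] at h0
      rw [measure_empty] at h0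
      exact zero_ne_one h0
    · exact hE
  haveI := hE
  obtain ⟨y0⟩ := hE
  have hgi1 : Integrable g μ1 := (h1.const_mul c).mono' hg.aestronglyMeasurable
    (Eventually.of_forall fun x => by simpa using hgb x)
  have hgi2 : Integrable g μ2 := (h2.const_mul c).mono' hg.aestronglyMeasurable
    (Eventually.of_forall fun x => by simpa using hgb x)
  set c0 := ⨆ x, (g x - al * h x) with hc0def
  have hbdd : BddAbove (Set.range fun x => g x - al * h x) := by
    refine ⟨g y0 + al * h y0, ?_⟩
    rintro t ⟨x, rfl⟩
    have h1' := htwo x y0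
    have h2' : al * (h x + h y0) = al * h x + al * h y0 := mul_add _ _ _
    simp only
    linarith
  have hcl : ∀ x, g x - al * h x ≤ c0 := fun x => le_ciSup hbdd x
  have hcu : ∀ y, c0 ≤ g y + al * h y := fun y => ciSup_le fun x => by
    have h1' := htwo x y
    have h2' : al * (h x + h y) = al * h x + al * h y := mul_add _ _ _
    linarith
  obtain ⟨A, hA, hA1, hA2⟩ := hahn_decomposition (μ := μ1) (ν := μ2)
  have hleA : μ2.restrict A ≤ μ1.restrict A := by
    refine Measure.le_iff.2 fun s hs => ?_
    rw [Measure.restrict_apply hs, Measure.restrict_apply hs]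
    exact hA1 _ (hs.inter hA) inter_subset_right
  have hleAc : μ1.restrict Aᶜ ≤ μ2.restrict Aᶜ := by
    refine Measure.le_iff.2 fun s hs => ?_
    rw [Measure.restrict_apply hs, Measure.restrict_apply hs]
    exact hA2 _ (hs.inter hA.compl) inter_subset_right
  set sp := μ1.restrict A - μ2.restrict A with hspdef
  set sm := μ2.restrict Aᶜ - μ1.restrict Aᶜ with hsmdef
  have hspeq : sp + μ2.restrict A = μ1.restrict A := Measure.sub_add_cancel_of_le hleA
  have hsmeq : sm + μ1.restrict Aᶜ = μ2.restrict Aᶜ := Measure.sub_add_cancel_of_le hleAc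
  have hsple : sp ≤ μ1 := le_trans Measure.sub_le Measure.restrict_le_self
  have hsmle : sm ≤ μ2 := le_trans Measure.sub_le Measure.restrict_le_self
  -- integral splitting for integrable functions
  have hsplit : ∀ (q : E → ℝ), Integrable q μ1 → Integrable q μ2 →
      ((∫ x, q x ∂μ1) - ∫ x, q x ∂μ2) = (∫ x, q x ∂sp) - ∫ x, q x ∂sm := by
    intro q hq1 hq2
    have e1 : (∫ x in A, q x ∂μ1) + ∫ x in Aᶜ, q x ∂μ1 = ∫ x, q x ∂μ1 :=
      integral_add_compl hA hq1
    have e2 : (∫ x in A, q x ∂μ2) + ∫ x in Aᶜ, q x ∂μ2 = ∫ x, q x ∂μ2 :=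
      integral_add_compl hA hq2
    have e3 : ∫ x, q x ∂(μ1.restrict A) = (∫ x, q x ∂sp) + ∫ x, q x ∂(μ2.restrict A) := by
      rw [← hspeq, integral_add_measure (hq1.mono_measure hsple)
        (hq2.mono_measure Measure.restrict_le_self)]
    have e4 : ∫ x, q x ∂(μ2.restrict Aᶜ) = (∫ x, q x ∂sm) + ∫ x, q x ∂(μ1.restrict Aᶜ) := by
      rw [← hsmeq, integral_add_measure (hq2.mono_measure hsmle)
        (hq1.mono_measure Measure.restrict_le_self)]
    have e1' : (∫ x, q x ∂(μ1.restrict A)) + ∫ x, q x ∂(μ1.restrict Aᶜ) = ∫ x, q x ∂μ1 := e1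
    have e2' : (∫ x, q x ∂(μ2.restrict A)) + ∫ x, q x ∂(μ2.restrict Aᶜ) = ∫ x, q x ∂μ2 := e2
    linarith
  -- masses agree
  haveI hfin_sp : IsFiniteMeasure sp :=
    ⟨lt_of_le_of_lt (hsple univ) (measure_lt_top μ1 univ)⟩
  haveI hfin_sm : IsFiniteMeasure sm :=
    ⟨lt_of_le_of_lt (hsmle univ) (measure_lt_top μ2 univ)⟩
  have hmA : μ2 A ≤ μ1 A := hA1 A hA subset_rfl
  have hmAc : μ1 Aᶜ ≤ μ2 Aᶜ := hA2 Aᶜ hA.compl subset_rfl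
  have hspu : sp univ = μ1 A - μ2 A := by
    rw [hspdef, Measure.sub_apply MeasurableSet.univ hleA,
      Measure.restrict_apply_univ, Measure.restrict_apply_univ]
  have hsmu : sm univ = μ2 Aᶜ - μ1 Aᶜ := by
    rw [hsmdef, Measure.sub_apply MeasurableSet.univ hleAc,
      Measure.restrict_apply_univ, Measure.restrict_apply_univ]
  have hteq : (sp univ).toReal = (sm univ).toReal := by
    rw [hspu, hsmu, ENNReal.toReal_sub_of_le hmA (measure_ne_top μ1 A),
      ENNReal.toReal_sub_of_le hmAc (measure_ne_top μ2 Aᶜ)]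
    have hx1 : (μ1 A).toReal + (μ1 Aᶜ).toReal = 1 := by
      rw [← ENNReal.toReal_add (measure_ne_top _ _) (measure_ne_top _ _),
        measure_add_measure_compl hA, measure_univ, ENNReal.toReal_one]
    have hx2 : (μ2 A).toReal + (μ2 Aᶜ).toReal = 1 := by
      rw [← ENNReal.toReal_add (measure_ne_top _ _) (measure_ne_top _ _),
        measure_add_measure_compl hA, measure_univ, ENNReal.toReal_one]
    linarith
  -- main estimate
  have hgsp : Integrable g sp := hgi1.mono_measure hsple
  have hgsm : Integrable g sm := hgi2.mono_measure hsmle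
  have hhsp : Integrable h sp := h1.mono_measure hsple
  have hhsm : Integrable h sm := h2.mono_measure hsmle
  have key : (∫ x, g x ∂sp) - ∫ x, g x ∂sm ≤ al * ((∫ x, h x ∂sp) + ∫ x, h x ∂sm) := by
    have d1 : ∫ x, (g x - c0) ∂sp ≤ ∫ x, al * h x ∂sp :=
      integral_mono (hgsp.sub (integrable_const c0)) (hhsp.const_mul al)
        (fun x => by have := hcl x; simp only; linarith)
    have d2 : ∫ x, (c0 - g x) ∂sm ≤ ∫ x, al * h x ∂sm :=
      integral_mono ((integrable_const c0).sub hgsm) (hhsm.const_mul al)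
        (fun x => by have := hcu x; simp only; linarith)
    have i1 : ∫ x, (g x - c0) ∂sp = (∫ x, g x ∂sp) - (sp univ).toReal * c0 := by
      rw [integral_sub hgsp (integrable_const c0), integral_const, smul_eq_mul]; rfl
    have i2 : ∫ x, (c0 - g x) ∂sm = (sm univ).toReal * c0 - ∫ x, g x ∂sm := by
      rw [integral_sub (integrable_const c0) hgsm, integral_const, smul_eq_mul]; rfl
    have j1 : ∫ x, al * h x ∂sp = al * ∫ x, h x ∂sp := integral_const_mul al h
    have j2 : ∫ x, al * h x ∂sm = al * ∫ x, h x ∂sm := integral_const_mul al h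
    rw [i1, j1] at d1
    rw [i2, j2] at d2
    have h2' : al * ((∫ x, h x ∂sp) + ∫ x, h x ∂sm)
        = al * (∫ x, h x ∂sp) + al * ∫ x, h x ∂sm := mul_add _ _ _
    have h3' : (sp univ).toReal * c0 = (sm univ).toReal * c0 := by rw [hteq]
    linarith
  -- identify the variation with an admissible test function
  set gA := fun x => if x ∈ A then h x else - h x with hgAdef
  have hgAm : Measurable gA := Measurable.ite hA hh hh.neg
  have hgAb : ∀ x, |gA x| ≤ h x := by
    intro x
    by_cases hx : x ∈ A
    · simp only [hgAdef, if_pos hx]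
      rw [abs_of_nonneg (hh0 x)]
    · simp only [hgAdef, if_neg hx]
      rw [abs_neg, abs_of_nonneg (hh0 x)]
  have hgA1 : Integrable gA μ1 := h1.mono' hgAm.aestronglyMeasurable
    (Eventually.of_forall fun x => by simpa using hgAb x)
  have hgA2 : Integrable gA μ2 := h2.mono' hgAm.aestronglyMeasurable
    (Eventually.of_forall fun x => by simpa using hgAb x)
  have hspAc : sp Aᶜ = 0 := by
    rw [hspdef, Measure.sub_apply hA.compl hleA, Measure.restrict_apply hA.compl,
      Measure.restrict_apply hA.compl, compl_inter_self, measure_empty]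
    simp
  have hsmA : sm A = 0 := by
    rw [hsmdef, Measure.sub_apply hA hleAc, Measure.restrict_apply hA,
      Measure.restrict_apply hA, inter_compl_self, measure_empty]
    simp
  have hgAsp : ∫ x, gA x ∂sp = ∫ x, h x ∂sp := by
    refine integral_congr_ae ?_
    rw [Filter.EventuallyEq, ae_iff]
    refine measure_mono_null (fun x hx => ?_) hspAc
    rw [mem_compl_iff]
    intro hxA
    exact hx (if_pos hxA)
  have hgAsm : ∫ x, gA x ∂sm = - ∫ x, h x ∂sm := by
    rw [← integral_neg]
    refine integral_congr_ae ?_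
    rw [Filter.EventuallyEq, ae_iff]
    refine measure_mono_null (fun x hx => ?_) hsmA
    by_contra hxA
    exact hx (if_neg hxA)
  have hrep : (∫ x, gA x ∂μ1) - ∫ x, gA x ∂μ2 = (∫ x, h x ∂sp) + ∫ x, h x ∂sm := by
    rw [hsplit gA hgA1 hgA2, hgAsp, hgAsm]
    ring
  have final : (∫ x, h x ∂sp) + ∫ x, h x ∂sm ≤ DOf h μ1 μ2 := by
    rw [← hrep]
    exact le_DOf hh0 h1 h2 hgAm hgAb
  calc (∫ x, g x ∂μ1) - ∫ x, g x ∂μ2 = (∫ x, g x ∂sp) - ∫ x, g x ∂sm :=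
        hsplit g hgi1 hgi2
    _ ≤ al * ((∫ x, h x ∂sp) + ∫ x, h x ∂sm) := key
    _ ≤ al * DOf h μ1 μ2 := mul_le_mul_of_nonneg_left final hal


lemma kernel_int_meas {P : E → Measure E} (hP : Measurable P)
    (hp : ∀ x, IsProbabilityMeasure (P x)) {g : E → ℝ} (hg : Measurable g) :
    Measurable fun x => ∫ y, g y ∂(P x) := by
  let κ : Kernel E E := ⟨P, hP⟩
  have : IsMarkovKernel κ := ⟨fun a => hp a⟩
  have := (hg.stronglyMeasurable.comp_measurable
    (measurable_snd (α := E) (β := E))).integral_kernel_prod_right' (κ := κ)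
  exact this.measurable

end St15

open St15

set_option maxHeartbeats 2000000 in
theorem statement15
    {E : Type*} [MeasurableSpace E]
    (Q : ℝ → E → Measure E)
    (hQmeas : ∀ u, Measurable (Q u))
    (hQprob : ∀ u x, IsProbabilityMeasure (Q u x))
    (V : E → ℝ) (hVmeas : Measurable V) (hV1 : ∀ x, 1 ≤ V x)
    -- Assumption F1
    (ε lam b K : ℝ) (m : ℕ)
    (hε : 0 < ε) (hlam : lam ∈ Set.Ioo (0:ℝ) 1) (hm : 1 ≤ m) (hb : 0 < b) (hK : 1 ≤ K)
    (hdrift1 : ∀ u ∈ Icc (0:ℝ) 1, ∀ x,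
      (∫⁻ y, ENNReal.ofReal (V y) ∂(Q u x)) ≤ ENNReal.ofReal (K * V x))
    (hdriftm : ∀ u ∈ Icc (0:ℝ) 1, ∀ us : Fin m → ℝ,
      (∀ i, us i ∈ Icc (0:ℝ) 1 ∧ |u - us i| ≤ ε) → ∀ x,
      (∫⁻ y, ENNReal.ofReal (V y) ∂(seqStep Q (List.ofFn us) x))
        ≤ ENNReal.ofReal (lam * V x + b))
    (η R : ℝ) (hη : 0 < η) (hR : 2 * b / (1 - lam) < R)
    (ν : Measure E) (hν : IsProbabilityMeasure ν)
    (hminor : ∀ u ∈ Icc (0:ℝ) 1, ∀ us : Fin m → ℝ,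
      (∀ i, us i ∈ Icc (0:ℝ) 1 ∧ |u - us i| ≤ ε) → ∀ x, V x ≤ R →
      ∀ s : Set E, ENNReal.ofReal η * ν s ≤ seqStep Q (List.ofFn us) x s)
    -- the invariant probabilities
    (π : ℝ → Measure E)
    (hπ : ∀ u ∈ Icc (0:ℝ) 1, IsProbabilityMeasure (π u) ∧ (π u).bind (Q u) = π u)
    -- Assumption F2
    (κ : ℝ) (hκ : κ ∈ Set.Ioo (0:ℝ) 1)
    (Vt : E → ℝ) (hVt : ∀ x, 0 < Vt x)
    (hVtπ : ∃ M : ℝ, ∀ u ∈ Icc (0:ℝ) 1,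
      (∫⁻ x, ENNReal.ofReal (Vt x) ∂(π u)) ≤ ENNReal.ofReal M)
    (hF2 : ∀ u ∈ Icc (0:ℝ) 1, ∀ v ∈ Icc (0:ℝ) 1, ∀ x,
      vDist V (Q u x) (Q v x) ≤ Vt x * |u - v| ^ κ) :
    -- Hölder continuity of u ↦ π_u in V-norm
    ∃ C > (0:ℝ), ∀ u ∈ Icc (0:ℝ) 1, ∀ v ∈ Icc (0:ℝ) 1,
      vDist V (π u) (π v) ≤ C * |u - v| ^ κ := by
  classical
  obtain ⟨hl0, hl1⟩ := hlam
  obtain ⟨M0, hM0⟩ := hVtπ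
  set M := max M0 1 with hMdef
  have hM1 : (1:ℝ) ≤ M := le_max_right _ _
  have hMb : ∀ u ∈ Icc (0:ℝ) 1, ∫⁻ x, ENNReal.ofReal (Vt x) ∂(π u) ≤ ENNReal.ofReal M :=
    fun u hu => (hM0 u hu).trans (ENNReal.ofReal_le_ofReal (le_max_left _ _))
  have hV0 : ∀ x, 0 ≤ V x := fun x => zero_le_one.trans (hV1 x)
  have hRpos : 0 < R := lt_trans (div_pos (by linarith) (by linarith)) hR
  -- constants
  set c1 := lam * R + b with hc1def
  have hc1pos : 0 < c1 := add_pos (mul_pos hl0 hRpos) hb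
  set β := η / (2 * c1) with hβdef
  have hβpos : 0 < β := div_pos hη (by linarith)
  set δ := β * (R * (1 - lam) - 2 * b) with hδdef
  have hRb : 2 * b < R * (1 - lam) := by
    rw [div_lt_iff₀ (by linarith)] at hR
    linarith
  have hδpos : 0 < δ := mul_pos hβpos (by linarith)
  set al := max (1 - η / 2) (max (1 - δ / (β * R + 2)) (1/2)) with haldef
  have hβR2 : 0 < β * R + 2 := by
    have := mul_pos hβpos hRpos
    linarith
  have halhalf : (1:ℝ)/2 ≤ al := le_max_of_le_right (le_max_right _ _)
  have hal0 : (0:ℝ) ≤ al := by linarith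
  have hal1 : al < 1 := by
    have e1 : 1 - η/2 < 1 := by linarith
    have e2 : 1 - δ / (β*R+2) < 1 := by
      have := div_pos hδpos hβR2
      linarith
    have e3 : (1:ℝ)/2 < 1 := by norm_num
    rw [haldef]
    exact max_lt e1 (max_lt e2 e3)
  have hal_eta : 1 - η/2 ≤ al := le_max_left _ _
  have hal_δ : 1 - δ/(β*R+2) ≤ al := le_max_of_le_right (le_max_left _ _)
  have hallam : lam ≤ al := by
    have h1' : δ < (1 - lam) * (β * R + 2) := by nlinarith [mul_pos hβpos hRpos]
    have h2' : δ / (β*R+2) < 1 - lam := (div_lt_iff₀ hβR2).2 (by linarith [mul_comm (1-lam) (β*R+2)])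
    have : lam < 1 - δ/(β*R+2) := by linarith
    exact this.le.trans hal_δ
  have hcase1 : 2 * (β * c1) = η := by
    rw [hβdef]
    field_simp
  have hcase2 : ∀ S : ℝ, R ≤ S → 2 + β*(lam*S) + 2*(β*b) ≤ al * (2 + β*S) := by
    intro S hS
    have key0 : (1 - δ/(β*R+2)) * (2+β*R) = 2 + β*(lam*R) + 2*(β*b) := by
      have hq : δ/(β*R+2) * (2+β*R) = δ := by
        rw [show (2+β*R) = (β*R+2) by ring]
        exact div_mul_cancel₀ _ (ne_of_gt hβR2)
      have hexp : (1 - δ/(β*R+2)) * (2+β*R) = (2+β*R) - δ/(β*R+2) * (2+β*R) := by ring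
      rw [hexp, hq, hδdef]
      ring
    have ht : (0:ℝ) < 2 + β*R := by linarith [mul_pos hβpos hRpos]
    have e1 : (1 - δ/(β*R+2)) * (2+β*R) ≤ al * (2+β*R) :=
      mul_le_mul_of_nonneg_right hal_δ ht.le
    have e2 : lam * (β*(S-R)) ≤ al * (β*(S-R)) :=
      mul_le_mul_of_nonneg_right hallam (mul_nonneg hβpos.le (by linarith))
    have e3 : al * (2+β*S) = al*(2+β*R) + al * (β*(S-R)) := by ring
    have e4 : 2 + β*(lam*R) + 2*(β*b) + lam*(β*(S-R)) = 2 + β*(lam*S) + 2*(β*b) := by ring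
    linarith
  -- the weight function
  set h := fun x : E => 1 + β * V x with hhdef
  have hhmeas : Measurable h := (hVmeas.const_mul β).const_add 1
  have hh1 : ∀ x, 1 ≤ h x := fun x => by
    have := hV1 x
    have : 0 ≤ β * V x := mul_nonneg hβpos.le (hV0 x)
    simp only [hhdef]
    linarith
  have hh0 : ∀ x, 0 ≤ h x := fun x => zero_le_one.trans (hh1 x)
  have hhV : ∀ x, h x ≤ (1+β) * V x := fun x => by
    have h1' := hV1 x
    simp only [hhdef]
    nlinarith
  set c3 := b / (1 - lam) with hc3def
  have hc30 : 0 ≤ c3 := div_nonneg hb.le (by linarith)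
  -- the main per-pair estimate
  have MAIN : ∀ u ∈ Icc (0:ℝ) 1, ∀ v ∈ Icc (0:ℝ) 1, ∀ f : E → ℝ, Measurable f →
      (∀ x, |f x| ≤ V x) →
      |(∫ x, f x ∂(π u)) - ∫ x, f x ∂(π v)| ≤
        ((m : ℝ) * (K^m * (1+β) * M)) / (β * (1 - al)) * |u - v| ^ κ := by
    intro u hu v hv f hf hfV
    set r := |u - v| ^ κ with hrdef
    have hr0 : 0 ≤ r := Real.rpow_nonneg (abs_nonneg _) κ
    set P := seqStep Q (List.ofFn fun _ : Fin m => v) with hPdef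
    have hPeq : P = pit (Q v) m := by
      rw [hPdef, List.ofFn_const, seqStep_replicate_eq_pit]
    have hPmeas : Measurable P := by rw [hPeq]; exact pit_meas (hQmeas v) m
    have hPprob : ∀ x, IsProbabilityMeasure (P x) := by
      rw [hPeq]; exact fun x => pit_prob (hQmeas v) (fun y => hQprob v y) m x
    have hconst : ∀ (w : ℝ), w ∈ Icc (0:ℝ) 1 → ∀ i : Fin m,
        (fun _ : Fin m => w) i ∈ Icc (0:ℝ) 1 ∧ |w - (fun _ : Fin m => w) i| ≤ ε :=
      fun w hw i => ⟨hw, by simp [hε.le]⟩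
    have hPdrift : ∀ x, ∫⁻ y, ENNReal.ofReal (V y) ∂(P x) ≤ ENNReal.ofReal (lam * V x + b) :=
      fun x => hdriftm v hv _ (hconst v hv) x
    have hPminor : ∀ x, V x ≤ R → ∀ s : Set E, ENNReal.ofReal η * ν s ≤ P x s :=
      fun x hx s => hminor v hv _ (hconst v hv) x hx s
    haveI hπuP : IsProbabilityMeasure (π u) := (hπ u hu).1
    haveI hπvP : IsProbabilityMeasure (π v) := (hπ v hv).1
    have hinvv : (π v).bind P = π v := by rw [hPeq]; exact bind_pit (hQmeas v) (hπ v hv).2 m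
    have hVmom : ∀ w, w ∈ Icc (0:ℝ) 1 →
        ∫⁻ x, ENNReal.ofReal (V x) ∂(π w) ≤ ENNReal.ofReal c3 := by
      intro w hw
      haveI := (hπ w hw).1
      refine pi_V_bound (pit_meas (hQmeas w) m)
        (fun x => pit_prob (hQmeas w) (fun y => hQprob w y) m x) hVmeas hV0 hl0 hl1 hb ?_
        (bind_pit (hQmeas w) (hπ w hw).2 m)
      intro x
      have := hdriftm w hw _ (hconst w hw) x
      rwa [List.ofFn_const, seqStep_replicate_eq_pit] at this
    have hfinV : ∀ (μ : Measure E), (∫⁻ x, ENNReal.ofReal (V x) ∂μ ≤ ENNReal.ofReal c3) →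
        ∫⁻ x, ENNReal.ofReal (V x) ∂μ ≠ ⊤ :=
      fun μ hμ => ne_top_of_le_ne_top ENNReal.ofReal_ne_top hμ
    have hintV : ∀ (μ : Measure E), (∫⁻ x, ENNReal.ofReal (V x) ∂μ ≠ ⊤) → Integrable V μ :=
      fun μ hμ => int_of_lint hVmeas hV0 hμ
    have hinth : ∀ (μ : Measure E) [IsProbabilityMeasure μ],
        (∫⁻ x, ENNReal.ofReal (V x) ∂μ ≠ ⊤) → Integrable h μ := by
      intro μ _ hμ
      have h2' := (hintV μ hμ).const_mul β
      have := (integrable_const (1:ℝ)).add h2'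
      simpa [hhdef] using this
    have hdriftmeas : ∀ (μ : Measure E) [IsProbabilityMeasure μ],
        (∫⁻ x, ENNReal.ofReal (V x) ∂μ ≤ ENNReal.ofReal c3) →
        ∫⁻ x, ENNReal.ofReal (V x) ∂(μ.bind P) ≤ ENNReal.ofReal c3 := by
      intro μ _ hμ
      rw [Measure.lintegral_bind hPmeas.aemeasurable hVmeas.ennreal_ofReal.aemeasurable]
      have hc3eq : lam * c3 + b = c3 := by
        have hne : (1:ℝ) - lam ≠ 0 := by linarith
        rw [hc3def]
        field_simp
        ring
      calc ∫⁻ x, ∫⁻ y, ENNReal.ofReal (V y) ∂(P x) ∂μ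
          ≤ ∫⁻ x, (ENNReal.ofReal lam * ENNReal.ofReal (V x) + ENNReal.ofReal b) ∂μ := by
            refine lintegral_mono fun x => (hPdrift x).trans ?_
            rw [← ENNReal.ofReal_mul hl0.le,
              ← ENNReal.ofReal_add (mul_nonneg hl0.le (hV0 x)) hb.le]
        _ = ENNReal.ofReal lam * (∫⁻ x, ENNReal.ofReal (V x) ∂μ) + ENNReal.ofReal b := by
            rw [lintegral_add_right _ measurable_const, lintegral_const, measure_univ, mul_one,
              lintegral_const_mul _ hVmeas.ennreal_ofReal]
        _ ≤ ENNReal.ofReal lam * ENNReal.ofReal c3 + ENNReal.ofReal b := by gcongr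
        _ = ENNReal.ofReal (lam * c3 + b) := by
            rw [← ENNReal.ofReal_mul hl0.le,
              ← ENNReal.ofReal_add (mul_nonneg hl0.le hc30) hb.le]
        _ ≤ ENNReal.ofReal c3 := le_of_eq (by rw [hc3eq])
    set μseq : ℕ → Measure E := fun k => (fun μ : Measure E => μ.bind P)^[k] (π u) with hμdef
    have hμ0 : μseq 0 = π u := rfl
    have hμs : ∀ k, μseq (k+1) = (μseq k).bind P := fun k => Function.iterate_succ_apply' _ _ _
    have hμfact : ∀ k, IsProbabilityMeasure (μseq k) ∧
        ∫⁻ x, ENNReal.ofReal (V x) ∂(μseq k) ≤ ENNReal.ofReal c3 := by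
      intro k
      induction k with
      | zero => exact ⟨hπuP, hVmom u hu⟩
      | succ k ih =>
          haveI := ih.1
          rw [hμs k]
          exact ⟨bind_prob hPmeas hPprob _, hdriftmeas _ ih.2⟩
    have hhint : ∀ z : E, Integrable h (P z) := fun z => by
      haveI := hPprob z
      exact hinth _ (ne_top_of_le_ne_top ENNReal.ofReal_ne_top (hPdrift z))
    have hVPz : ∀ z, Integrable V (P z) := fun z =>
      hintV _ (ne_top_of_le_ne_top ENNReal.ofReal_ne_top (hPdrift z))
    have hVPreal : ∀ z, ∫ w, V w ∂(P z) ≤ lam * V z + b := by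
      intro z
      rw [int_nonneg_eq_toReal hVmeas hV0]
      exact ENNReal.toReal_le_of_le_ofReal
        (add_nonneg (mul_nonneg hl0.le (hV0 z)) hb.le) (hPdrift z)
    have hhPreal : ∀ z, ∫ w, h w ∂(P z) ≤ 1 + β * (lam * V z + b) := by
      intro z
      haveI := hPprob z
      have he : ∫ w, h w ∂(P z) = 1 + β * ∫ w, V w ∂(P z) := by
        simp only [hhdef]
        rw [integral_add (integrable_const 1) ((hVPz z).const_mul β), integral_const,
          probReal_univ, one_smul, integral_const_mul]
      rw [he]
      have := mul_le_mul_of_nonneg_left (hVPreal z) hβpos.le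
      linarith
    -- two-point inequality
    have htwo : ∀ (f' : E → ℝ), Measurable f' → (∀ x, |f' x| ≤ h x) → ∀ x y,
        (∫ z, f' z ∂(P x)) - (∫ z, f' z ∂(P y)) ≤ al * (h x + h y) := by
      intro f' hf' hf'h x y
      have habs : ∀ z, |∫ w, f' w ∂(P z)| ≤ ∫ w, h w ∂(P z) := fun z =>
        abs_int_le hf'h (hhint z) hh0
      by_cases hcase : V x ≤ R ∧ V y ≤ R
      · obtain ⟨hx, hy⟩ := hcase
        haveI := hν
        have hη1 : η ≤ 1 := by
          have hminu := hPminor x hx univ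
          haveI := hPprob x
          rw [measure_univ, mul_one, measure_univ] at hminu
          exact (ENNReal.ofReal_le_one).1 hminu
        have hνle : ∀ z, V z ≤ R → (ENNReal.ofReal η) • ν ≤ P z := by
          intro z hz
          refine Measure.le_iff'.2 fun s => ?_
          rw [Measure.smul_apply, smul_eq_mul]
          exact hPminor z hz s
        have hνV : ∫⁻ w, ENNReal.ofReal (V w) ∂ν ≠ ⊤ := by
          intro htop
          have hle := lintegral_mono' (μ := (ENNReal.ofReal η) • ν) (ν := P x)
            (hνle x hx) (le_refl fun w => ENNReal.ofReal (V w))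
          rw [lintegral_smul_measure, smul_eq_mul, htop, ENNReal.mul_top
            (by simp only [ne_eq, ENNReal.ofReal_eq_zero, not_le]; exact hη)] at hle
          exact (ne_top_of_le_ne_top ENNReal.ofReal_ne_top (hPdrift x)) (top_le_iff.1 hle)
        have hνh1 : (1:ℝ) ≤ ∫ w, h w ∂ν := by
          have hVν : Integrable V ν := hintV ν hνV
          have he : ∫ w, h w ∂ν = 1 + β * ∫ w, V w ∂ν := by
            simp only [hhdef]
            rw [integral_add (integrable_const 1) (hVν.const_mul β), integral_const,
              probReal_univ, one_smul, integral_const_mul]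
          rw [he]
          have h0' := integral_nonneg (μ := ν) (f := V) hV0
          nlinarith [hβpos.le]
        have hkey : ∀ z : E, V z ≤ R →
            |(∫ w, f' w ∂(P z)) - η * ∫ w, f' w ∂ν| ≤ 1 - η + β * c1 := by
          intro z hz
          haveI := hPprob z
          have hle := hνle z hz
          haveI : IsFiniteMeasure ((ENNReal.ofReal η) • ν) := by
            refine ⟨?_⟩
            rw [Measure.smul_apply, smul_eq_mul, measure_univ, mul_one]
            exact ENNReal.ofReal_lt_top
          set σ := P z - (ENNReal.ofReal η) • ν with hσdef
          have hσeq : σ + (ENNReal.ofReal η) • ν = P z := Measure.sub_add_cancel_of_le hle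
          have hsplit2 : ∀ (q : E → ℝ), Integrable q (P z) →
              (∫ w, q w ∂(P z)) = (∫ w, q w ∂σ) + η * ∫ w, q w ∂ν := by
            intro q hq
            rw [← hσeq] at hq
            obtain ⟨hq1, hq2⟩ := integrable_add_measure.1 hq
            rw [← hσeq, integral_add_measure hq1 hq2, integral_smul_measure,
              ENNReal.toReal_ofReal hη.le, smul_eq_mul]
          have hf'Pz : Integrable f' (P z) := (hhint z).mono' hf'.aestronglyMeasurable
            (Eventually.of_forall fun w => by simpa using hf'h w)
          have hIf := hsplit2 f' hf'Pz
          have hIh := hsplit2 h (hhint z)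
          have hσle : σ ≤ P z := Measure.sub_le
          have hhσ : Integrable h σ := (hhint z).mono_measure hσle
          have habsσ : |∫ w, f' w ∂σ| ≤ ∫ w, h w ∂σ := abs_int_le hf'h hhσ hh0
          have hhσb : ∫ w, h w ∂σ ≤ 1 - η + β * c1 := by
            have hA := hhPreal z
            have hB : lam * V z + b ≤ c1 := by
              rw [hc1def]
              have := mul_le_mul_of_nonneg_left hz hl0.le
              linarith
            have hC : β * (lam * V z + b) ≤ β * c1 := mul_le_mul_of_nonneg_left hB hβpos.le
            have hD : η * 1 ≤ η * ∫ w, h w ∂ν := mul_le_mul_of_nonneg_left hνh1 hη.le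
            linarith [hIh]
          calc |(∫ w, f' w ∂(P z)) - η * ∫ w, f' w ∂ν| = |∫ w, f' w ∂σ| := by
                rw [hIf, add_sub_cancel_right]
            _ ≤ ∫ w, h w ∂σ := habsσ
            _ ≤ 1 - η + β * c1 := hhσb
        have hx' := abs_le.1 (hkey x hx)
        have hy' := abs_le.1 (hkey y hy)
        have h2a : 2 - η ≤ al * 2 := by linarith [hal_eta]
        have h2b : al * 2 ≤ al * (h x + h y) := by
          have := hh1 x
          have := hh1 y
          exact mul_le_mul_of_nonneg_left (by linarith) hal0
        linarith [hx'.2, hy'.1, hcase1]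
      · have hS : R ≤ V x + V y := by
          rcases not_and_or.1 hcase with hc | hc
          · push_neg at hc
            have := hV1 y
            linarith
          · push_neg at hc
            have := hV1 x
            linarith
        have hbx := (abs_le.1 (habs x)).2
        have hby := (abs_le.1 (habs y)).1
        have hAx := hhPreal x
        have hAy := hhPreal y
        have hc2 := hcase2 (V x + V y) hS
        calc (∫ z, f' z ∂(P x)) - (∫ z, f' z ∂(P y))
            ≤ (1 + β*(lam*V x+b)) + (1+β*(lam*V y+b)) := by linarith
          _ = 2 + β*(lam*(V x+V y)) + 2*(β*b) := by ring
          _ ≤ al * (2 + β*(V x+V y)) := hc2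
          _ = al * (h x + h y) := by simp only [hhdef]; ring
    -- one-step estimate
    have hstep : ∀ (μ1 μ2 : Measure E), IsProbabilityMeasure μ1 → IsProbabilityMeasure μ2 →
        (∫⁻ x, ENNReal.ofReal (V x) ∂μ1 ≤ ENNReal.ofReal c3) →
        (∫⁻ x, ENNReal.ofReal (V x) ∂μ2 ≤ ENNReal.ofReal c3) →
        ∀ f' : E → ℝ, Measurable f' → (∀ x, |f' x| ≤ h x) →
        (∫ x, f' x ∂(μ1.bind P)) - ∫ x, f' x ∂(μ2.bind P) ≤ al * DOf h μ1 μ2 := by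
      intro μ1 μ2 hp1 hp2 hm1 hm2 f' hf' hf'h
      haveI := hp1; haveI := hp2
      set g := fun x => ∫ z, f' z ∂(P x) with hgdef
      have hgmeas : Measurable g := kernel_int_meas hPmeas hPprob hf'
      have hgb : ∀ x, |g x| ≤ (1 + lam + b) * h x := by
        intro x
        have h1' : |g x| ≤ ∫ w, h w ∂(P x) := abs_int_le hf'h (hhint x) hh0
        have h2' := hhPreal x
        have h3' := hV1 x
        have h4' := hV0 x
        simp only [hhdef] at h1' h2' ⊢
        nlinarith [mul_nonneg hβpos.le h4', hβpos.le, hb.le, hl0.le,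
          mul_nonneg (mul_nonneg hb.le hβpos.le) (sub_nonneg.2 h3'),
          mul_nonneg hl0.le (mul_nonneg hβpos.le h4'), mul_nonneg hb.le h4']
      have hWfin : ∀ (μ : Measure E), IsProbabilityMeasure μ →
          (∫⁻ x, ENNReal.ofReal (V x) ∂μ ≤ ENNReal.ofReal c3) →
          ∫⁻ y, ENNReal.ofReal (h y) ∂(μ.bind P) ≠ ⊤ := by
        intro μ hpμ hμ
        haveI := hpμ
        have hle : ∫⁻ y, ENNReal.ofReal (h y) ∂(μ.bind P)
            ≤ ENNReal.ofReal (1+β) * ∫⁻ y, ENNReal.ofReal (V y) ∂(μ.bind P) := by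
          rw [← lintegral_const_mul _ hVmeas.ennreal_ofReal]
          refine lintegral_mono fun y => ?_
          rw [← ENNReal.ofReal_mul (by linarith)]
          exact ENNReal.ofReal_le_ofReal (hhV y)
        have hfin2 : ∫⁻ y, ENNReal.ofReal (V y) ∂(μ.bind P) ≤ ENNReal.ofReal c3 :=
          hdriftmeas μ hμ
        exact ne_top_of_le_ne_top
          (ENNReal.mul_ne_top ENNReal.ofReal_ne_top ENNReal.ofReal_ne_top)
          (hle.trans (mul_le_mul_right hfin2 _))
      have hrw1 : ∫ x, f' x ∂(μ1.bind P) = ∫ x, g x ∂μ1 :=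
        integral_bind_of hPmeas hf' hhmeas hf'h (hWfin μ1 hp1 hm1)
      have hrw2 : ∫ x, f' x ∂(μ2.bind P) = ∫ x, g x ∂μ2 :=
        integral_bind_of hPmeas hf' hhmeas hf'h (hWfin μ2 hp2 hm2)
      rw [hrw1, hrw2]
      exact pair_bound hhmeas hh0 (hinth μ1 (hfinV _ hm1)) (hinth μ2 (hfinV _ hm2)) hal0
        hgmeas hgb (htwo f' hf' hf'h)
    have hcontr : ∀ (μ1 μ2 : Measure E), IsProbabilityMeasure μ1 → IsProbabilityMeasure μ2 →
        (∫⁻ x, ENNReal.ofReal (V x) ∂μ1 ≤ ENNReal.ofReal c3) →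
        (∫⁻ x, ENNReal.ofReal (V x) ∂μ2 ≤ ENNReal.ofReal c3) →
        DOf h (μ1.bind P) (μ2.bind P) ≤ al * DOf h μ1 μ2 := by
      intro μ1 μ2 hp1 hp2 hm1 hm2
      haveI := hp1; haveI := hp2
      refine DOf_le (mul_nonneg hal0 (DOf_nonneg hh0 (hinth μ1 (hfinV _ hm1))
        (hinth μ2 (hfinV _ hm2)))) ?_
      intro f' hf' hf'h
      exact hstep μ1 μ2 hp1 hp2 hm1 hm2 f' hf' hf'h
    have hDn : ∀ k : ℕ, DOf h (μseq k) (π v) ≤ al^k * DOf h (π u) (π v) := by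
      intro k
      induction k with
      | zero => rw [hμ0, pow_zero, one_mul]
      | succ k ih =>
          have hstep' : DOf h (μseq (k+1)) (π v) ≤ al * DOf h (μseq k) (π v) := by
            have hc := hcontr (μseq k) (π v) (hμfact k).1 hπvP (hμfact k).2 (hVmom v hv)
            rw [hinvv, ← hμs k] at hc
            exact hc
          calc DOf h (μseq (k+1)) (π v) ≤ al * DOf h (μseq k) (π v) := hstep'
            _ ≤ al * (al^k * DOf h (π u) (π v)) := mul_le_mul_of_nonneg_left ih hal0
            _ = al^(k+1) * DOf h (π u) (π v) := by ring
    have hEn : ∀ k : ℕ, DOf h (μseq k) (μseq (k+1)) ≤ al^k * DOf h (π u) ((π u).bind P) := by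
      intro k
      induction k with
      | zero => rw [hμ0, hμs 0, hμ0, pow_zero, one_mul]
      | succ k ih =>
          have hstep' : DOf h (μseq (k+1)) (μseq (k+2)) ≤ al * DOf h (μseq k) (μseq (k+1)) := by
            have hc := hcontr (μseq k) (μseq (k+1)) (hμfact k).1 (hμfact (k+1)).1
              (hμfact k).2 (hμfact (k+1)).2
            rw [← hμs k, ← hμs (k+1)] at hc
            exact hc
          calc DOf h (μseq (k+1)) (μseq (k+2)) ≤ al * DOf h (μseq k) (μseq (k+1)) := hstep'
            _ ≤ al * (al^k * DOf h (π u) ((π u).bind P)) := mul_le_mul_of_nonneg_left ih hal0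
            _ = al^(k+1) * DOf h (π u) ((π u).bind P) := by ring
    -- telescope bound on the base difference
    have hE0' : DOf h (π u) ((π u).bind P) ≤ (m:ℝ) * (K^m * (1+β) * M * r) := by
      have hπufin : ∫⁻ z, ENNReal.ofReal (V z) ∂(π u) ≠ ⊤ := hfinV _ (hVmom u hu)
      have hintu' : Integrable h (π u) := hinth (π u) hπufin
      have hKm1 : (1:ℝ) ≤ K^m := by
        calc (1:ℝ) = 1^m := (one_pow m).symm
          _ ≤ K^m := pow_le_pow_left₀ (by norm_num) hK m
      have hKm0 : (0:ℝ) < K^m := by linarith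
      set cG := K^m * (1+β) with hcGdef
      have hcGpos : (0:ℝ) < cG := mul_pos hKm0 (by linarith)
      have hQinfo : ∀ w, w ∈ Icc (0:ℝ) 1 → ∀ x : E,
          Integrable V (Q w x) ∧ ∫ z, V z ∂(Q w x) ≤ K * V x := by
        intro w hw x
        have hfin := ne_top_of_le_ne_top ENNReal.ofReal_ne_top (hdrift1 w hw x)
        refine ⟨hintV _ hfin, ?_⟩
        rw [int_nonneg_eq_toReal hVmeas hV0]
        exact ENNReal.toReal_le_of_le_ofReal (mul_nonneg (by linarith) (hV0 x)) (hdrift1 w hw x)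
      have hQbound : ∀ (c' : ℝ), 0 ≤ c' → ∀ (g : E → ℝ), Measurable g →
          (∀ z, |g z| ≤ c' * h z) → ∀ w, w ∈ Icc (0:ℝ) 1 → ∀ x,
          |∫ z, g z ∂(Q w x)| ≤ c' * K * h x := by
        intro c' hc' g hg hgb w hw x
        haveI := hQprob w x
        have hQV := hQinfo w hw x
        have hinthQ : Integrable h (Q w x) :=
          hinth _ (ne_top_of_le_ne_top ENNReal.ofReal_ne_top (hdrift1 w hw x))
        have h1' : |∫ z, g z ∂(Q w x)| ≤ ∫ z, c' * h z ∂(Q w x) :=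
          abs_int_le hgb (hinthQ.const_mul c') (fun z => mul_nonneg hc' (hh0 z))
        have h2' : ∫ z, c' * h z ∂(Q w x) = c' * (1 + β * ∫ z, V z ∂(Q w x)) := by
          rw [integral_const_mul]
          congr 1
          simp only [hhdef]
          rw [integral_add (integrable_const 1) ((hQV.1).const_mul β), integral_const,
            probReal_univ, one_smul, integral_const_mul]
        have h3' : 1 + β * ∫ z, V z ∂(Q w x) ≤ K * h x := by
          have hβV := mul_le_mul_of_nonneg_left hQV.2 hβpos.le
          have hKV : β * (K * V x) = K * (β * V x) := by ring
          simp only [hhdef]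
          nlinarith [hV0 x, hβpos.le]
        calc |∫ z, g z ∂(Q w x)| ≤ c' * (1 + β * ∫ z, V z ∂(Q w x)) := by rw [← h2']; exact h1'
          _ ≤ c' * (K * h x) := mul_le_mul_of_nonneg_left h3' hc'
          _ = c' * K * h x := by ring
      have hWfin2 : ∀ (μ : Measure E), (∫⁻ z, ENNReal.ofReal (V z) ∂μ ≠ ⊤) →
          ∀ c' : ℝ, 0 ≤ c' → ∫⁻ z, ENNReal.ofReal (c' * h z) ∂μ ≠ ⊤ := by
        intro μ hμ c' hc'
        have hle : ∫⁻ z, ENNReal.ofReal (c' * h z) ∂μ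
            ≤ ENNReal.ofReal (c' * (1+β)) * ∫⁻ z, ENNReal.ofReal (V z) ∂μ := by
          rw [← lintegral_const_mul _ hVmeas.ennreal_ofReal]
          refine lintegral_mono fun z => ?_
          rw [← ENNReal.ofReal_mul (mul_nonneg hc' (by linarith))]
          refine ENNReal.ofReal_le_ofReal ?_
          have := mul_le_mul_of_nonneg_left (hhV z) hc'
          linarith
        exact ne_top_of_le_ne_top (ENNReal.mul_ne_top ENNReal.ofReal_ne_top hμ) hle
      refine DOf_le (mul_nonneg (Nat.cast_nonneg m)
        (mul_nonneg (mul_nonneg hcGpos.le (by linarith)) hr0)) ?_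
      intro f' hf' hf'h
      -- iterated kernel averages of f'
      set G : ℕ → E → ℝ := fun i => Nat.rec f' (fun _ g => fun x => ∫ z, g z ∂(Q v x)) i
        with hGdef
      have hGs : ∀ i, G (i+1) = fun x => ∫ z, G i z ∂(Q v x) := fun i => rfl
      have hGfact : ∀ i, Measurable (G i) ∧ ∀ x, |G i x| ≤ K^i * h x := by
        intro i
        induction i with
        | zero => exact ⟨hf', fun x => by rw [pow_zero, one_mul]; exact hf'h x⟩
        | succ i ih =>
            refine ⟨kernel_int_meas (hQmeas v) (fun x => hQprob v x) ih.1, ?_⟩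
            intro x
            have := hQbound (K^i) (pow_nonneg (by linarith) i) (G i) ih.1 ih.2 v hv x
            calc |G (i+1) x| = |∫ z, G i z ∂(Q v x)| := by rw [hGs i]
              _ ≤ K^i * K * h x := this
              _ = K^(i+1) * h x := by ring
      have hJ : ∀ i : ℕ, ∀ (μ : Measure E), IsProbabilityMeasure μ →
          (∫⁻ z, ENNReal.ofReal (V z) ∂μ ≠ ⊤) →
          ∫ z, f' z ∂(μ.bind (pit (Q v) i)) = ∫ z, G i z ∂μ := by
        intro i
        induction i with
        | zero =>
            intro μ hμ _
            have hb0 : μ.bind (pit (Q v) 0) = μ := by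
              simp only [pit]
              exact Measure.bind_dirac
            rw [hb0]
            rfl
        | succ i ih =>
            intro μ hμ hfin
            haveI := hμ
            have hbb : μ.bind (pit (Q v) (i+1)) = (μ.bind (Q v)).bind (pit (Q v) i) := by
              simp only [pit]
              rw [Measure.bind_bind (hQmeas v).aemeasurable (pit_meas (hQmeas v) i).aemeasurable]
            have hμQV : ∫⁻ z, ENNReal.ofReal (V z) ∂(μ.bind (Q v)) ≠ ⊤ := by
              rw [Measure.lintegral_bind (hQmeas v).aemeasurable hVmeas.ennreal_ofReal.aemeasurable]
              have hle : ∫⁻ x, ∫⁻ z, ENNReal.ofReal (V z) ∂(Q v x) ∂μ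
                  ≤ ENNReal.ofReal K * ∫⁻ x, ENNReal.ofReal (V x) ∂μ := by
                rw [← lintegral_const_mul _ hVmeas.ennreal_ofReal]
                refine lintegral_mono fun x => (hdrift1 v hv x).trans (le_of_eq ?_)
                rw [ENNReal.ofReal_mul (by linarith)]
              exact ne_top_of_le_ne_top (ENNReal.mul_ne_top ENNReal.ofReal_ne_top hfin) hle
            haveI hbp : IsProbabilityMeasure (μ.bind (Q v)) :=
              bind_prob (hQmeas v) (fun x => hQprob v x) μ
            rw [hbb, ih (μ.bind (Q v)) hbp hμQV]
            exact integral_bind_of (hQmeas v) (hGfact i).1 (hhmeas.const_mul (K^i))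
              (hGfact i).2 (hWfin2 _ hμQV (K^i) (pow_nonneg (by linarith) i))
      set J : ℕ → ℝ := fun i => ∫ z, G i z ∂(π u) with hJdef
      have hJm : ∫ z, f' z ∂((π u).bind P) = J m := by
        rw [hPeq]
        exact hJ m (π u) hπuP hπufin
      have htelesc : (∫ z, f' z ∂(π u)) - ∫ z, f' z ∂((π u).bind P)
          = ∑ i ∈ Finset.range m, (J i - J (i+1)) := by
        rw [Finset.sum_range_sub' J m, hJm]
        rfl
      have hterm : ∀ i, i < m → J i - J (i+1) ≤ cG * M * r := by
        intro i him
        have hKi0 : (0:ℝ) ≤ K^i := pow_nonneg (by linarith) i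
        have hKi10 : (0:ℝ) ≤ K^i * K := mul_nonneg hKi0 (by linarith)
        -- the two kernel-average functions
        set g1 := fun x => ∫ z, G i z ∂(Q u x) with hg1def
        set g2 := fun x => ∫ z, G i z ∂(Q v x) with hg2def
        have hg1m : Measurable g1 := kernel_int_meas (hQmeas u) (fun x => hQprob u x) (hGfact i).1
        have hg2m : Measurable g2 := kernel_int_meas (hQmeas v) (fun x => hQprob v x) (hGfact i).1
        have hg1b : ∀ x, |g1 x| ≤ K^i * K * h x :=
          fun x => hQbound (K^i) hKi0 (G i) (hGfact i).1 (hGfact i).2 u hu x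
        have hg2b : ∀ x, |g2 x| ≤ K^i * K * h x :=
          fun x => hQbound (K^i) hKi0 (G i) (hGfact i).1 (hGfact i).2 v hv x
        have hint1 : Integrable g1 (π u) := (hintu'.const_mul (K^i * K)).mono'
          hg1m.aestronglyMeasurable (Eventually.of_forall fun x => by simpa using hg1b x)
        have hint2 : Integrable g2 (π u) := (hintu'.const_mul (K^i * K)).mono'
          hg2m.aestronglyMeasurable (Eventually.of_forall fun x => by simpa using hg2b x)
        -- J i via invariance under Q u
        have hJi : J i = ∫ x, g1 x ∂(π u) := by
          have hWfin' : ∫⁻ z, ENNReal.ofReal (K^i * h z) ∂((π u).bind (Q u)) ≠ ⊤ := by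
            rw [(hπ u hu).2]
            exact hWfin2 _ hπufin (K^i) hKi0
          have hrw := integral_bind_of (hQmeas u) (hGfact i).1 (hhmeas.const_mul (K^i))
            (hGfact i).2 hWfin'
          rw [(hπ u hu).2] at hrw
          exact hrw
        have hJi1 : J (i+1) = ∫ x, g2 x ∂(π u) := rfl
        have hsub : J i - J (i+1) = ∫ x, (g1 x - g2 x) ∂(π u) := by
          rw [hJi, hJi1, integral_sub hint1 hint2]
        -- pointwise bound via hF2
        have hGV : ∀ z, |G i z| ≤ cG * V z := by
          intro z
          have h1' := (hGfact i).2 z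
          have hmono : K^i ≤ K^m := pow_le_pow_right₀ (by linarith) him.le
          have h2' : K^i * h z ≤ K^m * ((1+β) * V z) := by
            have h3' := hhV z
            have h4' : K^i * h z ≤ K^m * h z := mul_le_mul_of_nonneg_right hmono (hh0 z)
            have h5' : K^m * h z ≤ K^m * ((1+β) * V z) := mul_le_mul_of_nonneg_left h3' hKm0.le
            linarith
          calc |G i z| ≤ K^i * h z := h1'
            _ ≤ K^m * ((1+β) * V z) := h2'
            _ = cG * V z := by rw [hcGdef]; ring
        have hptw : ∀ x, |g1 x - g2 x| ≤ cG * (Vt x * r) := by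
          intro x
          set f2 := fun z => G i z / cG with hf2def
          have hf2m : Measurable f2 := (hGfact i).1.div_const cG
          have hf2b : ∀ z, |f2 z| ≤ V z := by
            intro z
            rw [hf2def]
            simp only
            rw [abs_div, abs_of_pos hcGpos, div_le_iff₀ hcGpos]
            calc |G i z| ≤ cG * V z := hGV z
              _ = V z * cG := mul_comm _ _
          have hsc : ∀ (μ : Measure E), ∫ z, G i z ∂μ = cG * ∫ z, f2 z ∂μ := by
            intro μ
            rw [hf2def, ← integral_const_mul]
            congr 1
            funext z
            field_simp
          have hbd : BddAbove (Set.range fun f0 : {f0 : E → ℝ // Measurable f0 ∧ ∀ z, |f0 z| ≤ V z} =>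
              |(∫ z, f0.1 z ∂(Q u x)) - ∫ z, f0.1 z ∂(Q v x)|) := by
            refine ⟨K * V x + K * V x, ?_⟩
            rintro t ⟨f0, rfl⟩
            have hg1' : |∫ z, f0.1 z ∂(Q u x)| ≤ K * V x :=
              (abs_int_le f0.2.2 (hQinfo u hu x).1 hV0).trans (hQinfo u hu x).2
            have hg2' : |∫ z, f0.1 z ∂(Q v x)| ≤ K * V x :=
              (abs_int_le f0.2.2 (hQinfo v hv x).1 hV0).trans (hQinfo v hv x).2
            have htri' := abs_sub_le (∫ z, f0.1 z ∂(Q u x)) 0 (∫ z, f0.1 z ∂(Q v x))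
            simp only [sub_zero, zero_sub, abs_neg] at htri'
            simp only
            linarith
          have h2v := hF2 u hu v hv x
          have hle2 : |(∫ z, f2 z ∂(Q u x)) - ∫ z, f2 z ∂(Q v x)| ≤ Vt x * r := by
            have hle1 : |(∫ z, f2 z ∂(Q u x)) - ∫ z, f2 z ∂(Q v x)|
                ≤ vDist V (Q u x) (Q v x) := le_ciSup hbd ⟨f2, hf2m, hf2b⟩
            rw [hrdef]
            exact hle1.trans h2v
          rw [hg1def, hg2def]
          simp only
          rw [hsc (Q u x), hsc (Q v x), ← mul_sub, abs_mul, abs_of_pos hcGpos]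
          exact mul_le_mul_of_nonneg_left hle2 hcGpos.le
        -- integrate the pointwise bound
        have hΦm : Measurable fun x => g1 x - g2 x := hg1m.sub hg2m
        have habsΦ : ∫ x, |g1 x - g2 x| ∂(π u) ≤ cG * M * r := by
          rw [int_nonneg_eq_toReal hΦm.abs (fun x => abs_nonneg _)]
          have hlin : ∫⁻ x, ENNReal.ofReal |g1 x - g2 x| ∂(π u)
              ≤ ENNReal.ofReal (cG * r) * ENNReal.ofReal M := by
            calc ∫⁻ x, ENNReal.ofReal |g1 x - g2 x| ∂(π u)
                ≤ ∫⁻ x, ENNReal.ofReal (cG * r) * ENNReal.ofReal (Vt x) ∂(π u) := by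
                  refine lintegral_mono fun x => ?_
                  rw [← ENNReal.ofReal_mul (mul_nonneg hcGpos.le hr0)]
                  refine ENNReal.ofReal_le_ofReal ?_
                  calc |g1 x - g2 x| ≤ cG * (Vt x * r) := hptw x
                    _ = cG * r * Vt x := by ring
              _ = ENNReal.ofReal (cG * r) * ∫⁻ x, ENNReal.ofReal (Vt x) ∂(π u) :=
                  lintegral_const_mul' _ _ ENNReal.ofReal_ne_top
              _ ≤ ENNReal.ofReal (cG * r) * ENNReal.ofReal M := mul_le_mul_right (hMb u hu) _
          have heq : ENNReal.ofReal (cG * r) * ENNReal.ofReal M = ENNReal.ofReal (cG * r * M) :=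
            (ENNReal.ofReal_mul (mul_nonneg hcGpos.le hr0)).symm
          have := ENNReal.toReal_le_of_le_ofReal
            (mul_nonneg (mul_nonneg hcGpos.le hr0) (by linarith)) (hlin.trans_eq heq)
          calc (∫⁻ x, ENNReal.ofReal |g1 x - g2 x| ∂(π u)).toReal ≤ cG * r * M := this
            _ = cG * M * r := by ring
        have hΦint : |∫ x, (g1 x - g2 x) ∂(π u)| ≤ ∫ x, |g1 x - g2 x| ∂(π u) := by
          have h0 := norm_integral_le_integral_norm (f := fun x => g1 x - g2 x) (μ := π u)
          simpa [Real.norm_eq_abs] using h0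
        rw [hsub]
        calc ∫ x, (g1 x - g2 x) ∂(π u) ≤ |∫ x, (g1 x - g2 x) ∂(π u)| := le_abs_self _
          _ ≤ ∫ x, |g1 x - g2 x| ∂(π u) := hΦint
          _ ≤ cG * M * r := habsΦ
      calc (∫ z, f' z ∂(π u)) - ∫ z, f' z ∂((π u).bind P)
          = ∑ i ∈ Finset.range m, (J i - J (i+1)) := htelesc
        _ ≤ ∑ _i ∈ Finset.range m, cG * M * r :=
            Finset.sum_le_sum (fun i hi => hterm i (Finset.mem_range.1 hi))
        _ = (m:ℝ) * (cG * M * r) := by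
            rw [Finset.sum_const, Finset.card_range, nsmul_eq_mul]
        _ = (m:ℝ) * (K^m * (1+β) * M * r) := by rw [hcGdef]
    -- assemble
    haveI hbindprob : IsProbabilityMeasure ((π u).bind P) := bind_prob hPmeas hPprob _
    have hintu : Integrable h (π u) := hinth (π u) (hfinV _ (hVmom u hu))
    have hintv : Integrable h (π v) := hinth (π v) (hfinV _ (hVmom v hv))
    have hintb : Integrable h ((π u).bind P) :=
      hinth _ (hfinV _ (hdriftmeas _ (hVmom u hu)))
    have hintk : ∀ k, Integrable h (μseq k) := fun k => by
      haveI := (hμfact k).1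
      exact hinth _ (hfinV _ (hμfact k).2)
    set Dmax := (∫ x, h x ∂(π u)) + ∫ x, h x ∂(π v) with hDmaxdef
    have hD0 : DOf h (π u) (π v) ≤ Dmax := DOf_le_sum hh0 hintu hintv
    have hE0nonneg : 0 ≤ DOf h (π u) ((π u).bind P) := DOf_nonneg hh0 hintu hintb
    set f3 := fun x => β * f x with hf3def
    have hf3m : Measurable f3 := hf.const_mul β
    have hf3h : ∀ x, |f3 x| ≤ h x := fun x => by
      rw [hf3def, abs_mul, abs_of_nonneg hβpos.le]
      have h1' := hfV x
      have h2' := hV0 x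
      have h3' : β * |f x| ≤ β * V x := mul_le_mul_of_nonneg_left h1' hβpos.le
      simp only [hhdef]
      linarith
    have hsum : ∀ n : ℕ, (∑ k ∈ Finset.range n, al^k) ≤ 1/(1-al) := by
      intro n
      have hgs : (∑ k ∈ Finset.range n, al ^ k) * (al - 1) = al ^ n - 1 := geom_sum_mul _ _
      have hpk : 0 ≤ al ^ n := pow_nonneg hal0 n
      have h1al' : (0:ℝ) < 1 - al := by linarith
      rw [le_div_iff₀ h1al']
      have h2 : (∑ k ∈ Finset.range n, al^k) * (1 - al) = 1 - al ^ n := by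
        linear_combination (-1 : ℝ) * hgs
      rw [h2]
      linarith
    have htri : ∀ n : ℕ, |(∫ x, f3 x ∂(π u)) - ∫ x, f3 x ∂(μseq n)|
        ≤ (∑ k ∈ Finset.range n, al^k) * DOf h (π u) ((π u).bind P) := by
      intro n
      induction n with
      | zero => simp [hμ0]
      | succ n ih =>
          have hb1 : |(∫ x, f3 x ∂(μseq n)) - ∫ x, f3 x ∂(μseq (n+1))|
              ≤ DOf h (μseq n) (μseq (n+1)) :=
            abs_le_DOf hh0 (hintk n) (hintk (n+1)) hf3m hf3h
          have hb2 := hb1.trans (hEn n)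
          calc |(∫ x, f3 x ∂(π u)) - ∫ x, f3 x ∂(μseq (n+1))|
              ≤ |(∫ x, f3 x ∂(π u)) - ∫ x, f3 x ∂(μseq n)|
                + |(∫ x, f3 x ∂(μseq n)) - ∫ x, f3 x ∂(μseq (n+1))| := abs_sub_le _ _ _
            _ ≤ (∑ k ∈ Finset.range n, al^k) * DOf h (π u) ((π u).bind P)
                + al^n * DOf h (π u) ((π u).bind P) := add_le_add ih hb2
            _ = (∑ k ∈ Finset.range (n+1), al^k) * DOf h (π u) ((π u).bind P) := by
                rw [Finset.sum_range_succ]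
                ring
    have hdiff : ∀ n : ℕ, |(∫ x, f3 x ∂(π u)) - ∫ x, f3 x ∂(π v)|
        ≤ 1/(1-al) * DOf h (π u) ((π u).bind P) + al^n * Dmax := by
      intro n
      have t1 := htri n
      have t2 : |(∫ x, f3 x ∂(μseq n)) - ∫ x, f3 x ∂(π v)| ≤ al^n * Dmax := by
        refine (abs_le_DOf hh0 (hintk n) hintv hf3m hf3h).trans ((hDn n).trans ?_)
        exact mul_le_mul_of_nonneg_left hD0 (pow_nonneg hal0 n)
      have s1 : (∑ k ∈ Finset.range n, al^k) * DOf h (π u) ((π u).bind P)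
          ≤ 1/(1-al) * DOf h (π u) ((π u).bind P) :=
        mul_le_mul_of_nonneg_right (hsum n) hE0nonneg
      have tr := abs_sub_le (∫ x, f3 x ∂(π u)) (∫ x, f3 x ∂(μseq n)) (∫ x, f3 x ∂(π v))
      calc |(∫ x, f3 x ∂(π u)) - ∫ x, f3 x ∂(π v)|
          ≤ |(∫ x, f3 x ∂(π u)) - ∫ x, f3 x ∂(μseq n)|
            + |(∫ x, f3 x ∂(μseq n)) - ∫ x, f3 x ∂(π v)| := tr
        _ ≤ (∑ k ∈ Finset.range n, al^k) * DOf h (π u) ((π u).bind P) + al^n * Dmax :=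
            add_le_add t1 t2
        _ ≤ 1/(1-al) * DOf h (π u) ((π u).bind P) + al^n * Dmax := by linarith
    have h1al : (0:ℝ) < 1 - al := by linarith
    have hten0 : Tendsto (fun n : ℕ => al^n * Dmax) atTop (nhds 0) := by
      have := (tendsto_pow_atTop_nhds_zero_of_lt_one hal0 hal1).mul_const Dmax
      rwa [zero_mul] at this
    have hten : Tendsto (fun n : ℕ => 1/(1-al) * DOf h (π u) ((π u).bind P) + al^n * Dmax)
        atTop (nhds (1/(1-al) * DOf h (π u) ((π u).bind P) + 0)) :=
      tendsto_const_nhds.add hten0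
    have hfinal3 : |(∫ x, f3 x ∂(π u)) - ∫ x, f3 x ∂(π v)|
        ≤ 1/(1-al) * DOf h (π u) ((π u).bind P) := by
      have := ge_of_tendsto hten (Eventually.of_forall hdiff)
      simpa using this
    have hkey : β * |(∫ x, f x ∂(π u)) - ∫ x, f x ∂(π v)|
        ≤ 1/(1-al) * ((m:ℝ) * (K^m * (1+β) * M * r)) := by
      have he : β * ((∫ x, f x ∂(π u)) - ∫ x, f x ∂(π v))
          = (∫ x, f3 x ∂(π u)) - ∫ x, f3 x ∂(π v) := by
        rw [hf3def, integral_const_mul, integral_const_mul]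
        ring
      calc β * |(∫ x, f x ∂(π u)) - ∫ x, f x ∂(π v)|
          = |(∫ x, f3 x ∂(π u)) - ∫ x, f3 x ∂(π v)| := by
            rw [← he, abs_mul, abs_of_nonneg hβpos.le]
        _ ≤ 1/(1-al) * DOf h (π u) ((π u).bind P) := hfinal3
        _ ≤ 1/(1-al) * ((m:ℝ) * (K^m * (1+β) * M * r)) := by
            exact mul_le_mul_of_nonneg_left hE0' (le_of_lt (one_div_pos.2 h1al))
    have hfin : |(∫ x, f x ∂(π u)) - ∫ x, f x ∂(π v)|
        ≤ (1/(1-al) * ((m:ℝ) * (K^m * (1+β) * M * r))) / β := by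
      rw [le_div_iff₀ hβpos]
      linarith [hkey]
    refine hfin.trans (le_of_eq ?_)
    rw [hrdef]
    field_simp
  have hm0 : (0:ℝ) < m := by exact_mod_cast hm
  have hK0 : (0:ℝ) < K^m := pow_pos (by linarith) m
  have hCpos : (0:ℝ) < ((m : ℝ) * (K^m * (1+β) * M)) / (β * (1 - al)) := by
    apply div_pos
    · exact mul_pos hm0 (mul_pos (mul_pos hK0 (by linarith)) (by linarith))
    · exact mul_pos hβpos (by linarith)
  refine ⟨((m : ℝ) * (K^m * (1+β) * M)) / (β * (1 - al)), hCpos, fun u hu v hv => ?_⟩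
  refine Real.iSup_le (fun f => MAIN u hu v hv f.1 f.2.1 f.2.2) ?_
  exact mul_nonneg hCpos.le (Real.rpow_nonneg (abs_nonneg _) κ)


end
end
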